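/- arXiv:2506.20417 — 4 statements merged into one kernel-verified Lean document; each statement's English description precedes it below -/
import Mathlib

section
/- Bias of the OPFV estimator (Theorem 3.3): Assume Common Support, Common Time Feature Support, and the stationary-context assumption. Then for any target time t' > T, Bias(V̂^{OPFV}_{t'}(π_e;𝒟)) = E_{p(x,t) π_e(a|x,t')}[ (𝕀_φ(t,t')/p(φ(t'))) · ( Δ_q(x,t,t',a) − Δ_{f̂}(x,t,t',a) ) ], where the expectation is over (x,t) ~ p(x,t) and a ~ π_e(·|x,t'). -/
open MeasureTheory

/-- integrable of bounded AESM on finite measure -/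
lemma opfv_integrable_of_bounded {α : Type*} [MeasurableSpace α] {μ : Measure α}
    [IsFiniteMeasure μ] {f : α → ℝ} (hm : AEStronglyMeasurable f μ) (c : ℝ)
    (h : ∀ a, |f a| ≤ c) : Integrable f μ :=
  Integrable.mono' (integrable_const c) hm
    (Filter.Eventually.of_forall fun a => by simpa [Real.norm_eq_abs] using h a)

lemma opfv_pi_map_eval {α : Type*} [MeasurableSpace α] (P : Measure α) [IsProbabilityMeasure P]
    (n : ℕ) (i : Fin n) :
    (Measure.pi fun _ : Fin n => P).map (fun D => D i) = P := by
  ext s hs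
  rw [Measure.map_apply (measurable_pi_apply i) hs]
  have hpre : (fun D : Fin n → α => D i) ⁻¹' s
      = Set.univ.pi (Function.update (fun _ : Fin n => (Set.univ : Set α)) i s) := by
    ext D
    simp only [Set.mem_preimage, Set.mem_univ_pi, Function.update_apply]
    constructor
    · intro h j
      by_cases hj : j = i
      · subst hj; simp [h]
      · simp [hj]
    · intro h
      have := h i
      simpa using this
  rw [hpre, Measure.pi_pi]
  rw [Fintype.prod_eq_single i (fun j hj => by simp [Function.update_apply, hj])]
  simp

lemma opfv_iSup_ofReal_min (x : ℝ) :
    ⨆ N : ℕ, ENNReal.ofReal (min x (N : ℝ)) = ENNReal.ofReal x := by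
  apply le_antisymm
  · exact iSup_le fun N => ENNReal.ofReal_le_ofReal (min_le_left _ _)
  · have h1 : ENNReal.ofReal x = ENNReal.ofReal (min x (⌈x⌉₊ : ℝ)) := by
      rw [min_eq_left (Nat.le_ceil x)]
    rw [h1]
    exact le_iSup (fun N : ℕ => ENNReal.ofReal (min x (N : ℝ))) ⌈x⌉₊

/-- The key unconditional "indicator-like" integral identity: whether or not the set
`{t | p t}` is measurable, the integral of `c * (𝟙/pφ - 1)` vanishes. -/
lemma opfv_indicator_integral {μ : Measure ℝ} [IsProbabilityMeasure μ]
    (p : ℝ → Prop) [DecidablePred p] {K : Set ℝ} (hK : MeasurableSet K) (hKfull : μ K = 1)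
    {pφ : ℝ} (hpφ : pφ = (μ ({t | p t} ∩ K)).toReal) (hpφpos : 0 < pφ) (c : ℝ) :
    ∫ t, c * ((if p t then (1 : ℝ) else 0) / pφ - 1) ∂μ = 0 := by
  by_cases hc : c = 0
  · simp [hc]
  have hKc : μ Kᶜ = 0 := by
    rw [measure_compl hK (measure_ne_top _ _), hKfull, measure_univ, tsub_self]
  by_cases hm : AEStronglyMeasurable (fun t => if p t then (1 : ℝ) else 0) μ
  · have hIbd : ∀ t, |(if p t then (1 : ℝ) else 0)| ≤ 1 := by
      intro t; split <;> norm_num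
    have hIint : Integrable (fun t => if p t then (1 : ℝ) else 0) μ :=
      opfv_integrable_of_bounded hm 1 hIbd
    have hI : ∫ t, (if p t then (1 : ℝ) else 0) ∂μ = pφ := by
      obtain ⟨g, hg, hge⟩ := hm
      set E : Set ℝ := {t | g t = 1} with hE
      have hEm : MeasurableSet E := hg.measurable (measurableSet_singleton 1)
      have hae : (fun t => if p t then (1 : ℝ) else 0) =ᵐ[μ] E.indicator 1 := by
        filter_upwards [hge] with t ht
        by_cases hpt : p t
        · have : g t = 1 := by rw [← ht]; simp [hpt]
          simp [Set.indicator, hE, this, hpt]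
        · have : g t ≠ 1 := by rw [← ht]; simp [hpt]
          simp [Set.indicator, hE, this, hpt]
      have hdiff : μ {t | ¬ ((if p t then (1:ℝ) else 0) = E.indicator 1 t)} = 0 := by
        have h' := hae
        rwa [Filter.EventuallyEq, MeasureTheory.ae_iff] at h'
      have hmeq : μ E = μ ({t | p t} ∩ K) := by
        have h1 : μ ({t | p t} ∩ K) = μ {t | p t} := by
          apply le_antisymm (measure_mono Set.inter_subset_left)
          have hsub : {t | p t} ⊆ ({t | p t} ∩ K) ∪ Kᶜ := by
            intro t ht
            by_cases htK : t ∈ K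
            · exact Or.inl ⟨ht, htK⟩
            · exact Or.inr htK
          have h2 := (measure_mono hsub).trans (measure_union_le (μ := μ) _ _)
          rwa [hKc, add_zero] at h2
        rw [h1]
        apply le_antisymm
        · have hsub : E ⊆ {t | p t} ∪ {t | ¬ ((if p t then (1:ℝ) else 0) = E.indicator 1 t)} := by
            intro t htE
            by_cases hpt : p t
            · exact Or.inl hpt
            · refine Or.inr ?_
              simp only [Set.mem_setOf_eq]
              intro h0
              rw [if_neg hpt] at h0
              have : E.indicator (1 : ℝ → ℝ) t = 1 := by simp [Set.indicator, htE]
              rw [this] at h0; norm_num at h0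
          have h2 := (measure_mono hsub).trans (measure_union_le (μ := μ) _ _)
          rwa [hdiff, add_zero] at h2
        · have hsub : {t | p t} ⊆ E ∪ {t | ¬ ((if p t then (1:ℝ) else 0) = E.indicator 1 t)} := by
            intro t hpt
            have hpt' : p t := hpt
            by_cases htE : t ∈ E
            · exact Or.inl htE
            · refine Or.inr ?_
              simp only [Set.mem_setOf_eq]
              intro h0
              rw [if_pos hpt'] at h0
              have : E.indicator (1 : ℝ → ℝ) t = 0 := by simp [Set.indicator, htE]
              rw [this] at h0; norm_num at h0
          have h2 := (measure_mono hsub).trans (measure_union_le (μ := μ) _ _)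
          rwa [hdiff, add_zero] at h2
      rw [integral_congr_ae hae, integral_indicator_one hEm, measureReal_def, hmeq, hpφ]
    rw [integral_const_mul]
    rw [integral_sub (hIint.div_const pφ) (integrable_const 1)]
    rw [integral_div, hI, integral_const]
    simp [div_self (ne_of_gt hpφpos)]
  · have hni : ¬ Integrable (fun t => c * ((if p t then (1 : ℝ) else 0) / pφ - 1)) μ := by
      intro h
      apply hm
      have h1 := h.aestronglyMeasurable
      have h2 := ((h1.mul_const c⁻¹).add_const 1).mul_const pφ
      apply h2.congr
      apply Filter.Eventually.of_forall
      intro t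
      by_cases hpt : p t
      · simp only [hpt, if_true]
        field_simp
        ring
      · simp only [hpt, if_false]
        field_simp
        ring
    rw [integral_undef hni]

noncomputable def opfvH {𝒳 𝒜 C : Type*} [Fintype 𝒜] [DecidableEq C]
    (πe q fhat : 𝒳 → ℝ → 𝒜 → ℝ) (φ : ℝ → C) (t' : ℝ) (pφ : ℝ) : 𝒳 × ℝ → ℝ :=
  fun p => ∑ a, πe p.1 t' a * ((if φ p.2 = φ t' then (1 : ℝ) else 0) / pφ
      * ((q p.1 p.2 a - q p.1 t' a) - (fhat p.1 p.2 a - fhat p.1 t' a)))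

noncomputable def opfvV {𝒳 𝒜 : Type*} [Fintype 𝒜] (πe q : 𝒳 → ℝ → 𝒜 → ℝ) (t' : ℝ) : 𝒳 → ℝ :=
  fun x => ∑ a, πe x t' a * q x t' a


/-- **Bias of the OPFV estimator (Theorem 3.3).**
Under Common Support, Common Time Feature Support and a stationary context distribution
(modeled as the product `μx.prod μt`), for any target time `t' > T`,
`Bias(V̂^OPFV_{t'}(π_e;𝒟)) = E_{p(x,t) π_e(a|x,t')}[ (𝕀_φ(t,t')/p(φ(t')))
  · (Δ_q(x,t,t',a) − Δ_{f̂}(x,t,t',a)) ]`. -/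
theorem opfv_bias
    {𝒳 : Type*} [MeasurableSpace 𝒳] {𝒜 : Type*} [Fintype 𝒜] [MeasurableSpace 𝒜]
    {C : Type*} [DecidableEq C]
    -- time horizon of the logged data
    (T : ℝ) (hT : 0 < T)
    -- stationary context distribution p(x) and time distribution p(t), supported on [0,T]
    (μx : Measure 𝒳) [IsProbabilityMeasure μx]
    (μt : Measure ℝ) [IsProbabilityMeasure μt]
    (hμtsupp : μt (Set.Icc 0 T) = 1)
    -- logging policy, evaluation policy, expected reward, regression model
    (π0 πe q fhat : 𝒳 → ℝ → 𝒜 → ℝ)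
    (hπ0nonneg : ∀ x t a, 0 ≤ π0 x t a) (hπ0sum : ∀ x t, ∑ a, π0 x t a = 1)
    (hπenonneg : ∀ x t a, 0 ≤ πe x t a) (hπesum : ∀ x t, ∑ a, πe x t a = 1)
    -- reward distributions with conditional mean q
    (κ : 𝒳 → ℝ → 𝒜 → Measure ℝ) (hκ : ∀ x t a, IsProbabilityMeasure (κ x t a))
    (hq : ∀ x t a, ∫ r, r ∂(κ x t a) = q x t a)
    -- time feature function and target time
    (φ : ℝ → C) (t' : ℝ) (ht' : T < t')
    -- marginal probability of the target time feature, p(φ(t'))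
    (pφ : ℝ) (hpφdef : pφ = (μt ({s | φ s = φ t'} ∩ Set.Icc 0 T)).toReal)
    -- Common Time Feature Support
    (hpφpos : 0 < pφ)
    -- Common Support
    (hcommon : ∀ x a, ∀ t ∈ Set.Icc 0 T, 0 < πe x t' a → 0 < π0 x t a)
    -- logged data: n i.i.d. draws from P, the joint law of (x, t, a, r)
    (n : ℕ) (hn : 0 < n)
    (P : Measure (𝒳 × ℝ × 𝒜 × ℝ)) [IsProbabilityMeasure P]
    (hP : ∀ g : 𝒳 × ℝ × 𝒜 × ℝ → ℝ, Integrable g P →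
      ∫ z, g z ∂P
        = ∫ x, (∫ t, (∑ a, π0 x t a * (∫ r, g (x, t, a, r) ∂(κ x t a))) ∂μt) ∂μx)
    -- per-sample term of the OPFV estimator
    (est : 𝒳 × ℝ × 𝒜 × ℝ → ℝ)
    (hest : ∀ x t a r, est (x, t, a, r) =
      (if φ t = φ t' then (1 : ℝ) else 0) / pφ * (πe x t' a / π0 x t a)
          * (r - fhat x t a)
        + ∑ a', πe x t' a' * fhat x t' a')
    -- integrability (all expectations are assumed well-defined)
    (hInt : Integrable est P)
    (hVInt : Integrable (fun x => ∑ a, πe x t' a * q x t' a) μx)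
    (hBInt : Integrable (fun p : 𝒳 × ℝ =>
      ∑ a, πe p.1 t' a * ((if φ p.2 = φ t' then (1 : ℝ) else 0) / pφ
        * ((q p.1 p.2 a - q p.1 t' a) - (fhat p.1 p.2 a - fhat p.1 t' a))))
      (μx.prod μt)) :
    -- Bias(V̂^OPFV) = E_{p(x,t) π_e(a|x,t')}[(𝕀_φ(t,t')/p(φ(t'))) (Δ_q − Δ_{f̂})]
    (∫ D : Fin n → 𝒳 × ℝ × 𝒜 × ℝ, (n : ℝ)⁻¹ * ∑ i, est (D i)
        ∂(Measure.pi fun _ => P))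
      - (∫ x, ∑ a, πe x t' a * q x t' a ∂μx)
      = ∫ x, (∫ t, (∑ a, πe x t' a * ((if φ t = φ t' then (1 : ℝ) else 0) / pφ
          * ((q x t a - q x t' a) - (fhat x t a - fhat x t' a)))) ∂μt) ∂μx := by
  classical
  have hproj : Measurable (fun z : 𝒳 × ℝ × 𝒜 × ℝ => (z.1, z.2.1)) :=
    measurable_fst.prodMk (measurable_fst.comp measurable_snd)
  -- marginal identification : the (x,t)-marginal of P is μx ⊗ μt
  have hmap : P.map (fun z : 𝒳 × ℝ × 𝒜 × ℝ => (z.1, z.2.1)) = μx.prod μt := by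
    haveI : IsProbabilityMeasure (P.map (fun z : 𝒳 × ℝ × 𝒜 × ℝ => (z.1, z.2.1))) :=
      Measure.isProbabilityMeasure_map hproj.aemeasurable
    ext S hS
    have hind : Integrable (fun z : 𝒳 × ℝ × 𝒜 × ℝ =>
        S.indicator (1 : 𝒳 × ℝ → ℝ) (z.1, z.2.1)) P := by
      apply opfv_integrable_of_bounded
        (((measurable_one.indicator hS).comp hproj).aestronglyMeasurable) 1
      intro z
      by_cases h : (z.1, z.2.1) ∈ S <;> simp [Set.indicator, h]
    have h1 := hP _ hind
    have hL := integral_map (μ := P) hproj.aemeasurable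
      (f := S.indicator (1 : 𝒳 × ℝ → ℝ))
      ((measurable_one.indicator hS).aestronglyMeasurable)
    rw [integral_indicator_one hS] at hL
    simp only [] at hL h1
    have hc : ∀ (x : 𝒳) (t : ℝ) (a : 𝒜), (∫ r : ℝ, S.indicator (1 : 𝒳 × ℝ → ℝ) (x, t) ∂(κ x t a))
        = S.indicator (1 : 𝒳 × ℝ → ℝ) (x, t) := by
      intro x t a
      haveI := hκ x t a
      rw [integral_const]
      simp
    simp only [hc, ← Finset.sum_mul, hπ0sum, one_mul] at h1
    have hsec : ∀ x : 𝒳, (∫ t, S.indicator (1 : 𝒳 × ℝ → ℝ) (x, t) ∂μt)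
        = (μt (Prod.mk x ⁻¹' S)).toReal := by
      intro x
      have hfe : (fun t => S.indicator (1 : 𝒳 × ℝ → ℝ) (x, t))
          = (Prod.mk x ⁻¹' S).indicator (1 : ℝ → ℝ) := by
        funext t
        by_cases h : (x, t) ∈ S <;> simp [Set.indicator, h]
      rw [hfe, integral_indicator_one (measurable_prodMk_left hS), measureReal_def]
    have hR : ∫ x, (∫ t, S.indicator (1 : 𝒳 × ℝ → ℝ) (x, t) ∂μt) ∂μx
        = ((μx.prod μt) S).toReal := by
      simp only [hsec]
      rw [Measure.prod_apply hS]
      exact integral_toReal (measurable_measure_prodMk_left hS).aemeasurable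
        (Filter.Eventually.of_forall fun x => measure_lt_top μt _)
    have hfin1 : (P.map (fun z : 𝒳 × ℝ × 𝒜 × ℝ => (z.1, z.2.1))) S ≠ ⊤ := measure_ne_top _ _
    have hfin2 : (μx.prod μt) S ≠ ⊤ := measure_ne_top _ _
    refine (ENNReal.toReal_eq_toReal_iff' hfin1 hfin2).mp ?_
    rw [← measureReal_def, hL, h1, hR]
  have hmapfst : P.map (Prod.fst : 𝒳 × ℝ × 𝒜 × ℝ → 𝒳) = μx := by
    have h1 : (Prod.fst : 𝒳 × ℝ × 𝒜 × ℝ → 𝒳)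
        = (Prod.fst : 𝒳 × ℝ → 𝒳) ∘ (fun z : 𝒳 × ℝ × 𝒜 × ℝ => (z.1, z.2.1)) := rfl
    rw [h1, ← Measure.map_map measurable_fst hproj, hmap, Measure.map_fst_prod]
    simp
  have hBInt' : Integrable (opfvH πe q fhat φ t' pφ) (μx.prod μt) := hBInt
  have hVInt' : Integrable (opfvV πe q t') μx := hVInt
  have hHIntP : Integrable (fun z : 𝒳 × ℝ × 𝒜 × ℝ =>
      opfvH πe q fhat φ t' pφ (z.1, z.2.1)) P := by
    have h1 : Integrable (opfvH πe q fhat φ t' pφ)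
        (P.map (fun z : 𝒳 × ℝ × 𝒜 × ℝ => (z.1, z.2.1))) := by
      rw [hmap]; exact hBInt'
    exact (integrable_map_measure h1.aestronglyMeasurable hproj.aemeasurable).mp h1
  have hVIntP : Integrable (fun z : 𝒳 × ℝ × 𝒜 × ℝ => opfvV πe q t' z.1) P := by
    have h1 : Integrable (opfvV πe q t')
        (P.map (Prod.fst : 𝒳 × ℝ × 𝒜 × ℝ → 𝒳)) := by
      rw [hmapfst]; exact hVInt'
    exact (integrable_map_measure h1.aestronglyMeasurable measurable_fst.aemeasurable).mp h1
  have hψInt : Integrable (fun z : 𝒳 × ℝ × 𝒜 × ℝ =>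
      est z - opfvH πe q fhat φ t' pφ (z.1, z.2.1) - opfvV πe q t' z.1) P :=
    (hInt.sub hHIntP).sub hVIntP
  -- the key cancellation
  have hkey : ∫ z, (est z - opfvH πe q fhat φ t' pφ (z.1, z.2.1) - opfvV πe q t' z.1) ∂P = 0 := by
    set ψ : 𝒳 × ℝ × 𝒜 × ℝ → ℝ :=
      fun z => est z - opfvH πe q fhat φ t' pφ (z.1, z.2.1) - opfvV πe q t' z.1 with hψdef
    -- measurability of sections of ψ
    have hψm : ∀ x t a, Measurable (fun r : ℝ => ψ (x, t, a, r)) := by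
      intro x t a
      have hform : (fun r : ℝ => ψ (x, t, a, r))
          = fun r : ℝ => ((if φ t = φ t' then (1:ℝ) else 0) / pφ * (πe x t' a / π0 x t a))
                * (r - fhat x t a)
              + ((∑ a', πe x t' a' * fhat x t' a')
                  - opfvH πe q fhat φ t' pφ (x, t) - opfvV πe q t' x) := by
        funext r
        rw [hψdef]
        simp only []
        rw [hest x t a r]
        ring
      rw [hform]
      exact ((measurable_id.sub_const _).const_mul _).add_const _
    have hGm : ∀ (N : ℕ) x t a, Measurable (fun r : ℝ => min |ψ (x, t, a, r)| (N:ℝ)) :=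
      fun N x t a => ((hψm x t a).abs.min measurable_const)
    have hGsecInt : ∀ (N : ℕ) x t a,
        Integrable (fun r : ℝ => min |ψ (x, t, a, r)| (N:ℝ)) (κ x t a) := by
      intro N x t a
      haveI := hκ x t a
      apply opfv_integrable_of_bounded (hGm N x t a).aestronglyMeasurable (N:ℝ)
      intro r
      rw [abs_of_nonneg (le_min (abs_nonneg _) (Nat.cast_nonneg N))]
      exact min_le_right _ _
    have hGsecNonneg : ∀ (N : ℕ) x t a, 0 ≤ ∫ r, min |ψ (x, t, a, r)| (N:ℝ) ∂(κ x t a) :=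
      fun N x t a => integral_nonneg fun r => le_min (abs_nonneg _) (Nat.cast_nonneg N)
    have hGsecLe : ∀ (N : ℕ) x t a, (∫ r, min |ψ (x, t, a, r)| (N:ℝ) ∂(κ x t a)) ≤ (N:ℝ) := by
      intro N x t a
      haveI := hκ x t a
      have h1 : (∫ r, min |ψ (x, t, a, r)| (N:ℝ) ∂(κ x t a)) ≤ ∫ _r, (N:ℝ) ∂(κ x t a) :=
        integral_mono (hGsecInt N x t a) (integrable_const _) (fun r => min_le_right _ _)
      rw [integral_const] at h1
      simpa using h1
    have hGsecMono : ∀ (N M : ℕ), N ≤ M → ∀ x t a,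
        (∫ r, min |ψ (x, t, a, r)| (N:ℝ) ∂(κ x t a))
          ≤ ∫ r, min |ψ (x, t, a, r)| (M:ℝ) ∂(κ x t a) := by
      intro N M h x t a
      exact integral_mono (hGsecInt N x t a) (hGsecInt M x t a)
        (fun r => min_le_min le_rfl (Nat.cast_le.mpr h))
    set Φ : ℕ → 𝒳 → ℝ → ℝ :=
      fun N x t => ∑ a, π0 x t a * ∫ r, min |ψ (x, t, a, r)| (N:ℝ) ∂(κ x t a) with hΦdef
    have hΦnonneg : ∀ N x t, 0 ≤ Φ N x t := fun N x t =>
      Finset.sum_nonneg fun a _ => mul_nonneg (hπ0nonneg x t a) (hGsecNonneg N x t a)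
    have hΦle : ∀ N x t, Φ N x t ≤ (N:ℝ) := by
      intro N x t
      have h1 : Φ N x t ≤ ∑ a, π0 x t a * (N:ℝ) :=
        Finset.sum_le_sum fun a _ =>
          mul_le_mul_of_nonneg_left (hGsecLe N x t a) (hπ0nonneg x t a)
      rwa [← Finset.sum_mul, hπ0sum, one_mul] at h1
    have hΦmono : ∀ x t {N M : ℕ}, N ≤ M → Φ N x t ≤ Φ M x t := by
      intro x t N M h
      exact Finset.sum_le_sum fun a _ =>
        mul_le_mul_of_nonneg_left (hGsecMono N M h x t a) (hπ0nonneg x t a)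
    have hGInt : ∀ N : ℕ, Integrable (fun z => min |ψ z| (N:ℝ)) P := by
      intro N
      apply Integrable.mono' hψInt.abs
        ((hψInt.abs.aestronglyMeasurable.aemeasurable.min aemeasurable_const).aestronglyMeasurable)
      apply Filter.Eventually.of_forall
      intro z
      rw [Real.norm_eq_abs, abs_of_nonneg (le_min (abs_nonneg _) (Nat.cast_nonneg N))]
      exact min_le_left _ _
    have hPG : ∀ (N : ℕ) (lam : ℝ),
        (∫ z, min |ψ z| (N:ℝ) ∂P) + lam = ∫ x, (∫ t, (Φ N x t + lam) ∂μt) ∂μx := by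
      intro N lam
      have hg : Integrable (fun z => min |ψ z| (N:ℝ) + lam) P :=
        (hGInt N).add (integrable_const lam)
      have h1 := hP _ hg
      rw [integral_add (hGInt N) (integrable_const lam), integral_const] at h1
      simp only [measure_univ, ENNReal.toReal_one, probReal_univ, smul_eq_mul, one_mul] at h1
      rw [h1]
      apply integral_congr_ae
      apply Filter.Eventually.of_forall
      intro x
      apply integral_congr_ae
      apply Filter.Eventually.of_forall
      intro t
      have hsum : ∀ a : 𝒜, (∫ r, (min |ψ (x, t, a, r)| (N:ℝ) + lam) ∂(κ x t a))
          = (∫ r, min |ψ (x, t, a, r)| (N:ℝ) ∂(κ x t a)) + lam := by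
        intro a
        haveI := hκ x t a
        rw [integral_add (hGsecInt N x t a) (integrable_const lam), integral_const]
        simp
      simp only [hsum, mul_add, Finset.sum_add_distrib, ← Finset.sum_mul, hπ0sum, one_mul, hΦdef]
    -- the λ-slack argument at the x-level, for each N
    have hqN : ∀ N : ℕ, (∀ᵐ x ∂μx, AEStronglyMeasurable (fun t => Φ N x t) μt)
        ∧ Integrable (fun x => ∫ t, Φ N x t ∂μt) μx
        ∧ (∫ x, (∫ t, Φ N x t ∂μt) ∂μx) = ∫ z, min |ψ z| (N:ℝ) ∂P := by
      intro N
      have hpt : ∀ (lam : ℝ) (x : 𝒳), (∫ t, (Φ N x t + lam) ∂μt)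
          = (∫ t, Φ N x t ∂μt)
            + lam * (if AEStronglyMeasurable (fun t => Φ N x t) μt then (1:ℝ) else 0) := by
        intro lam x
        by_cases hx : AEStronglyMeasurable (fun t => Φ N x t) μt
        · have hi : Integrable (fun t => Φ N x t) μt :=
            opfv_integrable_of_bounded hx (N:ℝ)
              (fun t => by rw [abs_of_nonneg (hΦnonneg N x t)]; exact hΦle N x t)
          rw [integral_add hi (integrable_const lam), integral_const]
          simp [hx]
        · have h0 : ¬ Integrable (fun t => Φ N x t + lam) μt := by
            intro hco
            exact hx ((hco.aestronglyMeasurable.add_const (-lam)).congr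
              (Filter.Eventually.of_forall fun t => by ring))
          have h0' : ¬ Integrable (fun t => Φ N x t) μt := fun hco => hx hco.aestronglyMeasurable
          rw [integral_undef h0, integral_undef h0']
          simp [hx]
      have hEq : ∀ lam : ℝ,
          (∫ x, ((∫ t, Φ N x t ∂μt)
            + lam * (if AEStronglyMeasurable (fun t => Φ N x t) μt then (1:ℝ) else 0)) ∂μx)
          = (∫ z, min |ψ z| (N:ℝ) ∂P) + lam := by
        intro lam
        have hfe : (fun x => (∫ t, Φ N x t ∂μt)
            + lam * (if AEStronglyMeasurable (fun t => Φ N x t) μt then (1:ℝ) else 0))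
            = fun x => ∫ t, (Φ N x t + lam) ∂μt := funext fun x => (hpt lam x).symm
        rw [hfe]
        exact (hPG N lam).symm
      have hsN0 : 0 ≤ ∫ z, min |ψ z| (N:ℝ) ∂P :=
        integral_nonneg fun z => le_min (abs_nonneg _) (Nat.cast_nonneg N)
      have hI1 : Integrable (fun x => (∫ t, Φ N x t ∂μt)
          + 1 * (if AEStronglyMeasurable (fun t => Φ N x t) μt then (1:ℝ) else 0)) μx := by
        by_contra hni
        have h2 := hEq 1
        rw [integral_undef hni] at h2
        linarith
      have hI2 : Integrable (fun x => (∫ t, Φ N x t ∂μt)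
          + 2 * (if AEStronglyMeasurable (fun t => Φ N x t) μt then (1:ℝ) else 0)) μx := by
        by_contra hni
        have h2 := hEq 2
        rw [integral_undef hni] at h2
        linarith
      have hIg : Integrable (fun x =>
          (if AEStronglyMeasurable (fun t => Φ N x t) μt then (1:ℝ) else 0)) μx := by
        have h2 := hI2.sub hI1
        exact h2.congr (Filter.Eventually.of_forall fun x => by simp only [Pi.sub_apply]; ring)
      have hIv : Integrable (fun x => ∫ t, Φ N x t ∂μt) μx := by
        have h2 := hI1.sub hIg
        exact h2.congr (Filter.Eventually.of_forall fun x => by simp only [Pi.sub_apply]; ring)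
      have hgval : (∫ x, (if AEStronglyMeasurable (fun t => Φ N x t) μt then (1:ℝ) else 0) ∂μx)
          = 1 := by
        have h12 := integral_sub hI2 hI1
        rw [hEq 2, hEq 1] at h12
        have h13 : (∫ x, (((∫ t, Φ N x t ∂μt)
              + 2 * (if AEStronglyMeasurable (fun t => Φ N x t) μt then (1:ℝ) else 0))
            - ((∫ t, Φ N x t ∂μt)
              + 1 * (if AEStronglyMeasurable (fun t => Φ N x t) μt then (1:ℝ) else 0))) ∂μx)
            = ∫ x, (if AEStronglyMeasurable (fun t => Φ N x t) μt then (1:ℝ) else 0) ∂μx :=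
          integral_congr_ae (Filter.Eventually.of_forall fun x => by ring)
        rw [h13] at h12
        rw [h12]
        ring
      have hvv : (∫ x, (∫ t, Φ N x t ∂μt) ∂μx) = ∫ z, min |ψ z| (N:ℝ) ∂P := by
        have e1 := hEq 1
        rw [integral_add hIv (hIg.const_mul 1)] at e1
        rw [integral_const_mul, hgval] at e1
        linarith
      have hae : ∀ᵐ x ∂μx, AEStronglyMeasurable (fun t => Φ N x t) μt := by
        have hone : Integrable (fun _ : 𝒳 => (1:ℝ)) μx := integrable_const 1
        have hz : ∫ x, ((1:ℝ)
            - (if AEStronglyMeasurable (fun t => Φ N x t) μt then (1:ℝ) else 0)) ∂μx = 0 := by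
          rw [integral_sub hone hIg, hgval]
          simp
        have hnn : 0 ≤ fun x => (1:ℝ)
            - (if AEStronglyMeasurable (fun t => Φ N x t) μt then (1:ℝ) else 0) := by
          intro x
          by_cases hx : AEStronglyMeasurable (fun t => Φ N x t) μt <;> simp [hx]
        have h2 := (integral_eq_zero_iff_of_nonneg hnn (hone.sub hIg)).mp hz
        filter_upwards [h2] with x hx
        by_cases hxx : AEStronglyMeasurable (fun t => Φ N x t) μt
        · exact hxx
        · exfalso
          simp only [Pi.zero_apply, hxx, if_false, sub_zero] at hx
          norm_num at hx
      exact ⟨hae, hIv, hvv⟩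
    -- uniform-in-N bound a.e. x
    have hbdd : ∀ᵐ x ∂μx, (⨆ N : ℕ, ENNReal.ofReal (∫ t, Φ N x t ∂μt)) < ⊤ := by
      have haem : ∀ N : ℕ, AEMeasurable (fun x => ENNReal.ofReal (∫ t, Φ N x t ∂μt)) μx :=
        fun N => ENNReal.measurable_ofReal.comp_aemeasurable ((hqN N).2.1.aemeasurable)
      refine ae_lt_top' (AEMeasurable.iSup haem) ?_
      have hmono : ∀ᵐ x ∂μx, Monotone fun N : ℕ => ENNReal.ofReal (∫ t, Φ N x t ∂μt) := by
        have hall := MeasureTheory.ae_all_iff.mpr fun N : ℕ => (hqN N).1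
        filter_upwards [hall] with x hx
        intro N M hNM
        apply ENNReal.ofReal_le_ofReal
        have hiN : Integrable (fun t => Φ N x t) μt :=
          opfv_integrable_of_bounded (hx N) (N:ℝ)
            (fun t => by rw [abs_of_nonneg (hΦnonneg N x t)]; exact hΦle N x t)
        have hiM : Integrable (fun t => Φ M x t) μt :=
          opfv_integrable_of_bounded (hx M) (M:ℝ)
            (fun t => by rw [abs_of_nonneg (hΦnonneg M x t)]; exact hΦle M x t)
        exact integral_mono hiN hiM (fun t => hΦmono x t hNM)
      rw [lintegral_iSup' haem hmono]
      have hle : ∀ N : ℕ, (∫⁻ x, ENNReal.ofReal (∫ t, Φ N x t ∂μt) ∂μx)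
          ≤ ENNReal.ofReal (∫ z, |ψ z| ∂P) := by
        intro N
        rw [← ofReal_integral_eq_lintegral_ofReal (hqN N).2.1
          (Filter.Eventually.of_forall fun x => integral_nonneg fun t => hΦnonneg N x t)]
        apply ENNReal.ofReal_le_ofReal
        rw [(hqN N).2.2]
        exact integral_mono (hGInt N) hψInt.abs (fun z => min_le_left _ _)
      exact ((iSup_le hle).trans_lt ENNReal.ofReal_lt_top).ne
    have htIcc : ∀ᵐ t ∂μt, t ∈ Set.Icc 0 T := by
      have hco : μt (Set.Icc 0 T)ᶜ = 0 := by
        rw [measure_compl measurableSet_Icc (measure_ne_top _ _), hμtsupp, measure_univ, tsub_self]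
      refine (MeasureTheory.ae_iff).mpr ?_
      have hset : {a : ℝ | ¬ a ∈ Set.Icc 0 T} = (Set.Icc 0 T)ᶜ := rfl
      rw [hset]
      exact hco
    -- the main a.e.-x vanishing
    have hmain : ∀ᵐ x ∂μx,
        (∫ t, (∑ a, π0 x t a * ∫ r, ψ (x, t, a, r) ∂(κ x t a)) ∂μt) = 0 := by
      have hall := MeasureTheory.ae_all_iff.mpr fun N : ℕ => (hqN N).1
      filter_upwards [hall, hbdd] with x hxm hxb
      have haem : ∀ N : ℕ, AEMeasurable (fun t => ENNReal.ofReal (Φ N x t)) μt :=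
        fun N => ENNReal.measurable_ofReal.comp_aemeasurable (hxm N).aemeasurable
      have hiN : ∀ N : ℕ, Integrable (fun t => Φ N x t) μt :=
        fun N => opfv_integrable_of_bounded (hxm N) (N:ℝ)
          (fun t => by rw [abs_of_nonneg (hΦnonneg N x t)]; exact hΦle N x t)
      have htfin : ∀ᵐ t ∂μt, (⨆ N : ℕ, ENNReal.ofReal (Φ N x t)) < ⊤ := by
        refine ae_lt_top' (AEMeasurable.iSup haem) ?_
        rw [lintegral_iSup' haem
          (Filter.Eventually.of_forall fun t N M hNM => ENNReal.ofReal_le_ofReal (hΦmono x t hNM))]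
        have hle2 : ∀ N : ℕ, (∫⁻ t, ENNReal.ofReal (Φ N x t) ∂μt)
            ≤ ⨆ M : ℕ, ENNReal.ofReal (∫ t, Φ M x t ∂μt) := by
          intro N
          rw [← ofReal_integral_eq_lintegral_ofReal (hiN N)
            (Filter.Eventually.of_forall fun t => hΦnonneg N x t)]
          exact le_iSup (fun M : ℕ => ENNReal.ofReal (∫ t, Φ M x t ∂μt)) N
        exact ((iSup_le hle2).trans_lt hxb).ne
      have heq : (fun t => ∑ a, π0 x t a * ∫ r, ψ (x, t, a, r) ∂(κ x t a))
          =ᵐ[μt] fun t => (∑ a, πe x t' a * (q x t' a - fhat x t' a))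
              * ((if φ t = φ t' then (1:ℝ) else 0) / pφ - 1) := by
        filter_upwards [htfin, htIcc] with t htf htI
        have hsecInt : ∀ a : 𝒜, Integrable (fun r => ψ (x, t, a, r)) (κ x t a) := by
          intro a
          haveI := hκ x t a
          by_cases hπ : π0 x t a = 0
          · have hform : (fun r : ℝ => ψ (x, t, a, r)) = fun _ : ℝ =>
                ((∑ a', πe x t' a' * fhat x t' a')
                  - opfvH πe q fhat φ t' pφ (x, t) - opfvV πe q t' x) := by
              funext r
              rw [hψdef]
              simp only []
              rw [hest x t a r, hπ, div_zero, mul_zero, zero_mul, zero_add]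
            rw [hform]
            exact integrable_const _
          · have hπpos : 0 < π0 x t a := lt_of_le_of_ne (hπ0nonneg x t a) (Ne.symm hπ)
            have hbnd : ∀ N : ℕ, (∫ r, min |ψ (x, t, a, r)| (N:ℝ) ∂(κ x t a))
                ≤ (⨆ N : ℕ, ENNReal.ofReal (Φ N x t)).toReal / π0 x t a := by
              intro N
              have h1 : π0 x t a * (∫ r, min |ψ (x, t, a, r)| (N:ℝ) ∂(κ x t a)) ≤ Φ N x t := by
                rw [hΦdef]
                exact Finset.single_le_sum
                  (fun a' _ => mul_nonneg (hπ0nonneg x t a') (hGsecNonneg N x t a'))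
                  (Finset.mem_univ a)
              have h3 : ENNReal.ofReal (Φ N x t) ≤ ⨆ N : ℕ, ENNReal.ofReal (Φ N x t) :=
                le_iSup (fun N : ℕ => ENNReal.ofReal (Φ N x t)) N
              have h4 := ENNReal.toReal_mono htf.ne h3
              rw [ENNReal.toReal_ofReal (hΦnonneg N x t)] at h4
              rw [le_div_iff₀ hπpos]
              calc (∫ r, min |ψ (x, t, a, r)| (N:ℝ) ∂(κ x t a)) * π0 x t a
                  = π0 x t a * (∫ r, min |ψ (x, t, a, r)| (N:ℝ) ∂(κ x t a)) := mul_comm _ _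
                _ ≤ Φ N x t := h1
                _ ≤ _ := h4
            constructor
            · exact (hψm x t a).aestronglyMeasurable
            · rw [hasFiniteIntegral_iff_norm]
              have hcalc1 : (∫⁻ r, ENNReal.ofReal ‖ψ (x, t, a, r)‖ ∂(κ x t a))
                  = ∫⁻ r, ⨆ N : ℕ, ENNReal.ofReal (min |ψ (x, t, a, r)| (N:ℝ)) ∂(κ x t a) := by
                congr 1
                funext r
                rw [Real.norm_eq_abs]
                exact (opfv_iSup_ofReal_min _).symm
              rw [hcalc1]
              rw [lintegral_iSup (fun N => ((hGm N x t a).ennreal_ofReal))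
                (fun N M hNM r => ENNReal.ofReal_le_ofReal
                  (min_le_min le_rfl (by exact_mod_cast hNM)))]
              refine lt_of_le_of_lt
                (b := ENNReal.ofReal ((⨆ N : ℕ, ENNReal.ofReal (Φ N x t)).toReal / π0 x t a))
                (iSup_le fun N => ?_) ENNReal.ofReal_lt_top
              rw [← ofReal_integral_eq_lintegral_ofReal (hGsecInt N x t a)
                (Filter.Eventually.of_forall fun r => le_min (abs_nonneg _) (Nat.cast_nonneg N))]
              exact ENNReal.ofReal_le_ofReal (hbnd N)
        have hval : ∀ a : 𝒜, π0 x t a * (∫ r, ψ (x, t, a, r) ∂(κ x t a))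
            = (if φ t = φ t' then (1:ℝ) else 0) / pφ * (πe x t' a * (q x t a - fhat x t a))
              + π0 x t a * ((∑ a', πe x t' a' * fhat x t' a')
                  - opfvH πe q fhat φ t' pφ (x, t) - opfvV πe q t' x) := by
          intro a
          haveI := hκ x t a
          by_cases hπ : π0 x t a = 0
          · have hπe : πe x t' a = 0 := by
              by_contra hne
              have hpos : 0 < πe x t' a := lt_of_le_of_ne (hπenonneg x t' a) (Ne.symm hne)
              have h5 := hcommon x a t htI hpos
              rw [hπ] at h5
              exact lt_irrefl 0 h5
            rw [hπ, hπe]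
            ring
          · have hform : (fun r : ℝ => ψ (x, t, a, r))
                = fun r : ℝ => ((if φ t = φ t' then (1:ℝ) else 0) / pφ * (πe x t' a / π0 x t a))
                      * (r - fhat x t a)
                    + ((∑ a', πe x t' a' * fhat x t' a')
                        - opfvH πe q fhat φ t' pφ (x, t) - opfvV πe q t' x) := by
              funext r
              rw [hψdef]
              simp only []
              rw [hest x t a r]
              ring
            have hsi := hsecInt a
            rw [hform] at hsi
            have hlin : Integrable (fun r : ℝ =>
                ((if φ t = φ t' then (1:ℝ) else 0) / pφ * (πe x t' a / π0 x t a))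
                  * (r - fhat x t a)) (κ x t a) := by
              have h6 := hsi.sub (integrable_const ((∑ a', πe x t' a' * fhat x t' a')
                  - opfvH πe q fhat φ t' pφ (x, t) - opfvV πe q t' x))
              exact h6.congr (Filter.Eventually.of_forall fun r => by simp only [Pi.sub_apply]; ring)
            have hIq : (∫ r, (((if φ t = φ t' then (1:ℝ) else 0) / pφ * (πe x t' a / π0 x t a))
                    * (r - fhat x t a)
                  + ((∑ a', πe x t' a' * fhat x t' a')
                      - opfvH πe q fhat φ t' pφ (x, t) - opfvV πe q t' x)) ∂(κ x t a))
                = ((if φ t = φ t' then (1:ℝ) else 0) / pφ * (πe x t' a / π0 x t a))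
                    * (q x t a - fhat x t a)
                  + ((∑ a', πe x t' a' * fhat x t' a')
                      - opfvH πe q fhat φ t' pφ (x, t) - opfvV πe q t' x) := by
              rw [integral_add hlin (integrable_const _), integral_const]
              simp only [measure_univ, ENNReal.toReal_one, probReal_univ, one_smul]
              congr 1
              by_cases hc : ((if φ t = φ t' then (1:ℝ) else 0) / pφ * (πe x t' a / π0 x t a)) = 0
              · simp [hc]
              · have hid : Integrable (fun r : ℝ => r - fhat x t a) (κ x t a) := by
                  have h7 := hlin.const_mul
                    (((if φ t = φ t' then (1:ℝ) else 0) / pφ * (πe x t' a / π0 x t a)))⁻¹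
                  refine h7.congr (Filter.Eventually.of_forall fun r => ?_)
                  show (((if φ t = φ t' then (1:ℝ) else 0) / pφ * (πe x t' a / π0 x t a)))⁻¹
                      * (((if φ t = φ t' then (1:ℝ) else 0) / pφ * (πe x t' a / π0 x t a))
                        * (r - fhat x t a)) = r - fhat x t a
                  rw [← mul_assoc, inv_mul_cancel₀ hc, one_mul]
                rw [integral_const_mul]
                congr 1
                have hidr : Integrable (fun r : ℝ => r) (κ x t a) := by
                  have h8 := hid.add (integrable_const (fhat x t a))
                  exact h8.congr (Filter.Eventually.of_forall fun r => by simp only [Pi.add_apply]; ring)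
                rw [integral_sub hidr (integrable_const _), integral_const, hq]
                simp
            rw [hform, hIq]
            have hc1 : ((if φ t = φ t' then (1:ℝ) else 0) / pφ * (πe x t' a / π0 x t a)) * π0 x t a
                = (if φ t = φ t' then (1:ℝ) else 0) / pφ * πe x t' a := by
              rw [mul_assoc, div_mul_cancel₀ _ hπ]
            linear_combination (q x t a - fhat x t a) * hc1
        simp only [hval]
        rw [Finset.sum_add_distrib, ← Finset.mul_sum, ← Finset.sum_mul, hπ0sum, one_mul]
        have hH : opfvH πe q fhat φ t' pφ (x, t)
            = (if φ t = φ t' then (1:ℝ) else 0) / pφ * (∑ a, πe x t' a * (q x t a - fhat x t a))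
              - (if φ t = φ t' then (1:ℝ) else 0) / pφ
                  * (∑ a, πe x t' a * (q x t' a - fhat x t' a)) := by
          simp only [opfvH]
          rw [Finset.mul_sum, Finset.mul_sum, ← Finset.sum_sub_distrib]
          apply Finset.sum_congr rfl
          intro a _
          ring
        have hV : opfvV πe q t' x = ∑ a, πe x t' a * q x t' a := rfl
        have hS2 : (∑ a, πe x t' a * (q x t' a - fhat x t' a))
            = (∑ a, πe x t' a * q x t' a) - ∑ a, πe x t' a * fhat x t' a := by
          rw [← Finset.sum_sub_distrib]
          apply Finset.sum_congr rfl
          intro a _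
          ring
        rw [hH, hV, hS2]
        ring
      rw [integral_congr_ae heq]
      exact opfv_indicator_integral (fun s => φ s = φ t') measurableSet_Icc hμtsupp hpφdef
        hpφpos _
    have h1 := hP _ hψInt
    rw [h1]
    have h2 : (fun x => ∫ t, (∑ a, π0 x t a * ∫ r, ψ (x, t, a, r) ∂(κ x t a)) ∂μt)
        =ᵐ[μx] fun _ => (0:ℝ) := by
      filter_upwards [hmain] with x hx using hx
    rw [integral_congr_ae h2]
    simp
  -- split the estimator integral
  have hestP : ∫ z, est z ∂P
      = (∫ x, (∫ t, opfvH πe q fhat φ t' pφ (x, t) ∂μt) ∂μx)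
        + ∫ x, opfvV πe q t' x ∂μx := by
    have hHV : Integrable (fun z : 𝒳 × ℝ × 𝒜 × ℝ =>
        opfvH πe q fhat φ t' pφ (z.1, z.2.1) + opfvV πe q t' z.1) P := hHIntP.add hVIntP
    have e0 : ∫ z, ((est z - opfvH πe q fhat φ t' pφ (z.1, z.2.1) - opfvV πe q t' z.1)
            + (opfvH πe q fhat φ t' pφ (z.1, z.2.1) + opfvV πe q t' z.1)) ∂P
        = (∫ z, (est z - opfvH πe q fhat φ t' pφ (z.1, z.2.1) - opfvV πe q t' z.1) ∂P)
          + ∫ z, (opfvH πe q fhat φ t' pφ (z.1, z.2.1) + opfvV πe q t' z.1) ∂P :=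
      integral_add hψInt hHV
    have e2 : ∫ z, (opfvH πe q fhat φ t' pφ (z.1, z.2.1) + opfvV πe q t' z.1) ∂P
        = (∫ z, opfvH πe q fhat φ t' pφ (z.1, z.2.1) ∂P)
          + ∫ z, opfvV πe q t' z.1 ∂P :=
      integral_add hHIntP hVIntP
    have h1 : ∫ z, est z ∂P
        = ∫ z, ((est z - opfvH πe q fhat φ t' pφ (z.1, z.2.1) - opfvV πe q t' z.1)
            + (opfvH πe q fhat φ t' pφ (z.1, z.2.1) + opfvV πe q t' z.1)) ∂P := by
      apply integral_congr_ae
      apply Filter.Eventually.of_forall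
      intro z
      ring
    rw [h1, e0, hkey, zero_add, e2]
    congr 1
    · have h2 := integral_map (μ := P) hproj.aemeasurable
        (f := opfvH πe q fhat φ t' pφ)
        (by rw [hmap]; exact hBInt'.aestronglyMeasurable)
      rw [hmap] at h2
      rw [← h2, integral_prod _ hBInt']
    · have h2 := integral_map (μ := P) (measurable_fst.aemeasurable)
        (f := opfvV πe q t')
        (by rw [hmapfst]; exact hVInt'.aestronglyMeasurable)
      rw [hmapfst] at h2
      rw [← h2]
  -- step 1 : the i.i.d. average integrates to ∫ est dP
  have hstep1 : (∫ D : Fin n → 𝒳 × ℝ × 𝒜 × ℝ, (n : ℝ)⁻¹ * ∑ i, est (D i)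
      ∂(Measure.pi fun _ => P)) = ∫ z, est z ∂P := by
    have hIi : ∀ i : Fin n, Integrable (fun D : Fin n → 𝒳 × ℝ × 𝒜 × ℝ => est (D i))
        (Measure.pi fun _ => P) := by
      intro i
      have h1 : Integrable est ((Measure.pi fun _ : Fin n => P).map (fun D => D i)) := by
        rw [opfv_pi_map_eval]; exact hInt
      exact (integrable_map_measure h1.aestronglyMeasurable
        (measurable_pi_apply i).aemeasurable).mp h1
    rw [integral_const_mul, integral_finset_sum Finset.univ (fun i _ => hIi i)]
    have h2 : ∀ i : Fin n, (∫ D : Fin n → 𝒳 × ℝ × 𝒜 × ℝ, est (D i)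
        ∂(Measure.pi fun _ => P)) = ∫ z, est z ∂P := by
      intro i
      have h3 := integral_map (μ := Measure.pi fun _ : Fin n => P)
        (measurable_pi_apply i).aemeasurable (f := est)
        (by rw [opfv_pi_map_eval]; exact hInt.aestronglyMeasurable)
      rw [opfv_pi_map_eval] at h3
      exact h3.symm
    simp only [h2]
    rw [Finset.sum_const, Finset.card_univ, Fintype.card_fin, nsmul_eq_mul, ← mul_assoc,
      inv_mul_cancel₀ (by exact_mod_cast hn.ne' : (n : ℝ) ≠ 0), one_mul]
  -- assemble
  have hVeq : (∫ x, opfvV πe q t' x ∂μx) = ∫ x, (∑ a, πe x t' a * q x t' a) ∂μx := rfl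
  have hHeq : (∫ x, (∫ t, opfvH πe q fhat φ t' pφ (x, t) ∂μt) ∂μx)
      = ∫ x, (∫ t, (∑ a, πe x t' a * ((if φ t = φ t' then (1 : ℝ) else 0) / pφ
          * ((q x t a - q x t' a) - (fhat x t a - fhat x t' a)))) ∂μt) ∂μx := rfl
  rw [hstep1, hestP, hVeq, hHeq]
  ring
end

section
/- Variance of the OPFV estimator (Proposition 3.4): Assume Common Support, Common Time Feature Support, Conditional Pairwise Correctness, and the stationary-context assumption. Then n · Var[V̂^{OPFV}_{t'}(π_e;𝒟)] = E_{p(x,t) π₀(a|x,t)}[ ( (𝕀_φ(t,t')/p(φ(t'))) · (π_e(a|x,t')/π₀(a|x,t)) )² σ²(x,t,a) ] + E_{p(x,t)}[ (𝕀_φ(t,t')/p(φ(t')))² · Var_{a~π₀(·|x,t)}[ (π_e(a|x,t')/π₀(a|x,t)) Δ_{q,f̂}(x,t',a) ] ] + Var_{t~p(t)}[ 𝕀_φ(t,t')/p(φ(t')) ] · E_{p(x)}[ ( E_{a~π_e(·|x,t')}[Δ_{q,f̂}(x,t',a)] )² ] + Var_{x~p(x)}[ E_{a~π_e(·|x,t')}[q(x,t',a)]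 ]. -/
open MeasureTheory

section Helpers

variable {α : Type*} [MeasurableSpace α] {μ : Measure α}

lemma integrable_of_integral_ne_zero {f : α → ℝ} (h : ∫ a, f a ∂μ ≠ 0) :
    Integrable f μ := by
  by_contra hc; exact h (integral_undef hc)

lemma integrable_of_bounded [IsFiniteMeasure μ] {f : α → ℝ} {c : ℝ}
    (hm : AEStronglyMeasurable f μ) (h : ∀ a, |f a| ≤ c) : Integrable f μ :=
  (integrable_const c).mono' hm (Filter.Eventually.of_forall fun a => by
    simpa using h a)

lemma integral_le_const [IsProbabilityMeasure μ] {f : α → ℝ} {c : ℝ}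
    (h0 : ∀ a, 0 ≤ f a) (hc : ∀ a, f a ≤ c) : ∫ a, f a ∂μ ≤ c := by
  rcases isEmpty_or_nonempty α with hα | hα
  · exfalso
    have h1 : μ Set.univ = 1 := measure_univ
    simp [Set.univ_eq_empty_iff.2 hα] at h1
  by_cases hf : Integrable f μ
  · calc ∫ a, f a ∂μ ≤ ∫ _, c ∂μ := integral_mono hf (integrable_const c) hc
    _ = c := by simp
  · rw [integral_undef hf]
    exact le_trans (h0 (Classical.arbitrary α)) (hc _)

/-- evaluation of integrals of affine functions w.r.t. a probability measure,
given integrability of the affine function and its square. -/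
lemma affine_integral_eval (ν : Measure ℝ) [IsProbabilityMeasure ν] (c d : ℝ)
    (h1 : Integrable (fun r => c * r + d) ν)
    (h2 : Integrable (fun r => (c * r + d) ^ 2) ν) :
    (∫ r, c * r + d ∂ν) = c * (∫ r, r ∂ν) + d ∧
    (∫ r, (c * r + d) ^ 2 ∂ν)
      = c ^ 2 * (∫ r, (r - ∫ r', r' ∂ν) ^ 2 ∂ν) + (c * (∫ r, r ∂ν) + d) ^ 2 := by
  by_cases hc : c = 0
  · subst hc; simp
  · have hr : Integrable (fun r => r) ν := by
      have : (fun r : ℝ => r) = fun r => c⁻¹ * ((c * r + d) - d) := by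
        funext r; field_simp; ring
      rw [this]
      exact ((h1.sub (integrable_const d)).const_mul _)
    have hr2 : Integrable (fun r => r ^ 2) ν := by
      have : (fun r : ℝ => r ^ 2)
          = fun r => (c^2)⁻¹ * (((c * r + d) ^ 2 - d ^ 2) - (2 * c * d) * r) := by
        funext r; field_simp; ring
      rw [this]
      exact (((h2.sub (integrable_const _)).sub (hr.const_mul _)).const_mul _)
    set q := ∫ r, r ∂ν with hq
    have e1 : (∫ r, c * r + d ∂ν) = c * q + d := by
      rw [integral_add (hr.const_mul c) (integrable_const d), integral_const_mul]
      simp [hq]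
    refine ⟨e1, ?_⟩
    have hsq : (∫ r, (c * r + d) ^ 2 ∂ν) = c^2 * (∫ r, r^2 ∂ν) + (2*c*d) * q + d^2 := by
      have h3 : (fun r => (c * r + d)^2) = fun r => c^2 * r^2 + (2*c*d * r + d^2) := by
        funext r; ring
      have i1 : Integrable (fun r => c^2 * r^2) ν := hr2.const_mul _
      have i2 : Integrable (fun r => 2*c*d * r + d^2) ν := by
        exact (hr.const_mul (2*c*d)).add (integrable_const (d^2))
      have i3 : Integrable (fun r => 2*c*d * r) ν := hr.const_mul _
      rw [h3, integral_add i1 i2, integral_add i3 (integrable_const _),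
        integral_const_mul, integral_const_mul]
      simp [hq]
      ring
    have hvar : (∫ r, (r - q) ^ 2 ∂ν) = (∫ r, r^2 ∂ν) - q^2 := by
      have h3 : (fun r => (r - q)^2) = fun r => r^2 - (2*q * r - q^2) := by
        funext r; ring
      have i2 : Integrable (fun r => 2*q * r - q^2) ν := by
        exact (hr.const_mul (2*q)).sub (integrable_const (q^2))
      rw [h3, integral_sub hr2 i2, integral_sub (hr.const_mul _) (integrable_const _),
        integral_const_mul]
      simp [hq]
      ring
    rw [hsq, hvar]; ring

end Helpers

section Machinery

variable {𝒳 : Type*} [MeasurableSpace 𝒳] {𝒜 : Type*} [Fintype 𝒜] [MeasurableSpace 𝒜]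
variable (μx : Measure 𝒳) [IsProbabilityMeasure μx] (μt : Measure ℝ) [IsProbabilityMeasure μt]
variable (π0 : 𝒳 → ℝ → 𝒜 → ℝ) (κ : 𝒳 → ℝ → 𝒜 → Measure ℝ)
variable (P : Measure (𝒳 × ℝ × 𝒜 × ℝ)) [IsProbabilityMeasure P]

omit [Fintype 𝒜] in
lemma measurable_slice {β : Type*} [MeasurableSpace β] {u : 𝒳 × ℝ × 𝒜 × ℝ → β}
    (hum : Measurable u) (x : 𝒳) (t : ℝ) (a : 𝒜) :
    Measurable (fun r => u (x, t, a, r)) := by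
  have m1 : Measurable (fun r : ℝ => (a, r)) := measurable_prodMk_left
  have m2 : Measurable (fun r : ℝ => (t, (a, r))) := measurable_prodMk_left.comp m1
  have m3 : Measurable (fun r : ℝ => (x, (t, (a, r)))) := measurable_prodMk_left.comp m2
  exact hum.comp m3

/-- Pair-extraction: for any `[0,1]`-valued measurable test function, the middle layers of
the iterated representation of `P` are a.e. strongly measurable. -/
lemma pair_extraction
    (hπ0nonneg : ∀ x t a, 0 ≤ π0 x t a) (hπ0sum : ∀ x t, ∑ a, π0 x t a = 1)
    (hκ : ∀ x t a, IsProbabilityMeasure (κ x t a))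
    (hP : ∀ g : 𝒳 × ℝ × 𝒜 × ℝ → ℝ, Integrable g P →
      ∫ z, g z ∂P = ∫ x, (∫ t, (∑ a, π0 x t a * (∫ r, g (x, t, a, r) ∂(κ x t a))) ∂μt) ∂μx)
    (u : 𝒳 × ℝ × 𝒜 × ℝ → ℝ) (hum : Measurable u)
    (hu0 : ∀ z, 0 ≤ u z) (hu1 : ∀ z, u z ≤ 1) :
    (∀ᵐ x ∂μx, AEStronglyMeasurable
        (fun t => ∑ a, π0 x t a * (∫ r, u (x, t, a, r) ∂(κ x t a))) μt)
    ∧ AEStronglyMeasurable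
        (fun x => ∫ t, (∑ a, π0 x t a * (∫ r, u (x, t, a, r) ∂(κ x t a))) ∂μt) μx := by
  classical
  have hone : ∫ (_ : 𝒳), (1:ℝ) ∂μx = 1 := by simp
  -- basic facts about slices
  have sliceInt : ∀ (w : 𝒳 × ℝ × 𝒜 × ℝ → ℝ), Measurable w → (∀ z, 0 ≤ w z) →
      (∀ z, w z ≤ 1) → ∀ x t a, Integrable (fun r => w (x, t, a, r)) (κ x t a) := by
    intro w hwm hw0 hw1 x t a
    haveI := hκ x t a
    exact integrable_of_bounded (measurable_slice hwm x t a).aestronglyMeasurable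
      (fun r => abs_le.mpr ⟨by linarith [hw0 (x, t, a, r)], hw1 (x, t, a, r)⟩)
  have iu0 : ∀ x t a, 0 ≤ ∫ r, u (x, t, a, r) ∂(κ x t a) := fun x t a =>
    integral_nonneg (fun r => hu0 _)
  have iu1 : ∀ x t a, (∫ r, u (x, t, a, r) ∂(κ x t a)) ≤ 1 := by
    intro x t a
    haveI := hκ x t a
    exact integral_le_const (fun r => hu0 _) (fun r => hu1 _)
  -- the two middle-layer functions
  set ρ : 𝒳 → ℝ → ℝ := fun x t => ∑ a, π0 x t a * (∫ r, u (x, t, a, r) ∂(κ x t a)) with hρdef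
  set ρ' : 𝒳 → ℝ → ℝ :=
    fun x t => ∑ a, π0 x t a * (∫ r, (1 - u (x, t, a, r)) ∂(κ x t a)) with hρ'def
  have hρ'eq : ∀ x t, ρ' x t = 1 - ρ x t := by
    intro x t
    have h1 : ∀ a, (∫ r, (1 - u (x, t, a, r)) ∂(κ x t a))
        = 1 - ∫ r, u (x, t, a, r) ∂(κ x t a) := by
      intro a
      haveI := hκ x t a
      rw [integral_sub (integrable_const 1) (sliceInt u hum hu0 hu1 x t a)]
      simp
    simp only [hρ'def, hρdef, h1, mul_sub, mul_one, Finset.sum_sub_distrib, hπ0sum x t]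
  have hρ0 : ∀ x t, 0 ≤ ρ x t := fun x t =>
    Finset.sum_nonneg fun a _ => mul_nonneg (hπ0nonneg x t a) (iu0 x t a)
  have hρ1 : ∀ x t, ρ x t ≤ 1 := by
    intro x t
    calc ρ x t ≤ ∑ a, π0 x t a :=
          Finset.sum_le_sum fun a _ => mul_le_of_le_one_right (hπ0nonneg x t a) (iu1 x t a)
    _ = 1 := hπ0sum x t
  have hρ'0 : ∀ x t, 0 ≤ ρ' x t := fun x t => by rw [hρ'eq]; linarith [hρ1 x t]
  have hρ'1 : ∀ x t, ρ' x t ≤ 1 := fun x t => by rw [hρ'eq]; linarith [hρ0 x t]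
  set τ : 𝒳 → ℝ := fun x => ∫ t, ρ x t ∂μt with hτdef
  set τ' : 𝒳 → ℝ := fun x => ∫ t, ρ' x t ∂μt with hτ'def
  have hτ0 : ∀ x, 0 ≤ τ x := fun x => integral_nonneg (fun t => hρ0 x t)
  have hτ1 : ∀ x, τ x ≤ 1 := fun x => integral_le_const (fun t => hρ0 x t) (fun t => hρ1 x t)
  have hτ'0 : ∀ x, 0 ≤ τ' x := fun x => integral_nonneg (fun t => hρ'0 x t)
  have hτ'1 : ∀ x, τ' x ≤ 1 := fun x => integral_le_const (fun t => hρ'0 x t) (fun t => hρ'1 x t)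
  -- dichotomy
  have hdich : ∀ x, AEStronglyMeasurable (ρ x) μt ∨ (τ x = 0 ∧ τ' x = 0) := by
    intro x
    by_cases h : AEStronglyMeasurable (ρ x) μt
    · exact Or.inl h
    · refine Or.inr ⟨integral_undef (fun hi => h hi.1), integral_undef (fun hi => h ?_)⟩
      have heq : ρ x = fun t => 1 - ρ' x t := by funext t; rw [hρ'eq]; ring
      rw [heq]
      exact aestronglyMeasurable_const.sub hi.1
  have hsum1 : ∀ x, AEStronglyMeasurable (ρ x) μt → τ x + τ' x = 1 := by
    intro x h
    have hInt : Integrable (ρ x) μt :=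
      integrable_of_bounded h (fun t => abs_le.mpr ⟨by linarith [hρ0 x t], hρ1 x t⟩)
    have h2 : τ' x = ∫ t, (1 - ρ x t) ∂μt := by
      simp only [hτ'def]
      exact integral_congr_ae (Filter.Eventually.of_forall fun t => hρ'eq x t)
    have h3 : ∫ t, (1 - ρ x t) ∂μt = 1 - τ x := by
      rw [integral_sub (integrable_const 1) hInt]
      simp [hτdef]
    rw [h2, h3]; ring
  have hle : ∀ x, τ x + τ' x ≤ 1 := by
    intro x
    rcases hdich x with h | h
    · exact le_of_eq (hsum1 x h)
    · rw [h.1, h.2]; norm_num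
  -- integral identities from hP
  have uint : Integrable u P :=
    integrable_of_bounded hum.aestronglyMeasurable
      (fun z => abs_le.mpr ⟨by linarith [hu0 z], hu1 z⟩)
  have u'int : Integrable (fun z => 1 - u z) P := (integrable_const 1).sub uint
  have hPu : ∫ z, u z ∂P = ∫ x, τ x ∂μx := hP u uint
  have hPu' : ∫ z, (1 - u z) ∂P = ∫ x, τ' x ∂μx := hP (fun z => 1 - u z) u'int
  set v : ℝ := ∫ z, u z ∂P with hvdef
  have hv' : ∫ x, τ' x ∂μx = 1 - v := by
    rw [← hPu', integral_sub (integrable_const 1) uint]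
    simp [hvdef]
  have hv : ∫ x, τ x ∂μx = v := hPu.symm
  -- a.e. additivity
  have K2 : ∀ᵐ x ∂μx, τ x + τ' x = 1 := by
    by_cases hτi : Integrable τ μx
    · by_cases hτ'i : Integrable τ' μx
      · have hw1 : Integrable (fun x => 1 - τ' x) μx := (integrable_const 1).sub hτ'i
        have hw : Integrable (fun x => (1 - τ' x) - τ x) μx := hw1.sub hτi
        have hged : 0 ≤ fun x => (1 - τ' x) - τ x := fun x => by
          simp only [Pi.zero_apply]; linarith [hle x]
        have hint0 : ∫ x, ((1 - τ' x) - τ x) ∂μx = 0 := by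
          rw [integral_sub hw1 hτi, integral_sub (integrable_const 1) hτ'i, hv, hv', hone]
          ring
        have hae := (integral_eq_zero_iff_of_nonneg hged hw).mp hint0
        filter_upwards [hae] with x hx
        have : (1 - τ' x) - τ x = 0 := hx
        linarith
      · have h1v : (1 : ℝ) - v = 0 := by rw [← hv']; exact integral_undef hτ'i
        have hw : Integrable (fun x => 1 - τ x) μx := (integrable_const 1).sub hτi
        have hged : 0 ≤ fun x => 1 - τ x := fun x => by
          simp only [Pi.zero_apply]; linarith [hτ1 x]
        have hint0 : ∫ x, (1 - τ x) ∂μx = 0 := by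
          rw [integral_sub (integrable_const 1) hτi, hv, hone]
          linarith
        have hae := (integral_eq_zero_iff_of_nonneg hged hw).mp hint0
        filter_upwards [hae] with x hx
        have h1 : 1 - τ x = 0 := hx
        have h2 : τ' x ≤ 1 - τ x := by linarith [hle x]
        have h3 : 0 ≤ τ' x := hτ'0 x
        linarith
    · have hv0 : v = 0 := by rw [← hv]; exact integral_undef hτi
      have hτ'i : Integrable τ' μx := by
        apply integrable_of_integral_ne_zero
        rw [hv', hv0]
        norm_num
      have hw : Integrable (fun x => 1 - τ' x) μx := (integrable_const 1).sub hτ'i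
      have hged : 0 ≤ fun x => 1 - τ' x := fun x => by
        simp only [Pi.zero_apply]; linarith [hτ'1 x]
      have hint0 : ∫ x, (1 - τ' x) ∂μx = 0 := by
        rw [integral_sub (integrable_const 1) hτ'i, hv', hv0, hone]
        ring
      have hae := (integral_eq_zero_iff_of_nonneg hged hw).mp hint0
      filter_upwards [hae] with x hx
      have h1 : 1 - τ' x = 0 := hx
      have h2 : τ x ≤ 1 - τ' x := by linarith [hle x]
      have h3 : 0 ≤ τ x := hτ0 x
      linarith
  have K3 : ∀ᵐ x ∂μx, AEStronglyMeasurable (ρ x) μt := by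
    filter_upwards [K2] with x hx
    rcases hdich x with h | h
    · exact h
    · exfalso; rw [h.1, h.2] at hx; norm_num at hx
  have K4 : AEStronglyMeasurable τ μx := by
    by_cases hτi : Integrable τ μx
    · exact hτi.1
    · have hv0 : v = 0 := by rw [← hv]; exact integral_undef hτi
      have hτ'i : Integrable τ' μx := by
        apply integrable_of_integral_ne_zero
        rw [hv', hv0]; norm_num
      have heq : τ =ᵐ[μx] fun x => 1 - τ' x := by
        filter_upwards [K2] with x hx; linarith
      exact (aestronglyMeasurable_const.sub hτ'i.1).congr heq.symm
  exact ⟨K3, K4⟩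

end Machinery

section Machinery2

variable {𝒳 : Type*} [MeasurableSpace 𝒳] {𝒜 : Type*} [Fintype 𝒜] [MeasurableSpace 𝒜]
variable (μx : Measure 𝒳) [IsProbabilityMeasure μx] (μt : Measure ℝ) [IsProbabilityMeasure μt]
variable (π0 : 𝒳 → ℝ → 𝒜 → ℝ) (κ : 𝒳 → ℝ → 𝒜 → Measure ℝ)
variable (P : Measure (𝒳 × ℝ × 𝒜 × ℝ)) [IsProbabilityMeasure P]

omit [Fintype 𝒜] in
lemma measurable_mk3 (x : 𝒳) (t : ℝ) (a : 𝒜) :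
    Measurable (fun r : ℝ => (x, t, a, r)) := by
  have m1 : Measurable (fun r : ℝ => (a, r)) := measurable_prodMk_left
  have m2 : Measurable (fun r : ℝ => (t, (a, r))) := measurable_prodMk_left.comp m1
  exact measurable_prodMk_left.comp m2

/-- transfer of a `P`-null measurable set through the iterated representation. -/
lemma null_transfer
    (hπ0nonneg : ∀ x t a, 0 ≤ π0 x t a) (hπ0sum : ∀ x t, ∑ a, π0 x t a = 1)
    (hκ : ∀ x t a, IsProbabilityMeasure (κ x t a))
    (hP : ∀ g : 𝒳 × ℝ × 𝒜 × ℝ → ℝ, Integrable g P →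
      ∫ z, g z ∂P = ∫ x, (∫ t, (∑ a, π0 x t a * (∫ r, g (x, t, a, r) ∂(κ x t a))) ∂μt) ∂μx)
    (N : Set (𝒳 × ℝ × 𝒜 × ℝ)) (hN : MeasurableSet N) (hPN : P N = 0) :
    ∀ᵐ x ∂μx, ∀ᵐ t ∂μt, ∀ a, 0 < π0 x t a → (κ x t a) {r | (x, t, a, r) ∈ N} = 0 := by
  classical
  set u : 𝒳 × ℝ × 𝒜 × ℝ → ℝ := fun z => if z ∈ N then 0 else 1 with hudef
  have hum : Measurable u := Measurable.ite hN measurable_const measurable_const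
  have hu0 : ∀ z, 0 ≤ u z := fun z => by by_cases h : z ∈ N <;> simp [hudef, h]
  have hu1 : ∀ z, u z ≤ 1 := fun z => by by_cases h : z ∈ N <;> simp [hudef, h]
  obtain ⟨K3, K4⟩ := pair_extraction μx μt π0 κ P hπ0nonneg hπ0sum hκ hP u hum hu0 hu1
  -- value of the inner integral
  have hSmeas : ∀ x t a, MeasurableSet {r : ℝ | (x, t, a, r) ∈ N} :=
    fun x t a => (measurable_mk3 x t a) hN
  have hiu : ∀ x t a, (∫ r, u (x, t, a, r) ∂(κ x t a))
      = 1 - ((κ x t a) {r : ℝ | (x, t, a, r) ∈ N}).toReal := by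
    intro x t a
    haveI := hκ x t a
    have h1 : (fun r => u (x, t, a, r))
        = fun r => 1 - Set.indicator {r : ℝ | (x, t, a, r) ∈ N} (fun _ => (1:ℝ)) r := by
      funext r
      by_cases h : (x, t, a, r) ∈ N <;>
        simp [hudef, h, Set.indicator_of_mem, Set.indicator_of_notMem,
          Set.mem_setOf_eq]
    rw [h1, integral_sub (integrable_const 1)
      ((integrable_const (1:ℝ)).indicator (hSmeas x t a))]
    rw [integral_indicator_const (1:ℝ) (hSmeas x t a)]
    simp
    rfl
  have hiu0 : ∀ x t a, 0 ≤ (∫ r, u (x, t, a, r) ∂(κ x t a)) :=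
    fun x t a => integral_nonneg fun r => hu0 _
  -- ρ and its bounds
  set ρ : 𝒳 → ℝ → ℝ := fun x t => ∑ a, π0 x t a * (∫ r, u (x, t, a, r) ∂(κ x t a)) with hρdef
  have hρ1 : ∀ x t, ρ x t ≤ 1 := by
    intro x t
    have : ∀ a, (∫ r, u (x, t, a, r) ∂(κ x t a)) ≤ 1 := by
      intro a
      haveI := hκ x t a
      exact integral_le_const (fun r => hu0 _) (fun r => hu1 _)
    calc ρ x t ≤ ∑ a, π0 x t a :=
          Finset.sum_le_sum fun a _ => mul_le_of_le_one_right (hπ0nonneg x t a) (this a)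
    _ = 1 := hπ0sum x t
  have hρ0 : ∀ x t, 0 ≤ ρ x t := fun x t =>
    Finset.sum_nonneg fun a _ => mul_nonneg (hπ0nonneg x t a) (hiu0 x t a)
  set τ : 𝒳 → ℝ := fun x => ∫ t, ρ x t ∂μt with hτdef
  have hτ0 : ∀ x, 0 ≤ τ x := fun x => integral_nonneg fun t => hρ0 x t
  have hτ1 : ∀ x, τ x ≤ 1 := fun x => integral_le_const (fun t => hρ0 x t) (fun t => hρ1 x t)
  -- ∫ u dP = 1
  have huae : u =ᵐ[P] fun _ => (1:ℝ) := by
    have h1 : ∀ᵐ z ∂P, z ∉ N := by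
      rw [ae_iff]
      simpa using hPN
    filter_upwards [h1] with z hz
    simp [hudef, hz]
  have hval : ∫ z, u z ∂P = 1 := by rw [integral_congr_ae huae]; simp
  have huint : Integrable u P :=
    integrable_of_bounded hum.aestronglyMeasurable
      (fun z => abs_le.mpr ⟨by linarith [hu0 z], hu1 z⟩)
  have hτint_eq : ∫ x, τ x ∂μx = 1 := by rw [← hP u huint]; exact hval
  have hτint : Integrable τ μx :=
    integrable_of_bounded K4 (fun x => abs_le.mpr ⟨by linarith [hτ0 x], hτ1 x⟩)
  -- τ = 1 a.e.
  have hτae : ∀ᵐ x ∂μx, τ x = 1 := by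
    have hged : 0 ≤ fun x => 1 - τ x := fun x => by
      simp only [Pi.zero_apply]; linarith [hτ1 x]
    have hw : Integrable (fun x => 1 - τ x) μx := (integrable_const 1).sub hτint
    have hint0 : ∫ x, (1 - τ x) ∂μx = 0 := by
      rw [integral_sub (integrable_const 1) hτint, hτint_eq]
      simp
    have hae := (integral_eq_zero_iff_of_nonneg hged hw).mp hint0
    filter_upwards [hae] with x hx
    have : 1 - τ x = 0 := hx
    linarith
  filter_upwards [K3, hτae] with x hxm hxτ
  -- ρ x = 1 a.e. t
  have hρint : Integrable (ρ x) μt :=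
    integrable_of_bounded hxm (fun t => abs_le.mpr ⟨by linarith [hρ0 x t], hρ1 x t⟩)
  have hρae : ∀ᵐ t ∂μt, ρ x t = 1 := by
    have hged : 0 ≤ fun t => 1 - ρ x t := fun t => by
      simp only [Pi.zero_apply]; linarith [hρ1 x t]
    have hw : Integrable (fun t => 1 - ρ x t) μt := (integrable_const 1).sub hρint
    have hint0 : ∫ t, (1 - ρ x t) ∂μt = 0 := by
      rw [integral_sub (integrable_const 1) hρint]
      have : ∫ t, ρ x t ∂μt = 1 := hxτ
      rw [this]
      simp
    have hae := (integral_eq_zero_iff_of_nonneg hged hw).mp hint0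
    filter_upwards [hae] with t ht
    have : 1 - ρ x t = 0 := ht
    linarith
  filter_upwards [hρae] with t hρ1t a hπ0pos
  -- conclude per action
  have hsum0 : ∑ a, π0 x t a * ((κ x t a) {r : ℝ | (x, t, a, r) ∈ N}).toReal = 0 := by
    have h2 : ρ x t = 1 - ∑ a, π0 x t a * ((κ x t a) {r : ℝ | (x, t, a, r) ∈ N}).toReal := by
      simp only [hρdef, hiu, mul_sub, mul_one, Finset.sum_sub_distrib, hπ0sum x t]
    rw [h2] at hρ1t
    linarith
  have hterm := (Finset.sum_eq_zero_iff_of_nonneg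
    (fun a _ => mul_nonneg (hπ0nonneg x t a) ENNReal.toReal_nonneg)).mp hsum0 a
    (Finset.mem_univ a)
  haveI := hκ x t a
  have htr : ((κ x t a) {r : ℝ | (x, t, a, r) ∈ N}).toReal = 0 := by
    rcases mul_eq_zero.mp hterm with h | h
    · exact absurd h (ne_of_gt hπ0pos)
    · exact h
  rcases (ENNReal.toReal_eq_zero_iff _).mp htr with h | h
  · exact h
  · exact absurd h (measure_ne_top _ _)

end Machinery2

section Machinery3

variable {𝒳 : Type*} [MeasurableSpace 𝒳] {𝒜 : Type*} [Fintype 𝒜] [MeasurableSpace 𝒜]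
variable (μx : Measure 𝒳) [IsProbabilityMeasure μx] (μt : Measure ℝ) [IsProbabilityMeasure μt]
variable (π0 : 𝒳 → ℝ → 𝒜 → ℝ) (κ : 𝒳 → ℝ → 𝒜 → Measure ℝ)
variable (P : Measure (𝒳 × ℝ × 𝒜 × ℝ)) [IsProbabilityMeasure P]

/-- Slice integrability: a nonnegative measurable `P`-integrable function has
`κ`-integrable slices, a.e. along the iterated representation. -/
lemma slice_integrable
    (hπ0nonneg : ∀ x t a, 0 ≤ π0 x t a) (hπ0sum : ∀ x t, ∑ a, π0 x t a = 1)
    (hκ : ∀ x t a, IsProbabilityMeasure (κ x t a))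
    (hP : ∀ g : 𝒳 × ℝ × 𝒜 × ℝ → ℝ, Integrable g P →
      ∫ z, g z ∂P = ∫ x, (∫ t, (∑ a, π0 x t a * (∫ r, g (x, t, a, r) ∂(κ x t a))) ∂μt) ∂μx)
    (W : 𝒳 × ℝ × 𝒜 × ℝ → ℝ) (hWm : Measurable W) (hW0 : ∀ z, 0 ≤ W z)
    (hWint : Integrable W P) :
    ∀ᵐ x ∂μx, ∀ᵐ t ∂μt, ∀ a, 0 < π0 x t a →
      Integrable (fun r => W (x, t, a, r)) (κ x t a) := by
  classical
  set c : ℕ → ℝ := fun M => (M : ℝ) + 1 with hcdef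
  have hcpos : ∀ M, (0:ℝ) < c M := fun M => by positivity
  have hcmono : ∀ M, c M ≤ c (M + 1) := fun M => by
    simp only [hcdef]; push_cast; linarith
  -- the truncated test functions
  have hgm : ∀ M : ℕ, Measurable (fun z => min (W z) (c M)) :=
    fun M => hWm.min measurable_const
  have hg0 : ∀ M z, 0 ≤ min (W z) (c M) := fun M z => le_min (hW0 z) (hcpos M).le
  have hg1 : ∀ M z, min (W z) (c M) ≤ c M := fun M z => min_le_right _ _
  have hgint : ∀ M : ℕ, Integrable (fun z => min (W z) (c M)) P := by
    intro M
    refine hWint.mono' (hgm M).aestronglyMeasurable ?_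
    refine Filter.Eventually.of_forall fun z => ?_
    rw [Real.norm_eq_abs, abs_of_nonneg (hg0 M z)]
    exact min_le_left _ _
  -- slice integrals and layers
  set ρ : ℕ → 𝒳 → ℝ → ℝ :=
    fun M x t => ∑ a, π0 x t a * (∫ r, min (W (x, t, a, r)) (c M) ∂(κ x t a)) with hρdef
  set τ : ℕ → 𝒳 → ℝ := fun M x => ∫ t, ρ M x t ∂μt with hτdef
  have hsliceInt : ∀ M x t a, Integrable (fun r => min (W (x, t, a, r)) (c M)) (κ x t a) := by
    intro M x t a
    haveI := hκ x t a
    refine integrable_of_bounded (c := c M) ((measurable_slice hWm x t a).min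
      measurable_const).aestronglyMeasurable (fun r => ?_)
    rw [abs_of_nonneg (le_min (hW0 _) (hcpos M).le)]
    exact min_le_right _ _
  have hiu0 : ∀ M x t a, 0 ≤ ∫ r, min (W (x, t, a, r)) (c M) ∂(κ x t a) :=
    fun M x t a => integral_nonneg fun r => hg0 M _
  have hiu1 : ∀ M x t a, (∫ r, min (W (x, t, a, r)) (c M) ∂(κ x t a)) ≤ c M := by
    intro M x t a
    haveI := hκ x t a
    exact integral_le_const (fun r => hg0 M _) (fun r => hg1 M _)
  have hiumono : ∀ M x t a, (∫ r, min (W (x, t, a, r)) (c M) ∂(κ x t a))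
      ≤ ∫ r, min (W (x, t, a, r)) (c (M + 1)) ∂(κ x t a) := by
    intro M x t a
    exact integral_mono (hsliceInt M x t a) (hsliceInt (M+1) x t a)
      (fun r => min_le_min (le_refl _) (hcmono M))
  have hρ0 : ∀ M x t, 0 ≤ ρ M x t := fun M x t =>
    Finset.sum_nonneg fun a _ => mul_nonneg (hπ0nonneg x t a) (hiu0 M x t a)
  have hρc : ∀ M x t, ρ M x t ≤ c M := by
    intro M x t
    calc ρ M x t ≤ ∑ a, π0 x t a * c M :=
          Finset.sum_le_sum fun a _ =>
            mul_le_mul_of_nonneg_left (hiu1 M x t a) (hπ0nonneg x t a)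
    _ = c M := by rw [← Finset.sum_mul, hπ0sum x t, one_mul]
  have hρmono : ∀ M x t, ρ M x t ≤ ρ (M+1) x t := fun M x t =>
    Finset.sum_le_sum fun a _ =>
      mul_le_mul_of_nonneg_left (hiumono M x t a) (hπ0nonneg x t a)
  have hτ0 : ∀ M x, 0 ≤ τ M x := fun M x => integral_nonneg fun t => hρ0 M x t
  have hτc : ∀ M x, τ M x ≤ c M := fun M x =>
    integral_le_const (fun t => hρ0 M x t) (fun t => hρc M x t)
  -- measurability of the layers, from pair extraction applied to the scaled truncations
  have hPE : ∀ M : ℕ, (∀ᵐ x ∂μx, AEStronglyMeasurable (fun t => ρ M x t) μt)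
      ∧ AEStronglyMeasurable (fun x => τ M x) μx := by
    intro M
    have h0 : ∀ z, 0 ≤ min (W z) (c M) / c M := fun z => by
      have := hg0 M z; positivity
    have h1 : ∀ z, min (W z) (c M) / c M ≤ 1 := fun z =>
      (div_le_one (hcpos M)).mpr (hg1 M z)
    obtain ⟨K3, K4⟩ := pair_extraction μx μt π0 κ P hπ0nonneg hπ0sum hκ hP
      (fun z => min (W z) (c M) / c M) ((hgm M).div_const _) h0 h1
    have hiueq : ∀ x t a, (∫ r, min (W (x, t, a, r)) (c M) / c M ∂(κ x t a))
        = (∫ r, min (W (x, t, a, r)) (c M) ∂(κ x t a)) / c M := by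
      intro x t a
      exact integral_div _ _
    have hρeq : ∀ x t, (∑ a, π0 x t a * (∫ r, min (W (x, t, a, r)) (c M) / c M ∂(κ x t a)))
        = ρ M x t / c M := by
      intro x t
      simp only [hiueq, hρdef]
      rw [Finset.sum_div]
      exact Finset.sum_congr rfl fun a _ => by ring
    constructor
    · filter_upwards [K3] with x hx
      refine (hx.const_mul (c M)).congr ?_
      refine Filter.Eventually.of_forall fun t => ?_
      show c M * (∑ a, π0 x t a * (∫ r, min (W (x, t, a, r)) (c M) / c M ∂(κ x t a)))
        = ρ M x t
      rw [hρeq x t]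
      field_simp [(hcpos M).ne']
    · refine (K4.const_mul (c M)).congr ?_
      refine Filter.Eventually.of_forall fun x => ?_
      show c M * (∫ t, (∑ a, π0 x t a *
          (∫ r, min (W (x, t, a, r)) (c M) / c M ∂(κ x t a))) ∂μt) = τ M x
      have h2 : ∫ t, (∑ a, π0 x t a *
          (∫ r, min (W (x, t, a, r)) (c M) / c M ∂(κ x t a))) ∂μt
          = ∫ t, ρ M x t / c M ∂μt :=
        integral_congr_ae (Filter.Eventually.of_forall fun t => hρeq x t)
      rw [h2, integral_div]
      simp only [hτdef]
      field_simp [(hcpos M).ne']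
  have hτaesm : ∀ M : ℕ, AEStronglyMeasurable (fun x => τ M x) μx := fun M => (hPE M).2
  have hτint : ∀ M : ℕ, Integrable (fun x => τ M x) μx := fun M =>
    integrable_of_bounded (hτaesm M)
      (fun x => abs_le.mpr ⟨by linarith [hτ0 M x, hcpos M], hτc M x⟩)
  -- the hP identities and uniform bound
  have hPid : ∀ M : ℕ, ∫ z, min (W z) (c M) ∂P = ∫ x, τ M x ∂μx := fun M =>
    hP _ (hgint M)
  have hcbd : ∀ M : ℕ, ∫ z, min (W z) (c M) ∂P ≤ ∫ z, W z ∂P := fun M =>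
    integral_mono (hgint M) hWint (fun z => min_le_left _ _)
  -- lintegral tower
  have hx1 : ∀ᵐ x ∂μx, ∀ M : ℕ, AEStronglyMeasurable (fun t => ρ M x t) μt :=
    (MeasureTheory.ae_all_iff).mpr fun M => (hPE M).1
  have hρint : ∀ {x : 𝒳}, (∀ M : ℕ, AEStronglyMeasurable (fun t => ρ M x t) μt) →
      ∀ M, Integrable (fun t => ρ M x t) μt := by
    intro x hx M
    exact integrable_of_bounded (hx M)
      (fun t => abs_le.mpr ⟨by linarith [hρ0 M x t, hcpos M], hρc M x t⟩)
  -- step 2 per good x : lintegral of sup = sup of ofReal τ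
  have hstep2 : ∀ᵐ x ∂μx, ∫⁻ t, (⨆ M : ℕ, ENNReal.ofReal (ρ M x t)) ∂μt
      = ⨆ M : ℕ, ENNReal.ofReal (τ M x) := by
    filter_upwards [hx1] with x hx
    have h1 : ∫⁻ t, (⨆ M : ℕ, ENNReal.ofReal (ρ M x t)) ∂μt
        = ⨆ M : ℕ, ∫⁻ t, ENNReal.ofReal (ρ M x t) ∂μt := by
      refine lintegral_iSup' (fun M => ((hx M).aemeasurable).ennreal_ofReal) ?_
      refine Filter.Eventually.of_forall fun t => ?_
      exact monotone_nat_of_le_succ fun M => ENNReal.ofReal_le_ofReal (hρmono M x t)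
    have h2 : ∀ M : ℕ, ∫⁻ t, ENNReal.ofReal (ρ M x t) ∂μt = ENNReal.ofReal (τ M x) := by
      intro M
      rw [← ofReal_integral_eq_lintegral_ofReal (hρint hx M)
        (Filter.Eventually.of_forall fun t => hρ0 M x t)]
    rw [h1]
    exact iSup_congr h2
  -- step 3: global lintegral bound
  have hstep3 : ∫⁻ x, (⨆ M : ℕ, ENNReal.ofReal (τ M x)) ∂μx
      = ⨆ M : ℕ, ENNReal.ofReal (∫ z, min (W z) (c M) ∂P) := by
    have h1 : ∫⁻ x, (⨆ M : ℕ, ENNReal.ofReal (τ M x)) ∂μx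
        = ⨆ M : ℕ, ∫⁻ x, ENNReal.ofReal (τ M x) ∂μx := by
      refine lintegral_iSup' (fun M => ((hτaesm M).aemeasurable).ennreal_ofReal) ?_
      filter_upwards [hx1] with x hx
      refine monotone_nat_of_le_succ fun M => ENNReal.ofReal_le_ofReal ?_
      exact integral_mono (hρint hx M) (hρint hx (M+1)) (fun t => hρmono M x t)
    have h2 : ∀ M : ℕ, ∫⁻ x, ENNReal.ofReal (τ M x) ∂μx
        = ENNReal.ofReal (∫ z, min (W z) (c M) ∂P) := by
      intro M
      rw [← ofReal_integral_eq_lintegral_ofReal (hτint M)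
        (Filter.Eventually.of_forall fun x => hτ0 M x), hPid M]
    rw [h1]
    exact iSup_congr h2
  have hbound : ∫⁻ x, (⨆ M : ℕ, ENNReal.ofReal (τ M x)) ∂μx
      ≤ ENNReal.ofReal (∫ z, W z ∂P) := by
    rw [hstep3]
    exact iSup_le fun M => ENNReal.ofReal_le_ofReal (hcbd M)
  have hΘfin : ∀ᵐ x ∂μx, (⨆ M : ℕ, ENNReal.ofReal (τ M x)) < ⊤ := by
    refine ae_lt_top' (AEMeasurable.iSup fun M => ((hτaesm M).aemeasurable).ennreal_ofReal) ?_
    exact ne_top_of_le_ne_top ENNReal.ofReal_ne_top hbound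
  -- per good x : the t-sup is a.e. finite
  have hfin_t : ∀ᵐ x ∂μx, ∀ᵐ t ∂μt, (⨆ M : ℕ, ENNReal.ofReal (ρ M x t)) < ⊤ := by
    filter_upwards [hx1, hstep2, hΘfin] with x hx h2 h3
    refine ae_lt_top' (AEMeasurable.iSup fun M => ((hx M).aemeasurable).ennreal_ofReal) ?_
    rw [h2]
    exact h3.ne
  -- conclusion
  filter_upwards [hfin_t] with x hxt
  filter_upwards [hxt] with t hfin a hπ0pos
  haveI := hκ x t a
  -- bound the truncated slice integrals
  set K : ℝ := (⨆ M : ℕ, ENNReal.ofReal (ρ M x t)).toReal with hKdef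
  have hρK : ∀ M : ℕ, ρ M x t ≤ K := by
    intro M
    have h1 : ENNReal.ofReal (ρ M x t) ≤ ⨆ M : ℕ, ENNReal.ofReal (ρ M x t) :=
      le_iSup (fun M => ENNReal.ofReal (ρ M x t)) M
    have h2 := ENNReal.toReal_mono hfin.ne h1
    rwa [ENNReal.toReal_ofReal (hρ0 M x t)] at h2
  have hminK : ∀ M : ℕ, (∫ r, min (W (x, t, a, r)) (c M) ∂(κ x t a)) ≤ K / π0 x t a := by
    intro M
    have h1 : π0 x t a * (∫ r, min (W (x, t, a, r)) (c M) ∂(κ x t a)) ≤ ρ M x t := by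
      refine Finset.single_le_sum (f := fun a' =>
        π0 x t a' * (∫ r, min (W (x, t, a', r)) (c M) ∂(κ x t a'))) ?_ (Finset.mem_univ a)
      exact fun a' _ => mul_nonneg (hπ0nonneg x t a') (hiu0 M x t a')
    rw [le_div_iff₀ hπ0pos]
    calc (∫ r, min (W (x, t, a, r)) (c M) ∂(κ x t a)) * π0 x t a
        = π0 x t a * (∫ r, min (W (x, t, a, r)) (c M) ∂(κ x t a)) := by ring
    _ ≤ ρ M x t := h1
    _ ≤ K := hρK M
  -- monotone convergence at the slice level
  have hsl : ∫⁻ r, ENNReal.ofReal (W (x, t, a, r)) ∂(κ x t a)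
      = ⨆ M : ℕ, ∫⁻ r, ENNReal.ofReal (min (W (x, t, a, r)) (c M)) ∂(κ x t a) := by
    have h1 : ∀ r : ℝ, ENNReal.ofReal (W (x, t, a, r))
        = ⨆ M : ℕ, ENNReal.ofReal (min (W (x, t, a, r)) (c M)) := by
      intro r
      refine le_antisymm ?_ (iSup_le fun M => ENNReal.ofReal_le_ofReal (min_le_left _ _))
      have hM : W (x, t, a, r) ≤ c (⌈W (x, t, a, r)⌉₊) := by
        simp only [hcdef]
        calc W (x, t, a, r) ≤ (⌈W (x, t, a, r)⌉₊ : ℝ) := Nat.le_ceil _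
        _ ≤ (⌈W (x, t, a, r)⌉₊ : ℝ) + 1 := by linarith
      calc ENNReal.ofReal (W (x, t, a, r))
          = ENNReal.ofReal (min (W (x, t, a, r)) (c (⌈W (x, t, a, r)⌉₊))) := by
            rw [min_eq_left hM]
      _ ≤ ⨆ M : ℕ, ENNReal.ofReal (min (W (x, t, a, r)) (c M)) :=
            le_iSup (fun M => ENNReal.ofReal (min (W (x, t, a, r)) (c M))) _
    calc ∫⁻ r, ENNReal.ofReal (W (x, t, a, r)) ∂(κ x t a)
        = ∫⁻ r, ⨆ M : ℕ, ENNReal.ofReal (min (W (x, t, a, r)) (c M)) ∂(κ x t a) := by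
          exact lintegral_congr h1
    _ = ⨆ M : ℕ, ∫⁻ r, ENNReal.ofReal (min (W (x, t, a, r)) (c M)) ∂(κ x t a) := by
          refine lintegral_iSup (fun M => ((measurable_slice hWm x t a).min
            measurable_const).ennreal_ofReal) ?_
          refine fun M M' hMM' r => ENNReal.ofReal_le_ofReal
            (min_le_min (le_refl _) ?_)
          simp only [hcdef]
          have hcast : (M : ℝ) ≤ (M' : ℝ) := Nat.cast_le.mpr hMM'
          linarith
  have hslbd : ∫⁻ r, ENNReal.ofReal (W (x, t, a, r)) ∂(κ x t a)
      ≤ ENNReal.ofReal (K / π0 x t a) := by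
    rw [hsl]
    refine iSup_le fun M => ?_
    rw [← ofReal_integral_eq_lintegral_ofReal (hsliceInt M x t a)
      (Filter.Eventually.of_forall fun r => hg0 M _)]
    exact ENNReal.ofReal_le_ofReal (hminK M)
  refine ⟨(measurable_slice hWm x t a).aestronglyMeasurable, ?_⟩
  rw [hasFiniteIntegral_iff_ofReal (Filter.Eventually.of_forall fun r => hW0 _)]
  exact lt_of_le_of_lt hslbd ENNReal.ofReal_lt_top

end Machinery3

section Machinery4

variable {𝒳 : Type*} [MeasurableSpace 𝒳] {𝒜 : Type*} [Fintype 𝒜] [MeasurableSpace 𝒜]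
variable (μx : Measure 𝒳) [IsProbabilityMeasure μx] (μt : Measure ℝ) [IsProbabilityMeasure μt]
variable (π0 : 𝒳 → ℝ → 𝒜 → ℝ) (κ : 𝒳 → ℝ → 𝒜 → Measure ℝ)
variable (P : Measure (𝒳 × ℝ × 𝒜 × ℝ)) [IsProbabilityMeasure P]

/-- a.e. strong measurability in `t` of the middle layer built from a measurable function with
a.e. integrable slices. -/
lemma layer_aesm
    (hπ0nonneg : ∀ x t a, 0 ≤ π0 x t a) (hπ0sum : ∀ x t, ∑ a, π0 x t a = 1)
    (hκ : ∀ x t a, IsProbabilityMeasure (κ x t a))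
    (hP : ∀ g : 𝒳 × ℝ × 𝒜 × ℝ → ℝ, Integrable g P →
      ∫ z, g z ∂P = ∫ x, (∫ t, (∑ a, π0 x t a * (∫ r, g (x, t, a, r) ∂(κ x t a))) ∂μt) ∂μx)
    (G : 𝒳 × ℝ × 𝒜 × ℝ → ℝ) (hGm : Measurable G)
    (hsl : ∀ᵐ x ∂μx, ∀ᵐ t ∂μt, ∀ a, 0 < π0 x t a →
      Integrable (fun r => G (x, t, a, r)) (κ x t a)) :
    ∀ᵐ x ∂μx, AEStronglyMeasurable
      (fun t => ∑ a, π0 x t a * (∫ r, G (x, t, a, r) ∂(κ x t a))) μt := by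
  classical
  set c : ℕ → ℝ := fun M => (M : ℝ) + 1 with hcdef
  have hcpos : ∀ M, (0:ℝ) < c M := fun M => by positivity
  set Gp : 𝒳 × ℝ × 𝒜 × ℝ → ℝ := fun z => max (G z) 0 with hGpdef
  set Gm : 𝒳 × ℝ × 𝒜 × ℝ → ℝ := fun z => max (-G z) 0 with hGmdef
  have hGpm : Measurable Gp := hGm.max measurable_const
  have hGmm : Measurable Gm := hGm.neg.max measurable_const
  have hGp0 : ∀ z, 0 ≤ Gp z := fun z => le_max_right _ _
  have hGm0 : ∀ z, 0 ≤ Gm z := fun z => le_max_right _ _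
  -- pair extraction for the scaled truncations of Gp and Gm
  have hPEgen : ∀ (W : 𝒳 × ℝ × 𝒜 × ℝ → ℝ), Measurable W → (∀ z, 0 ≤ W z) → ∀ M : ℕ,
      ∀ᵐ x ∂μx, AEStronglyMeasurable
        (fun t => ∑ a, π0 x t a * (∫ r, min (W (x, t, a, r)) (c M) ∂(κ x t a))) μt := by
    intro W hWm hW0 M
    have h0 : ∀ z, 0 ≤ min (W z) (c M) / c M := fun z => by
      have h := hW0 z
      have := (hcpos M).le
      positivity
    have h1 : ∀ z, min (W z) (c M) / c M ≤ 1 := fun z =>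
      (div_le_one (hcpos M)).mpr (min_le_right _ _)
    obtain ⟨K3, _⟩ := pair_extraction μx μt π0 κ P hπ0nonneg hπ0sum hκ hP
      (fun z => min (W z) (c M) / c M) ((hWm.min measurable_const).div_const _) h0 h1
    filter_upwards [K3] with x hx
    refine (hx.const_mul (c M)).congr ?_
    refine Filter.Eventually.of_forall fun t => ?_
    show c M * (∑ a, π0 x t a * (∫ r, min (W (x, t, a, r)) (c M) / c M ∂(κ x t a)))
      = ∑ a, π0 x t a * (∫ r, min (W (x, t, a, r)) (c M) ∂(κ x t a))
    rw [Finset.mul_sum]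
    refine Finset.sum_congr rfl fun a _ => ?_
    rw [integral_div]
    field_simp [(hcpos M).ne']
  have hPEp : ∀ᵐ x ∂μx, ∀ M : ℕ, AEStronglyMeasurable
      (fun t => ∑ a, π0 x t a * (∫ r, min (Gp (x, t, a, r)) (c M) ∂(κ x t a))) μt :=
    (MeasureTheory.ae_all_iff).mpr fun M => hPEgen Gp hGpm hGp0 M
  have hPEm : ∀ᵐ x ∂μx, ∀ M : ℕ, AEStronglyMeasurable
      (fun t => ∑ a, π0 x t a * (∫ r, min (Gm (x, t, a, r)) (c M) ∂(κ x t a))) μt :=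
    (MeasureTheory.ae_all_iff).mpr fun M => hPEgen Gm hGmm hGm0 M
  filter_upwards [hPEp, hPEm, hsl] with x hxp hxm hxsl
  -- the approximating sequence
  refine aestronglyMeasurable_of_tendsto_ae (f := fun (M : ℕ) => fun t =>
    (∑ a, π0 x t a * (∫ r, min (Gp (x, t, a, r)) (c M) ∂(κ x t a)))
    - (∑ a, π0 x t a * (∫ r, min (Gm (x, t, a, r)) (c M) ∂(κ x t a))))
    Filter.atTop (fun M => (hxp M).sub (hxm M)) ?_
  filter_upwards [hxsl] with t hts
  -- pointwise convergence of each summand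
  have hterm : ∀ a, Filter.Tendsto (fun M : ℕ =>
      π0 x t a * (∫ r, min (Gp (x, t, a, r)) (c M) ∂(κ x t a))
      - π0 x t a * (∫ r, min (Gm (x, t, a, r)) (c M) ∂(κ x t a)))
      Filter.atTop (nhds (π0 x t a * (∫ r, G (x, t, a, r) ∂(κ x t a)))) := by
    intro a
    rcases eq_or_lt_of_le (hπ0nonneg x t a) with h0 | hpos
    · simp only [← h0, zero_mul, sub_zero]
      exact tendsto_const_nhds
    · have hint : Integrable (fun r => G (x, t, a, r)) (κ x t a) := hts a hpos
      haveI := hκ x t a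
      have hintp : Integrable (fun r => Gp (x, t, a, r)) (κ x t a) := by
        simpa [hGpdef] using hint.pos_part
      have hintm : Integrable (fun r => Gm (x, t, a, r)) (κ x t a) := by
        simpa [hGmdef] using hint.neg.pos_part
      have htendp : Filter.Tendsto (fun M : ℕ => ∫ r, min (Gp (x, t, a, r)) (c M) ∂(κ x t a))
          Filter.atTop (nhds (∫ r, Gp (x, t, a, r) ∂(κ x t a))) := by
        refine tendsto_integral_of_dominated_convergence (fun r => Gp (x, t, a, r))
          (fun M => ((measurable_slice hGpm x t a).min measurable_const).aestronglyMeasurable)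
          hintp (fun M => Filter.Eventually.of_forall fun r => ?_)
          (Filter.Eventually.of_forall fun r => ?_)
        · rw [Real.norm_eq_abs, abs_of_nonneg (le_min (hGp0 _) (hcpos M).le)]
          exact min_le_left _ _
        · have : (fun M : ℕ => min (Gp (x, t, a, r)) (c M))
              =ᶠ[Filter.atTop] (fun _ => Gp (x, t, a, r)) := by
            refine Filter.eventually_atTop.mpr ⟨⌈Gp (x, t, a, r)⌉₊, fun M hM => ?_⟩
            refine min_eq_left ?_
            calc Gp (x, t, a, r) ≤ (⌈Gp (x, t, a, r)⌉₊ : ℝ) := Nat.le_ceil _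
            _ ≤ (M : ℝ) := Nat.cast_le.mpr hM
            _ ≤ c M := by simp only [hcdef]; linarith
          exact Filter.Tendsto.congr' this.symm tendsto_const_nhds
      have htendm : Filter.Tendsto (fun M : ℕ => ∫ r, min (Gm (x, t, a, r)) (c M) ∂(κ x t a))
          Filter.atTop (nhds (∫ r, Gm (x, t, a, r) ∂(κ x t a))) := by
        refine tendsto_integral_of_dominated_convergence (fun r => Gm (x, t, a, r))
          (fun M => ((measurable_slice hGmm x t a).min measurable_const).aestronglyMeasurable)
          hintm (fun M => Filter.Eventually.of_forall fun r => ?_)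
          (Filter.Eventually.of_forall fun r => ?_)
        · rw [Real.norm_eq_abs, abs_of_nonneg (le_min (hGm0 _) (hcpos M).le)]
          exact min_le_left _ _
        · have : (fun M : ℕ => min (Gm (x, t, a, r)) (c M))
              =ᶠ[Filter.atTop] (fun _ => Gm (x, t, a, r)) := by
            refine Filter.eventually_atTop.mpr ⟨⌈Gm (x, t, a, r)⌉₊, fun M hM => ?_⟩
            refine min_eq_left ?_
            calc Gm (x, t, a, r) ≤ (⌈Gm (x, t, a, r)⌉₊ : ℝ) := Nat.le_ceil _
            _ ≤ (M : ℝ) := Nat.cast_le.mpr hM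
            _ ≤ c M := by simp only [hcdef]; linarith
          exact Filter.Tendsto.congr' this.symm tendsto_const_nhds
      have hGeq : (∫ r, G (x, t, a, r) ∂(κ x t a))
          = (∫ r, Gp (x, t, a, r) ∂(κ x t a)) - (∫ r, Gm (x, t, a, r) ∂(κ x t a)) := by
        rw [← integral_sub hintp hintm]
        refine integral_congr_ae (Filter.Eventually.of_forall fun r => ?_)
        simp only [hGpdef, hGmdef]
        rcases le_total (G (x, t, a, r)) 0 with h | h
        · rw [max_eq_right h, max_eq_left (by linarith)]; ring
        · rw [max_eq_left h, max_eq_right (by linarith)]; ring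
      rw [hGeq, mul_sub]
      exact ((htendp.const_mul _).sub (htendm.const_mul _))
  -- sum over actions
  have := tendsto_finset_sum Finset.univ (fun a _ => hterm a)
  refine this.congr (fun M => ?_)
  rw [Finset.sum_sub_distrib]

end Machinery4

section PartA

lemma iid_variance {Z : Type*} [MeasurableSpace Z] (P : Measure Z) [IsProbabilityMeasure P]
    (f : Z → ℝ) (hf : Integrable f P) (hf2 : Integrable (fun z => f z ^ 2) P)
    (n : ℕ) (hn : 0 < n) :
    (n : ℝ) * (∫ D : Fin n → Z,
        ((n : ℝ)⁻¹ * ∑ i, f (D i)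
          - ∫ D' : Fin n → Z, (n : ℝ)⁻¹ * ∑ i, f (D' i) ∂(Measure.pi fun _ => P)) ^ 2
        ∂(Measure.pi fun _ => P))
    = (∫ z, f z ^ 2 ∂P) - (∫ z, f z ∂P) ^ 2 := by
  classical
  letI : MeasureSpace Z := ⟨P⟩
  haveI : IsProbabilityMeasure (volume : Measure Z) := ‹IsProbabilityMeasure P›
  have hvol : (Measure.pi fun _ : Fin n => P) = (volume : Measure (Fin n → Z)) := by
    rw [MeasureTheory.volume_pi]
    rfl
  have hn' : (n : ℝ) ≠ 0 := Nat.cast_ne_zero.mpr hn.ne'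
  -- single-coordinate integrals
  have single_int : ∀ (g : Z → ℝ), Integrable g P → ∀ i : Fin n,
      Integrable (fun D : Fin n → Z => g (D i)) (volume : Measure (Fin n → Z)) := by
    intro g hg i
    have heach : ∀ j : Fin n, Integrable (fun z => if j = i then g z else 1)
        (volume : Measure Z) := by
      intro j
      by_cases h : j = i
      · simp only [h, ↓reduceIte]; exact hg
      · simpa [h] using (integrable_const (1:ℝ))
    have hprod := MeasureTheory.Integrable.fintype_prod
      (f := fun j (z : Z) => if j = i then g z else 1) heach
    have hrepr : (fun D : Fin n → Z => ∏ j, (if j = i then g (D j) else 1))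
        = fun D => g (D i) := by
      funext D
      rw [Finset.prod_eq_single i (fun j _ hj => by simp [hj])
        (fun h => absurd (Finset.mem_univ i) h)]
      simp
    rw [← hrepr]
    exact hprod
  have single_val : ∀ (g : Z → ℝ), ∀ i : Fin n,
      ∫ D : Fin n → Z, g (D i) = ∫ z, g z ∂P := by
    intro g i
    have hrepr : (fun D : Fin n → Z => ∏ j, (if j = i then g (D j) else 1))
        = fun D => g (D i) := by
      funext D
      rw [Finset.prod_eq_single i (fun j _ hj => by simp [hj])
        (fun h => absurd (Finset.mem_univ i) h)]
      simp
    have h1 := MeasureTheory.integral_fintype_prod_volume_eq_prod (ι := Fin n)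
      (f := fun j (z : Z) => if j = i then g z else 1)
    rw [hrepr] at h1
    rw [h1, Finset.prod_eq_single i (fun j _ hj => by simp [hj])
      (fun h => absurd (Finset.mem_univ i) h)]
    simp only [if_pos rfl]
    rfl
  -- pair integrals for distinct coordinates
  have pair_val : ∀ (g1 g2 : Z → ℝ), ∀ i j : Fin n, j ≠ i →
      (∫ D : Fin n → Z, g1 (D i) * g2 (D j)) = (∫ z, g1 z ∂P) * (∫ z, g2 z ∂P) := by
    intro g1 g2 i j hij
    have hrepr : (fun D : Fin n → Z =>
        ∏ k, (if k = i then g1 (D k) else if k = j then g2 (D k) else 1))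
        = fun D => g1 (D i) * g2 (D j) := by
      funext D
      have hji : j ∈ Finset.univ.erase i := Finset.mem_erase.mpr ⟨hij, Finset.mem_univ j⟩
      rw [← Finset.mul_prod_erase Finset.univ _ (Finset.mem_univ i),
        ← Finset.mul_prod_erase _ _ hji]
      have h3 : ∏ k ∈ (Finset.univ.erase i).erase j,
          (if k = i then g1 (D k) else if k = j then g2 (D k) else 1) = 1 := by
        refine Finset.prod_eq_one fun k hk => ?_
        have hk1 : k ≠ j := (Finset.mem_erase.mp hk).1
        have hk2 : k ≠ i := (Finset.mem_erase.mp (Finset.mem_erase.mp hk).2).1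
        simp [hk1, hk2]
      rw [h3]
      have : (if j = i then g1 (D j) else if j = j then g2 (D j) else 1) = g2 (D j) := by
        simp [hij]
      rw [this]
      simp
    have h1 := MeasureTheory.integral_fintype_prod_volume_eq_prod (ι := Fin n)
      (f := fun k (z : Z) => if k = i then g1 z else if k = j then g2 z else 1)
    rw [hrepr] at h1
    rw [h1]
    have hji : j ∈ Finset.univ.erase i := Finset.mem_erase.mpr ⟨hij, Finset.mem_univ j⟩
    rw [← Finset.mul_prod_erase Finset.univ _ (Finset.mem_univ i),
      ← Finset.mul_prod_erase _ _ hji]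
    have h3 : ∏ k ∈ (Finset.univ.erase i).erase j,
        (∫ z : Z, if k = i then g1 z else if k = j then g2 z else 1) = 1 := by
      refine Finset.prod_eq_one fun k hk => ?_
      have hk1 : k ≠ j := (Finset.mem_erase.mp hk).1
      have hk2 : k ≠ i := (Finset.mem_erase.mp (Finset.mem_erase.mp hk).2).1
      simp [hk1, hk2]
    rw [h3]
    have h4 : (∫ z : Z, if j = i then g1 z else if j = j then g2 z else 1)
        = ∫ z, g2 z ∂P := by
      refine integral_congr_ae (Filter.Eventually.of_forall fun z => ?_) |>.trans rfl
      simp [hij]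
    have h5 : (∫ z : Z, if i = i then g1 z else if i = j then g2 z else 1)
        = ∫ z, g1 z ∂P := by
      refine integral_congr_ae (Filter.Eventually.of_forall fun z => ?_) |>.trans rfl
      simp
    rw [h4, h5]
    ring
  have pair_int : ∀ (g1 g2 : Z → ℝ), Integrable g1 P → Integrable g2 P → ∀ i j : Fin n,
      j ≠ i → Integrable (fun D : Fin n → Z => g1 (D i) * g2 (D j))
        (volume : Measure (Fin n → Z)) := by
    intro g1 g2 hg1 hg2 i j hij
    have heach : ∀ k : Fin n, Integrable
        (fun z : Z => if k = i then g1 z else if k = j then g2 z else 1)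
        (volume : Measure Z) := by
      intro k
      by_cases h1 : k = i
      · have heq : (fun z : Z => if k = i then g1 z else if k = j then g2 z else 1) = g1 := by
          funext z; simp [h1]
        rw [heq]; exact hg1
      · by_cases h2 : k = j
        · have heq : (fun z : Z => if k = i then g1 z else if k = j then g2 z else 1) = g2 := by
            funext z
            simp [h1, h2]
            intro hji
            exact absurd hji hij
          rw [heq]; exact hg2
        · have heq : (fun z : Z => if k = i then g1 z else if k = j then g2 z else 1)
              = fun _ => (1:ℝ) := by
            funext z; simp [h1, h2]
          rw [heq]; exact integrable_const (1:ℝ)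
    have hprod := MeasureTheory.Integrable.fintype_prod
      (f := fun k (z : Z) => if k = i then g1 z else if k = j then g2 z else 1) heach
    have hrepr : (fun D : Fin n → Z =>
        ∏ k, (if k = i then g1 (D k) else if k = j then g2 (D k) else 1))
        = fun D => g1 (D i) * g2 (D j) := by
      funext D
      have hji : j ∈ Finset.univ.erase i := Finset.mem_erase.mpr ⟨hij, Finset.mem_univ j⟩
      rw [← Finset.mul_prod_erase Finset.univ _ (Finset.mem_univ i),
        ← Finset.mul_prod_erase _ _ hji]
      have h3 : ∏ k ∈ (Finset.univ.erase i).erase j,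
          (if k = i then g1 (D k) else if k = j then g2 (D k) else 1) = 1 := by
        refine Finset.prod_eq_one fun k hk => ?_
        have hk1 : k ≠ j := (Finset.mem_erase.mp hk).1
        have hk2 : k ≠ i := (Finset.mem_erase.mp (Finset.mem_erase.mp hk).2).1
        simp [hk1, hk2]
      rw [h3]
      have : (if j = i then g1 (D j) else if j = j then g2 (D j) else 1) = g2 (D j) := by
        simp [hij]
      rw [this]
      simp
    rw [← hrepr]
    exact hprod
  -- set up the mean
  set m : ℝ := ∫ z, f z ∂P with hm
  have hmean : (∫ D' : Fin n → Z, (n : ℝ)⁻¹ * ∑ i, f (D' i) ∂(Measure.pi fun _ => P)) = m := by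
    rw [hvol, integral_const_mul, integral_finset_sum _ (fun i _ => single_int f hf i)]
    have : ∀ i : Fin n, (∫ D : Fin n → Z, f (D i)) = m := fun i => single_val f i
    rw [Finset.sum_congr rfl (fun i _ => this i), Finset.sum_const]
    simp
    field_simp
  -- centered function
  set h : Z → ℝ := fun z => f z - m with hhdef
  have hh : Integrable h P := hf.sub (integrable_const m)
  have hhsq_eq : (fun z => h z * h z) = fun z => (f z ^ 2 - 2 * m * f z) + m ^ 2 := by
    funext z; simp only [hhdef]; ring
  have hh2 : Integrable (fun z => h z * h z) P := by
    rw [hhsq_eq]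
    exact (hf2.sub (hf.const_mul _)).add (integrable_const _)
  have hh0 : ∫ z, h z ∂P = 0 := by
    simp only [hhdef]
    rw [integral_sub hf (integrable_const m)]
    simp [hm]
  set v : ℝ := ∫ z, h z * h z ∂P with hv
  have hveq : v = (∫ z, f z ^ 2 ∂P) - m ^ 2 := by
    have ha : Integrable (fun z => f z ^ 2 - 2 * m * f z) P := hf2.sub (hf.const_mul _)
    rw [hv, hhsq_eq, integral_add ha (integrable_const _),
      integral_sub hf2 (hf.const_mul _), integral_const_mul]
    simp only [integral_const, measure_univ, probReal_univ, ENNReal.toReal_one, smul_eq_mul, one_mul, ← hm]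
    ring
  -- rewrite the integrand
  have hrw : ∀ D : Fin n → Z, ((n : ℝ)⁻¹ * ∑ i, f (D i) - m) ^ 2
      = (n : ℝ)⁻¹ ^ 2 * ∑ i : Fin n, ∑ j : Fin n, h (D i) * h (D j) := by
    intro D
    have h1 : ∑ i : Fin n, h (D i) = (∑ i : Fin n, f (D i)) - n * m := by
      simp only [hhdef]
      rw [Finset.sum_sub_distrib, Finset.sum_const]
      simp [mul_comm]
    have h2 : (n : ℝ)⁻¹ * ∑ i, f (D i) - m = (n : ℝ)⁻¹ * ∑ i : Fin n, h (D i) := by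
      rw [h1, mul_sub]
      field_simp
    rw [h2, mul_pow, sq (∑ i : Fin n, h (D i)), Finset.sum_mul_sum]
  have hint_term : ∀ i j : Fin n, Integrable (fun D : Fin n → Z => h (D i) * h (D j))
      (volume : Measure (Fin n → Z)) := by
    intro i j
    by_cases hij : j = i
    · subst hij
      exact single_int (fun z => h z * h z) hh2 j
    · exact pair_int h h hh hh i j hij
  have hval_term : ∀ i j : Fin n, (∫ D : Fin n → Z, h (D i) * h (D j))
      = if j = i then v else 0 := by
    intro i j
    by_cases hij : j = i
    · subst hij
      rw [if_pos rfl, hv]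
      exact single_val (fun z => h z * h z) j
    · rw [if_neg hij, pair_val h h i j hij, hh0]
      ring
  -- put it together
  rw [hmean, hvol]
  have hcongr : (∫ D : Fin n → Z, ((n : ℝ)⁻¹ * ∑ i, f (D i) - m) ^ 2)
      = (n : ℝ)⁻¹ ^ 2 * ∑ i : Fin n, ∑ j : Fin n, (∫ D : Fin n → Z, h (D i) * h (D j)) := by
    rw [integral_congr_ae (Filter.Eventually.of_forall hrw), integral_const_mul]
    congr 1
    rw [integral_finset_sum _ (fun i _ => integrable_finset_sum _ (fun j _ => hint_term i j))]
    exact Finset.sum_congr rfl fun i _ =>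
      integral_finset_sum _ (fun j _ => hint_term i j)
  rw [hcongr]
  have hsum : ∑ i : Fin n, ∑ j : Fin n, (∫ D : Fin n → Z, h (D i) * h (D j))
      = n * v := by
    rw [Finset.sum_congr rfl (fun i _ => Finset.sum_congr rfl (fun j _ => hval_term i j))]
    have : ∀ i : Fin n, (∑ j : Fin n, if j = i then v else 0) = v := fun i => by
      rw [Finset.sum_ite_eq' Finset.univ i (fun _ => v)]
      simp
    rw [Finset.sum_congr rfl (fun i _ => this i), Finset.sum_const]
    simp [mul_comm]
  rw [hsum, hveq]
  field_simp

end PartA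

section Eval

variable {𝒳 : Type*} {𝒜 : Type*} [Fintype 𝒜] {C : Type*} [DecidableEq C]

/-- pointwise evaluation of the two inner sums, given slice integrability. -/
lemma eval_inner
    (T : ℝ) (π0 πe q fhat : 𝒳 → ℝ → 𝒜 → ℝ)
    (hπ0nonneg : ∀ x t a, 0 ≤ π0 x t a) (hπ0sum : ∀ x t, ∑ a, π0 x t a = 1)
    (hπenonneg : ∀ x t a, 0 ≤ πe x t a)
    (κ : 𝒳 → ℝ → 𝒜 → Measure ℝ) (hκ : ∀ x t a, IsProbabilityMeasure (κ x t a))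
    (hq : ∀ x t a, ∫ r, r ∂(κ x t a) = q x t a)
    (σ2 : 𝒳 → ℝ → 𝒜 → ℝ)
    (hσ2 : ∀ x t a, σ2 x t a = ∫ r, (r - q x t a) ^ 2 ∂(κ x t a))
    (φ : ℝ → C) (t' : ℝ) (pφ : ℝ) (hpφpos : 0 < pφ)
    (hcommon : ∀ x a, ∀ t ∈ Set.Icc 0 T, 0 < πe x t' a → 0 < π0 x t a)
    (hCPC : ∀ x a, ∀ t ∈ Set.Icc 0 T, φ t = φ t' →
      q x t a - q x t' a = fhat x t a - fhat x t' a)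
    (est : 𝒳 × ℝ × 𝒜 × ℝ → ℝ)
    (hest : ∀ x t a r, est (x, t, a, r) =
      (if φ t = φ t' then (1 : ℝ) else 0) / pφ * (πe x t' a / π0 x t a)
          * (r - fhat x t a)
        + ∑ a', πe x t' a' * fhat x t' a')
    (x : 𝒳) (t : ℝ) (htIcc : t ∈ Set.Icc 0 T)
    (hsl : ∀ a, 0 < π0 x t a → Integrable (fun r => est (x, t, a, r)) (κ x t a)
      ∧ Integrable (fun r => est (x, t, a, r) ^ 2) (κ x t a)) :
    (∑ a, π0 x t a * (∫ r, est (x, t, a, r) ∂(κ x t a)))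
      = (if φ t = φ t' then (1 : ℝ) else 0) / pφ
          * (∑ a, πe x t' a * (q x t' a - fhat x t' a))
        + (∑ a', πe x t' a' * fhat x t' a')
    ∧ (∑ a, π0 x t a * (∫ r, est (x, t, a, r) ^ 2 ∂(κ x t a)))
      = (∑ a, π0 x t a * (((if φ t = φ t' then (1 : ℝ) else 0) / pφ
            * (πe x t' a / π0 x t a)) ^ 2 * σ2 x t a))
        + ((if φ t = φ t' then (1 : ℝ) else 0) / pφ) ^ 2 *
            ((∑ a, π0 x t a * ((πe x t' a / π0 x t a) * (q x t' a - fhat x t' a)) ^ 2)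
              - (∑ a, π0 x t a * ((πe x t' a / π0 x t a) * (q x t' a - fhat x t' a))) ^ 2)
        + ((if φ t = φ t' then (1 : ℝ) else 0) / pφ) ^ 2
            * (∑ a, πe x t' a * (q x t' a - fhat x t' a)) ^ 2
        + 2 * (((if φ t = φ t' then (1 : ℝ) else 0) / pφ)
            * ((∑ a, πe x t' a * (q x t' a - fhat x t' a))
              * (∑ a', πe x t' a' * fhat x t' a')))
        + (∑ a', πe x t' a' * fhat x t' a') ^ 2 := by
  classical
  set I : ℝ := (if φ t = φ t' then (1 : ℝ) else 0) / pφ with hIdef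
  set Fx : ℝ := ∑ a', πe x t' a' * fhat x t' a' with hFdef
  have hπe0 : ∀ a, π0 x t a = 0 → πe x t' a = 0 := by
    intro a h0
    by_contra hne
    have hpos : 0 < πe x t' a := lt_of_le_of_ne (hπenonneg x t' a) (Ne.symm hne)
    have := hcommon x a t htIcc hpos
    rw [h0] at this
    exact lt_irrefl 0 this
  -- the CPC consequence
  have hCPCd : φ t = φ t' → ∀ a, q x t a - fhat x t a = q x t' a - fhat x t' a := by
    intro hφ a
    have := hCPC x a t htIcc hφ
    linarith
  have hI0 : φ t ≠ φ t' → I = 0 := by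
    intro hφ
    simp [hIdef, hφ]
  -- per-action evaluation of both integrals (in the case π0 > 0)
  have hslice : ∀ a, 0 < π0 x t a →
      (∫ r, est (x, t, a, r) ∂(κ x t a))
        = I * (πe x t' a / π0 x t a) * (q x t a - fhat x t a) + Fx
      ∧ (∫ r, est (x, t, a, r) ^ 2 ∂(κ x t a))
        = (I * (πe x t' a / π0 x t a)) ^ 2 * σ2 x t a
          + (I * (πe x t' a / π0 x t a) * (q x t a - fhat x t a) + Fx) ^ 2 := by
    intro a hpos
    haveI := hκ x t a
    set c1 : ℝ := I * (πe x t' a / π0 x t a) with hc1def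
    set d : ℝ := Fx - c1 * fhat x t a with hddef
    have heq : (fun r => est (x, t, a, r)) = fun r => c1 * r + d := by
      funext r
      rw [hest x t a r]
      simp only [hc1def, hddef, hIdef, hFdef]
      ring
    have heq2 : (fun r => est (x, t, a, r) ^ 2) = fun r => (c1 * r + d) ^ 2 := by
      funext r
      rw [hest x t a r]
      simp only [hc1def, hddef, hIdef, hFdef]
      ring
    have hint1 : Integrable (fun r => c1 * r + d) (κ x t a) := by
      rw [← heq]; exact (hsl a hpos).1
    have hint2 : Integrable (fun r => (c1 * r + d) ^ 2) (κ x t a) := by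
      rw [← heq2]; exact (hsl a hpos).2
    obtain ⟨e1, e2⟩ := affine_integral_eval (κ x t a) c1 d hint1 hint2
    rw [hq x t a] at e1 e2
    rw [← hσ2 x t a] at e2
    constructor
    · rw [show (∫ r, est (x, t, a, r) ∂(κ x t a)) = ∫ r, c1 * r + d ∂(κ x t a) by rw [heq],
        e1]
      simp only [hddef]
      ring
    · rw [show (∫ r, est (x, t, a, r) ^ 2 ∂(κ x t a))
          = ∫ r, (c1 * r + d) ^ 2 ∂(κ x t a) by rw [heq2], e2]
      simp only [hddef]
      ring
  constructor
  · -- first moment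
    have perA : ∀ a, π0 x t a * (∫ r, est (x, t, a, r) ∂(κ x t a))
        = I * (πe x t' a * (q x t a - fhat x t a)) + π0 x t a * Fx := by
      intro a
      rcases (hπ0nonneg x t a).eq_or_lt with h0 | hpos
      · rw [← h0, hπe0 a h0.symm]
        ring
      · rw [(hslice a hpos).1]
        have hne : π0 x t a ≠ 0 := ne_of_gt hpos
        field_simp
    rw [Finset.sum_congr rfl (fun a _ => perA a), Finset.sum_add_distrib,
      ← Finset.mul_sum, ← Finset.sum_mul, hπ0sum x t, one_mul]
    congr 1
    by_cases hφ : φ t = φ t'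
    · congr 1
      exact Finset.sum_congr rfl fun a _ => by rw [hCPCd hφ a]
    · rw [hI0 hφ]
      ring
  · -- second moment
    have perA : ∀ a, π0 x t a * (∫ r, est (x, t, a, r) ^ 2 ∂(κ x t a))
        = π0 x t a * ((I * (πe x t' a / π0 x t a)) ^ 2 * σ2 x t a)
          + I ^ 2 * (π0 x t a * ((πe x t' a / π0 x t a) * (q x t' a - fhat x t' a)) ^ 2)
          + (2 * (I * Fx)) * (π0 x t a * ((πe x t' a / π0 x t a) * (q x t' a - fhat x t' a)))
          + π0 x t a * Fx ^ 2 := by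
      intro a
      rcases (hπ0nonneg x t a).eq_or_lt with h0 | hpos
      · rw [← h0]
        simp
      · rw [(hslice a hpos).2]
        have hc1D : I * (πe x t' a / π0 x t a) * (q x t a - fhat x t a)
            = I * (πe x t' a / π0 x t a) * (q x t' a - fhat x t' a) := by
          by_cases hφ : φ t = φ t'
          · rw [hCPCd hφ a]
          · rw [hI0 hφ]; ring
        rw [mul_add, add_sq (I * (πe x t' a / π0 x t a) * (q x t a - fhat x t a)) Fx,
          hc1D]
        ring
    rw [Finset.sum_congr rfl (fun a _ => perA a)]
    rw [Finset.sum_add_distrib, Finset.sum_add_distrib, Finset.sum_add_distrib,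
      ← Finset.mul_sum, ← Finset.mul_sum, ← Finset.sum_mul, hπ0sum x t, one_mul]
    -- identify the support-reduced sum
    have hSsum : (∑ a, π0 x t a * ((πe x t' a / π0 x t a) * (q x t' a - fhat x t' a)))
        = ∑ a, πe x t' a * (q x t' a - fhat x t' a) := by
      refine Finset.sum_congr rfl fun a _ => ?_
      rcases (hπ0nonneg x t a).eq_or_lt with h0 | hpos
      · rw [← h0, hπe0 a h0.symm]
        ring
      · have hne : π0 x t a ≠ 0 := ne_of_gt hpos
        field_simp
    rw [hSsum]
    ring

end Eval

section J1

lemma J1_eq_one {C : Type*} [DecidableEq C]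
    (μt : Measure ℝ) [IsProbabilityMeasure μt] (T : ℝ) (hμtsupp : μt (Set.Icc 0 T) = 1)
    (φ : ℝ → C) (t' pφ : ℝ)
    (hpφdef : pφ = (μt ({s | φ s = φ t'} ∩ Set.Icc 0 T)).toReal) (hpφpos : 0 < pφ)
    (hIm : AEStronglyMeasurable (fun t => if φ t = φ t' then (1:ℝ) else 0) μt) :
    ∫ t, (if φ t = φ t' then (1 : ℝ) else 0) / pφ ∂μt = 1 := by
  classical
  have hIccc : μt (Set.Icc 0 T)ᶜ = 0 := by
    rw [measure_compl measurableSet_Icc (measure_ne_top _ _), hμtsupp, measure_univ]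
    simp
  have haeIcc : ∀ᵐ t ∂μt, t ∈ Set.Icc 0 T := by
    have hset : {t : ℝ | ¬ t ∈ Set.Icc 0 T} = (Set.Icc 0 T)ᶜ := rfl
    rw [MeasureTheory.ae_iff, hset]
    exact hIccc
  set g : ℝ → ℝ := hIm.mk _ with hgdef
  have hgsm : StronglyMeasurable g := hIm.stronglyMeasurable_mk
  have hae : (fun t => if φ t = φ t' then (1:ℝ) else 0) =ᵐ[μt] g := hIm.ae_eq_mk
  set A1 : Set ℝ := {s | g s = 1} with hA1def
  have hA1meas : MeasurableSet A1 := hgsm.measurable (measurableSet_singleton (1:ℝ))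
  have step1 : ∫ t, (if φ t = φ t' then (1:ℝ) else 0) ∂μt
      = ∫ t, Set.indicator A1 (fun _ => (1:ℝ)) t ∂μt := by
    refine integral_congr_ae ?_
    filter_upwards [hae] with t ht
    by_cases hφ : φ t = φ t'
    · have hg1 : g t = 1 := by rw [← ht]; simp [hφ]
      rw [Set.indicator_of_mem (by exact hg1 : t ∈ A1)]
      simp [hφ]
    · have hg0 : g t = 0 := by rw [← ht]; simp [hφ]
      have : t ∉ A1 := by
        simp only [hA1def, Set.mem_setOf_eq, hg0]
        norm_num
      rw [Set.indicator_of_notMem this]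
      simp [hφ]
  have step2 : ∫ t, Set.indicator A1 (fun _ => (1:ℝ)) t ∂μt = (μt A1).toReal := by
    rw [integral_indicator_const (1:ℝ) hA1meas]
    simp
    rfl
  have step3 : μt A1 = μt ({s | φ s = φ t'} ∩ Set.Icc 0 T) := by
    refine measure_congr ?_
    filter_upwards [hae, haeIcc] with t ht htIcc
    have : (t ∈ A1) = (t ∈ {s | φ s = φ t'} ∩ Set.Icc 0 T) := by
      apply propext
      constructor
      · intro h1
        have hg1 : g t = 1 := h1
        have hf1 : (if φ t = φ t' then (1:ℝ) else 0) = 1 := by rw [ht, hg1]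
        by_cases hφ : φ t = φ t'
        · exact ⟨hφ, htIcc⟩
        · rw [if_neg hφ] at hf1; norm_num at hf1
      · rintro ⟨hφ, -⟩
        have hφ' : φ t = φ t' := hφ
        show g t = 1
        rw [← ht]
        simp [hφ']
    exact this
  rw [integral_div, step1, step2, step3, ← hpφdef]
  field_simp

end J1

section Splits

variable {α : Type*} [MeasurableSpace α] {μ : Measure α}

lemma integral_add3 (f1 f2 f3 : α → ℝ) (h1 : Integrable f1 μ) (h2 : Integrable f2 μ)
    (h3 : Integrable f3 μ) :
    ∫ a, (f1 a + f2 a + f3 a) ∂μ = (∫ a, f1 a ∂μ) + (∫ a, f2 a ∂μ) + ∫ a, f3 a ∂μ := by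
  have h12 : Integrable (fun a => f1 a + f2 a) μ := h1.add h2
  calc ∫ a, (f1 a + f2 a + f3 a) ∂μ
      = (∫ a, (f1 a + f2 a) ∂μ) + ∫ a, f3 a ∂μ := integral_add h12 h3
    _ = _ := by rw [integral_add h1 h2]

lemma integral_add4 (f1 f2 f3 f4 : α → ℝ) (h1 : Integrable f1 μ) (h2 : Integrable f2 μ)
    (h3 : Integrable f3 μ) (h4 : Integrable f4 μ) :
    ∫ a, (f1 a + f2 a + f3 a + f4 a) ∂μ
      = (∫ a, f1 a ∂μ) + (∫ a, f2 a ∂μ) + (∫ a, f3 a ∂μ) + ∫ a, f4 a ∂μ := by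
  have h123 : Integrable (fun a => f1 a + f2 a + f3 a) μ := (h1.add h2).add h3
  calc ∫ a, (f1 a + f2 a + f3 a + f4 a) ∂μ
      = (∫ a, (f1 a + f2 a + f3 a) ∂μ) + ∫ a, f4 a ∂μ := integral_add h123 h4
    _ = _ := by rw [integral_add3 f1 f2 f3 h1 h2 h3]

lemma integral_add5 (f1 f2 f3 f4 f5 : α → ℝ) (h1 : Integrable f1 μ) (h2 : Integrable f2 μ)
    (h3 : Integrable f3 μ) (h4 : Integrable f4 μ) (h5 : Integrable f5 μ) :
    ∫ a, (f1 a + f2 a + f3 a + f4 a + f5 a) ∂μ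
      = (∫ a, f1 a ∂μ) + (∫ a, f2 a ∂μ) + (∫ a, f3 a ∂μ) + (∫ a, f4 a ∂μ)
        + ∫ a, f5 a ∂μ := by
  have h1234 : Integrable (fun a => f1 a + f2 a + f3 a + f4 a) μ :=
    ((h1.add h2).add h3).add h4
  calc ∫ a, (f1 a + f2 a + f3 a + f4 a + f5 a) ∂μ
      = (∫ a, (f1 a + f2 a + f3 a + f4 a) ∂μ) + ∫ a, f5 a ∂μ := integral_add h1234 h5
    _ = _ := by rw [integral_add4 f1 f2 f3 f4 h1 h2 h3 h4]

end Splits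

/-- **Variance of the OPFV estimator (Proposition 3.4).**
Under Common Support, Common Time Feature Support, Conditional Pairwise Correctness and a
stationary context distribution (modeled as the product `μx.prod μt`),
`n · Var[V̂^OPFV_{t'}(π_e;𝒟)]` decomposes into the four terms of Proposition 3.4. -/
theorem opfv_variance
    {𝒳 : Type*} [MeasurableSpace 𝒳] {𝒜 : Type*} [Fintype 𝒜] [MeasurableSpace 𝒜]
    {C : Type*} [DecidableEq C]
    -- time horizon of the logged data
    (T : ℝ) (hT : 0 < T)
    -- stationary context distribution p(x) and time distribution p(t), supported on [0,T]
    (μx : Measure 𝒳) [IsProbabilityMeasure μx]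
    (μt : Measure ℝ) [IsProbabilityMeasure μt]
    (hμtsupp : μt (Set.Icc 0 T) = 1)
    -- logging policy, evaluation policy, expected reward, regression model
    (π0 πe q fhat : 𝒳 → ℝ → 𝒜 → ℝ)
    (hπ0nonneg : ∀ x t a, 0 ≤ π0 x t a) (hπ0sum : ∀ x t, ∑ a, π0 x t a = 1)
    (hπenonneg : ∀ x t a, 0 ≤ πe x t a) (hπesum : ∀ x t, ∑ a, πe x t a = 1)
    -- reward distributions with conditional mean q and conditional variance σ²
    (κ : 𝒳 → ℝ → 𝒜 → Measure ℝ) (hκ : ∀ x t a, IsProbabilityMeasure (κ x t a))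
    (hq : ∀ x t a, ∫ r, r ∂(κ x t a) = q x t a)
    (σ2 : 𝒳 → ℝ → 𝒜 → ℝ)
    (hσ2 : ∀ x t a, σ2 x t a = ∫ r, (r - q x t a) ^ 2 ∂(κ x t a))
    -- time feature function and target time
    (φ : ℝ → C) (t' : ℝ) (ht' : T < t')
    -- marginal probability of the target time feature, p(φ(t'))
    (pφ : ℝ) (hpφdef : pφ = (μt ({s | φ s = φ t'} ∩ Set.Icc 0 T)).toReal)
    -- Common Time Feature Support
    (hpφpos : 0 < pφ)
    -- Common Support
    (hcommon : ∀ x a, ∀ t ∈ Set.Icc 0 T, 0 < πe x t' a → 0 < π0 x t a)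
    -- Conditional Pairwise Correctness
    (hCPC : ∀ x a, ∀ t ∈ Set.Icc 0 T, φ t = φ t' →
      q x t a - q x t' a = fhat x t a - fhat x t' a)
    -- logged data: n i.i.d. draws from P, the joint law of (x, t, a, r)
    (n : ℕ) (hn : 0 < n)
    (P : Measure (𝒳 × ℝ × 𝒜 × ℝ)) [IsProbabilityMeasure P]
    (hP : ∀ g : 𝒳 × ℝ × 𝒜 × ℝ → ℝ, Integrable g P →
      ∫ z, g z ∂P
        = ∫ x, (∫ t, (∑ a, π0 x t a * (∫ r, g (x, t, a, r) ∂(κ x t a))) ∂μt) ∂μx)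
    -- per-sample term of the OPFV estimator
    (est : 𝒳 × ℝ × 𝒜 × ℝ → ℝ)
    (hest : ∀ x t a r, est (x, t, a, r) =
      (if φ t = φ t' then (1 : ℝ) else 0) / pφ * (πe x t' a / π0 x t a)
          * (r - fhat x t a)
        + ∑ a', πe x t' a' * fhat x t' a')
    -- integrability / square-integrability (all quantities are assumed well-defined)
    (hInt : Integrable est P)
    (hInt2 : Integrable (fun z => est z ^ 2) P)
    (hVInt : Integrable (fun x => ∑ a, πe x t' a * q x t' a) μx)
    (hVInt2 : Integrable (fun x => (∑ a, πe x t' a * q x t' a) ^ 2) μx)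
    (hΔInt2 : Integrable (fun x => (∑ a, πe x t' a * (q x t' a - fhat x t' a)) ^ 2) μx)
    (hAInt : Integrable (fun p : 𝒳 × ℝ =>
      ∑ a, π0 p.1 p.2 a * (((if φ p.2 = φ t' then (1 : ℝ) else 0) / pφ
        * (πe p.1 t' a / π0 p.1 p.2 a)) ^ 2 * σ2 p.1 p.2 a)) (μx.prod μt))
    (hBInt : Integrable (fun p : 𝒳 × ℝ =>
      ((if φ p.2 = φ t' then (1 : ℝ) else 0) / pφ) ^ 2 *
        ((∑ a, π0 p.1 p.2 a
            * ((πe p.1 t' a / π0 p.1 p.2 a) * (q p.1 t' a - fhat p.1 t' a)) ^ 2)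
          - (∑ a, π0 p.1 p.2 a
              * ((πe p.1 t' a / π0 p.1 p.2 a) * (q p.1 t' a - fhat p.1 t' a))) ^ 2))
      (μx.prod μt)) :
    -- n · Var[V̂^OPFV] equals the four-term decomposition
    (n : ℝ) * (∫ D : Fin n → 𝒳 × ℝ × 𝒜 × ℝ,
        ((n : ℝ)⁻¹ * ∑ i, est (D i)
          - ∫ D' : Fin n → 𝒳 × ℝ × 𝒜 × ℝ, (n : ℝ)⁻¹ * ∑ i, est (D' i)
              ∂(Measure.pi fun _ => P)) ^ 2
        ∂(Measure.pi fun _ => P))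
    = -- (1) E_{p(x,t) π₀(a|x,t)}[ ((𝕀_φ/pφ) (πe/π₀))² σ²(x,t,a) ]
      (∫ x, (∫ t, (∑ a, π0 x t a * (((if φ t = φ t' then (1 : ℝ) else 0) / pφ
          * (πe x t' a / π0 x t a)) ^ 2 * σ2 x t a)) ∂μt) ∂μx)
      -- (2) E_{p(x,t)}[ (𝕀_φ/pφ)² · Var_{π₀(a|x,t)}[ (πe/π₀) Δ_{q,f̂}(x,t',a) ] ]
      + (∫ x, (∫ t, ((if φ t = φ t' then (1 : ℝ) else 0) / pφ) ^ 2 *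
            ((∑ a, π0 x t a
                * ((πe x t' a / π0 x t a) * (q x t' a - fhat x t' a)) ^ 2)
              - (∑ a, π0 x t a
                  * ((πe x t' a / π0 x t a) * (q x t' a - fhat x t' a))) ^ 2) ∂μt) ∂μx)
      -- (3) Var_{p(t)}[𝕀_φ/pφ] · E_{p(x)}[ (E_{πe(a|x,t')}[Δ_{q,f̂}(x,t',a)])² ]
      + ((∫ t, ((if φ t = φ t' then (1 : ℝ) else 0) / pφ) ^ 2 ∂μt)
          - (∫ t, (if φ t = φ t' then (1 : ℝ) else 0) / pφ ∂μt) ^ 2)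
        * (∫ x, (∑ a, πe x t' a * (q x t' a - fhat x t' a)) ^ 2 ∂μx)
      -- (4) Var_{p(x)}[ E_{πe(a|x,t')}[q(x,t',a)] ]
      + ((∫ x, (∑ a, πe x t' a * q x t' a) ^ 2 ∂μx)
          - (∫ x, ∑ a, πe x t' a * q x t' a ∂μx) ^ 2) := by
  classical
  have hpφne : pφ ≠ 0 := ne_of_gt hpφpos
  have hIccc : μt (Set.Icc 0 T)ᶜ = 0 := by
    rw [measure_compl measurableSet_Icc (measure_ne_top _ _), hμtsupp, measure_univ]
    simp
  have haeIcc : ∀ᵐ t ∂μt, t ∈ Set.Icc 0 T := by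
    have hset : {t : ℝ | ¬ t ∈ Set.Icc 0 T} = (Set.Icc 0 T)ᶜ := rfl
    rw [MeasureTheory.ae_iff, hset]
    exact hIccc
  have hSF : ∀ x, (∑ a, πe x t' a * (q x t' a - fhat x t' a))
      + (∑ a', πe x t' a' * fhat x t' a') = ∑ a, πe x t' a * q x t' a := by
    intro x
    rw [← Finset.sum_add_distrib]
    exact Finset.sum_congr rfl fun a _ => by ring
  -- measurable version of est
  have hestm : AEStronglyMeasurable est P := hInt.aestronglyMeasurable
  set G : 𝒳 × ℝ × 𝒜 × ℝ → ℝ := hestm.mk est with hGdef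
  have hGsm : StronglyMeasurable G := hestm.stronglyMeasurable_mk
  have hGm : Measurable G := hGsm.measurable
  have hGae : est =ᵐ[P] G := hestm.ae_eq_mk
  have hN0 : P {z | ¬ est z = G z} = 0 := MeasureTheory.ae_iff.mp hGae
  obtain ⟨N, hNsub, hNmeas, hPN⟩ := exists_measurable_superset_of_null hN0
  have TR := null_transfer μx μt π0 κ P hπ0nonneg hπ0sum hκ hP N hNmeas hPN
  -- slice integrability facts
  have hW1int : Integrable (fun z => |G z|) P := by
    refine hInt.abs.congr ?_
    filter_upwards [hGae] with z hz
    rw [hz]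
  have SL1 := slice_integrable μx μt π0 κ P hπ0nonneg hπ0sum hκ hP
    (fun z => |G z|) hGm.abs (fun z => abs_nonneg _) hW1int
  have hW2int : Integrable (fun z => G z * G z) P := by
    refine hInt2.congr ?_
    filter_upwards [hGae] with z hz
    rw [hz]
    ring
  have SL2 := slice_integrable μx μt π0 κ P hπ0nonneg hπ0sum hκ hP
    (fun z => G z * G z) (hGm.mul hGm) (fun z => mul_self_nonneg _) hW2int
  have hGsl : ∀ᵐ x ∂μx, ∀ᵐ t ∂μt, ∀ a, 0 < π0 x t a →
      Integrable (fun r => G (x, t, a, r)) (κ x t a) := by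
    filter_upwards [SL1] with x hx
    filter_upwards [hx] with t ht
    intro a ha
    exact (ht a ha).mono' (measurable_slice hGm x t a).aestronglyMeasurable
      (Filter.Eventually.of_forall fun r => le_of_eq (Real.norm_eq_abs _))
  -- master a.e. fact
  have AEfact : ∀ᵐ x ∂μx, ∀ᵐ t ∂μt, t ∈ Set.Icc 0 T ∧ ∀ a, 0 < π0 x t a →
      Integrable (fun r => est (x, t, a, r)) (κ x t a)
      ∧ Integrable (fun r => est (x, t, a, r) ^ 2) (κ x t a)
      ∧ (fun r => est (x, t, a, r)) =ᵐ[κ x t a] (fun r => G (x, t, a, r)) := by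
    filter_upwards [TR, SL1, SL2] with x h1 h2 h3
    filter_upwards [h1, h2, h3, haeIcc] with t k1 k2 k3 k4
    refine ⟨k4, fun a ha => ?_⟩
    have hκN : κ x t a {r | (x, t, a, r) ∈ N} = 0 := k1 a ha
    have hsliceEq : (fun r => est (x, t, a, r)) =ᵐ[κ x t a] (fun r => G (x, t, a, r)) := by
      refine MeasureTheory.ae_iff.mpr (measure_mono_null ?_ hκN)
      intro r hr
      exact hNsub hr
    have hGsl1 : Integrable (fun r => G (x, t, a, r)) (κ x t a) :=
      (k2 a ha).mono' (measurable_slice hGm x t a).aestronglyMeasurable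
        (Filter.Eventually.of_forall fun r => le_of_eq (Real.norm_eq_abs _))
    have hGsl2 : Integrable (fun r => G (x, t, a, r) * G (x, t, a, r)) (κ x t a) := k3 a ha
    have hsq : (fun r => G (x, t, a, r) * G (x, t, a, r))
        =ᵐ[κ x t a] (fun r => est (x, t, a, r) ^ 2) := by
      filter_upwards [hsliceEq] with r hr
      rw [hr]
      ring
    exact ⟨hGsl1.congr hsliceEq.symm, hGsl2.congr hsq, hsliceEq⟩
  -- the iid reduction
  rw [iid_variance P est hInt hInt2 n hn]
  -- first moment identity components (shared by both cases)
  have hM1' : ∫ z, est z ∂P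
      = ∫ x, (∫ t, (∑ a, π0 x t a * (∫ r, est (x, t, a, r) ∂(κ x t a))) ∂μt) ∂μx :=
    hP est hInt
  have hM2' : ∫ z, est z ^ 2 ∂P
      = ∫ x, (∫ t, (∑ a, π0 x t a * (∫ r, est (x, t, a, r) ^ 2 ∂(κ x t a))) ∂μt) ∂μx :=
    hP (fun z => est z ^ 2) hInt2
  have hAslice : ∀ᵐ x ∂μx, Integrable (fun t =>
      ∑ a, π0 x t a * (((if φ t = φ t' then (1 : ℝ) else 0) / pφ
        * (πe x t' a / π0 x t a)) ^ 2 * σ2 x t a)) μt := hAInt.prod_right_ae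
  have hBslice : ∀ᵐ x ∂μx, Integrable (fun t =>
      ((if φ t = φ t' then (1 : ℝ) else 0) / pφ) ^ 2 *
        ((∑ a, π0 x t a * ((πe x t' a / π0 x t a) * (q x t' a - fhat x t' a)) ^ 2)
          - (∑ a, π0 x t a
              * ((πe x t' a / π0 x t a) * (q x t' a - fhat x t' a))) ^ 2)) μt :=
    hBInt.prod_right_ae
  have hαint : Integrable (fun x => ∫ t,
      (∑ a, π0 x t a * (((if φ t = φ t' then (1 : ℝ) else 0) / pφ
        * (πe x t' a / π0 x t a)) ^ 2 * σ2 x t a)) ∂μt) μx := hAInt.integral_prod_left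
  have hγint : Integrable (fun x => ∫ t,
      ((if φ t = φ t' then (1 : ℝ) else 0) / pφ) ^ 2 *
        ((∑ a, π0 x t a * ((πe x t' a / π0 x t a) * (q x t' a - fhat x t' a)) ^ 2)
          - (∑ a, π0 x t a
              * ((πe x t' a / π0 x t a) * (q x t' a - fhat x t' a))) ^ 2) ∂μt) μx :=
    hBInt.integral_prod_left
  by_cases hIm : AEStronglyMeasurable (fun t => if φ t = φ t' then (1:ℝ) else 0) μt
  · -- good case : the time-feature indicator is a.e. measurable
    have hJ1 : (∫ t, (if φ t = φ t' then (1 : ℝ) else 0) / pφ ∂μt) = 1 :=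
      J1_eq_one μt T hμtsupp φ t' pφ hpφdef hpφpos hIm
    have hf0int : Integrable (fun t => if φ t = φ t' then (1:ℝ) else 0) μt := by
      refine integrable_of_bounded (c := 1) hIm (fun t => ?_)
      by_cases hφ : φ t = φ t' <;> simp [hφ]
    have hIfnint : Integrable (fun t => (if φ t = φ t' then (1:ℝ) else 0) / pφ) μt :=
      hf0int.div_const pφ
    have hIfn2int : Integrable
        (fun t => ((if φ t = φ t' then (1:ℝ) else 0) / pφ) ^ 2) μt := by
      have heq : (fun t => ((if φ t = φ t' then (1:ℝ) else 0) / pφ) ^ 2)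
          = fun t => (if φ t = φ t' then (1:ℝ) else 0) / pφ ^ 2 := by
        funext t
        by_cases hφ : φ t = φ t' <;> simp [hφ] <;> ring
      rw [heq]
      exact hf0int.div_const _
    -- inner integrals, first moment
    have Minner1 : ∀ᵐ x ∂μx,
        (∫ t, (∑ a, π0 x t a * (∫ r, est (x, t, a, r) ∂(κ x t a))) ∂μt)
          = ∑ a, πe x t' a * q x t' a := by
      filter_upwards [AEfact] with x hx
      have h1 : (fun t => ∑ a, π0 x t a * (∫ r, est (x, t, a, r) ∂(κ x t a)))
          =ᵐ[μt] (fun t => (if φ t = φ t' then (1 : ℝ) else 0) / pφ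
            * (∑ a, πe x t' a * (q x t' a - fhat x t' a))
            + (∑ a', πe x t' a' * fhat x t' a')) := by
        filter_upwards [hx] with t ht
        exact (eval_inner T π0 πe q fhat hπ0nonneg hπ0sum hπenonneg κ hκ hq σ2 hσ2
          φ t' pφ hpφpos hcommon hCPC est hest x t ht.1
          (fun a ha => ⟨(ht.2 a ha).1, (ht.2 a ha).2.1⟩)).1
      rw [integral_congr_ae h1,
        integral_add (hIfnint.mul_const _) (integrable_const _),
        integral_mul_const, hJ1, integral_const]
      simp only [measure_univ, probReal_univ, ENNReal.toReal_one, one_smul, one_mul]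
      exact hSF x
    have HM1 : ∫ z, est z ∂P = ∫ x, (∑ a, πe x t' a * q x t' a) ∂μx := by
      rw [hM1']
      exact integral_congr_ae Minner1
    -- inner integrals, second moment
    have Minner2 : ∀ᵐ x ∂μx,
        (∫ t, (∑ a, π0 x t a * (∫ r, est (x, t, a, r) ^ 2 ∂(κ x t a))) ∂μt)
          = (∫ t, (∑ a, π0 x t a * (((if φ t = φ t' then (1 : ℝ) else 0) / pφ
              * (πe x t' a / π0 x t a)) ^ 2 * σ2 x t a)) ∂μt)
            + (∫ t, ((if φ t = φ t' then (1 : ℝ) else 0) / pφ) ^ 2 *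
                ((∑ a, π0 x t a
                    * ((πe x t' a / π0 x t a) * (q x t' a - fhat x t' a)) ^ 2)
                  - (∑ a, π0 x t a
                      * ((πe x t' a / π0 x t a) * (q x t' a - fhat x t' a))) ^ 2) ∂μt)
            + (∫ t, ((if φ t = φ t' then (1 : ℝ) else 0) / pφ) ^ 2 ∂μt)
                * (∑ a, πe x t' a * (q x t' a - fhat x t' a)) ^ 2
            + ((∑ a, πe x t' a * q x t' a) ^ 2
                - (∑ a, πe x t' a * (q x t' a - fhat x t' a)) ^ 2) := by
      filter_upwards [AEfact, hAslice, hBslice] with x hx ha1 hb1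
      have h1 : (fun t => ∑ a, π0 x t a * (∫ r, est (x, t, a, r) ^ 2 ∂(κ x t a)))
          =ᵐ[μt] (fun t =>
            (∑ a, π0 x t a * (((if φ t = φ t' then (1 : ℝ) else 0) / pφ
              * (πe x t' a / π0 x t a)) ^ 2 * σ2 x t a))
            + ((if φ t = φ t' then (1 : ℝ) else 0) / pφ) ^ 2 *
                ((∑ a, π0 x t a
                    * ((πe x t' a / π0 x t a) * (q x t' a - fhat x t' a)) ^ 2)
                  - (∑ a, π0 x t a
                      * ((πe x t' a / π0 x t a) * (q x t' a - fhat x t' a))) ^ 2)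
            + ((if φ t = φ t' then (1 : ℝ) else 0) / pφ) ^ 2
                * (∑ a, πe x t' a * (q x t' a - fhat x t' a)) ^ 2
            + 2 * (((if φ t = φ t' then (1 : ℝ) else 0) / pφ)
                * ((∑ a, πe x t' a * (q x t' a - fhat x t' a))
                  * (∑ a', πe x t' a' * fhat x t' a')))
            + (∑ a', πe x t' a' * fhat x t' a') ^ 2) := by
        filter_upwards [hx] with t ht
        exact (eval_inner T π0 πe q fhat hπ0nonneg hπ0sum hπenonneg κ hκ hq σ2 hσ2
          φ t' pφ hpφpos hcommon hCPC est hest x t ht.1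
          (fun a ha => ⟨(ht.2 a ha).1, (ht.2 a ha).2.1⟩)).2
      have i3 : Integrable (fun t => ((if φ t = φ t' then (1:ℝ) else 0) / pφ) ^ 2
          * (∑ a, πe x t' a * (q x t' a - fhat x t' a)) ^ 2) μt :=
        hIfn2int.mul_const _
      have i4 : Integrable (fun t => 2 * (((if φ t = φ t' then (1:ℝ) else 0) / pφ)
          * ((∑ a, πe x t' a * (q x t' a - fhat x t' a))
            * (∑ a', πe x t' a' * fhat x t' a')))) μt :=
        (hIfnint.mul_const _).const_mul 2
      rw [integral_congr_ae h1]
      refine (integral_add5 _ _ _ _ _ ha1 hb1 i3 i4 (integrable_const _)).trans ?_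
      have h2 : (∫ t, 2 * (((if φ t = φ t' then (1:ℝ) else 0) / pφ)
          * ((∑ a, πe x t' a * (q x t' a - fhat x t' a))
            * (∑ a', πe x t' a' * fhat x t' a'))) ∂μt)
          = 2 * ((∑ a, πe x t' a * (q x t' a - fhat x t' a))
            * (∑ a', πe x t' a' * fhat x t' a')) := by
        rw [integral_const_mul, integral_mul_const, hJ1]
        ring
      rw [integral_mul_const, h2, integral_const]
      simp only [measure_univ, probReal_univ, ENNReal.toReal_one, one_smul]
      rw [← hSF x]
      ring
    have HM2 : ∫ z, est z ^ 2 ∂P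
        = (∫ x, (∫ t, (∑ a, π0 x t a * (((if φ t = φ t' then (1 : ℝ) else 0) / pφ
            * (πe x t' a / π0 x t a)) ^ 2 * σ2 x t a)) ∂μt) ∂μx)
          + (∫ x, (∫ t, ((if φ t = φ t' then (1 : ℝ) else 0) / pφ) ^ 2 *
              ((∑ a, π0 x t a
                  * ((πe x t' a / π0 x t a) * (q x t' a - fhat x t' a)) ^ 2)
                - (∑ a, π0 x t a
                    * ((πe x t' a / π0 x t a) * (q x t' a - fhat x t' a))) ^ 2) ∂μt) ∂μx)
          + (∫ t, ((if φ t = φ t' then (1 : ℝ) else 0) / pφ) ^ 2 ∂μt)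
              * (∫ x, (∑ a, πe x t' a * (q x t' a - fhat x t' a)) ^ 2 ∂μx)
          + ((∫ x, (∑ a, πe x t' a * q x t' a) ^ 2 ∂μx)
              - (∫ x, (∑ a, πe x t' a * (q x t' a - fhat x t' a)) ^ 2 ∂μx)) := by
      rw [hM2', integral_congr_ae Minner2]
      have i3 : Integrable (fun x =>
          (∫ t, ((if φ t = φ t' then (1 : ℝ) else 0) / pφ) ^ 2 ∂μt)
            * (∑ a, πe x t' a * (q x t' a - fhat x t' a)) ^ 2) μx :=
        hΔInt2.const_mul _
      have i4 : Integrable (fun x => (∑ a, πe x t' a * q x t' a) ^ 2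
          - (∑ a, πe x t' a * (q x t' a - fhat x t' a)) ^ 2) μx :=
        hVInt2.sub hΔInt2
      refine (integral_add4 _ _ _ _ hαint hγint i3 i4).trans ?_
      rw [integral_const_mul, integral_sub hVInt2 hΔInt2]
    rw [HM1, HM2, hJ1]
    ring
  · -- bad case : the indicator is not a.e. measurable; then S vanishes a.e.
    have LA := layer_aesm μx μt π0 κ P hπ0nonneg hπ0sum hκ hP G hGm hGsl
    have hSzero : ∀ᵐ x ∂μx, (∑ a, πe x t' a * (q x t' a - fhat x t' a)) = 0 := by
      filter_upwards [LA, AEfact] with x hxLA hxAE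
      by_contra hS
      apply hIm
      have hEq : (fun t => ∑ a, π0 x t a * (∫ r, G (x, t, a, r) ∂(κ x t a)))
          =ᵐ[μt] (fun t => (if φ t = φ t' then (1 : ℝ) else 0) / pφ
            * (∑ a, πe x t' a * (q x t' a - fhat x t' a))
            + (∑ a', πe x t' a' * fhat x t' a')) := by
        filter_upwards [hxAE] with t ht
        have hGest : (∑ a, π0 x t a * (∫ r, G (x, t, a, r) ∂(κ x t a)))
            = ∑ a, π0 x t a * (∫ r, est (x, t, a, r) ∂(κ x t a)) := by
          refine Finset.sum_congr rfl fun a _ => ?_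
          rcases (hπ0nonneg x t a).eq_or_lt with h0 | hpos
          · rw [← h0]; ring
          · rw [integral_congr_ae ((ht.2 a hpos).2.2).symm]
        rw [hGest]
        exact (eval_inner T π0 πe q fhat hπ0nonneg hπ0sum hπenonneg κ hκ hq σ2 hσ2
          φ t' pφ hpφpos hcommon hCPC est hest x t ht.1
          (fun a ha => ⟨(ht.2 a ha).1, (ht.2 a ha).2.1⟩)).1
      have hAESM2 : AEStronglyMeasurable
          (fun t => (if φ t = φ t' then (1 : ℝ) else 0) / pφ
            * (∑ a, πe x t' a * (q x t' a - fhat x t' a))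
            + (∑ a', πe x t' a' * fhat x t' a')) μt := hxLA.congr hEq
      have heq2 : (fun t => if φ t = φ t' then (1:ℝ) else 0)
          = fun t => (((if φ t = φ t' then (1 : ℝ) else 0) / pφ
            * (∑ a, πe x t' a * (q x t' a - fhat x t' a))
            + (∑ a', πe x t' a' * fhat x t' a'))
            - (∑ a', πe x t' a' * fhat x t' a'))
            * (pφ / (∑ a, πe x t' a * (q x t' a - fhat x t' a))) := by
        funext t
        rw [add_sub_cancel_right]
        by_cases hφ : φ t = φ t'
        · simp only [if_pos hφ]
          field_simp
        · simp [hφ]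
      rw [heq2]
      exact (hAESM2.sub aestronglyMeasurable_const).mul_const _
    have hS2zero : (∫ x, (∑ a, πe x t' a * (q x t' a - fhat x t' a)) ^ 2 ∂μx) = 0 := by
      have h0 : (fun x => (∑ a, πe x t' a * (q x t' a - fhat x t' a)) ^ 2)
          =ᵐ[μx] (fun _ => (0:ℝ)) := by
        filter_upwards [hSzero] with x hx
        rw [hx]
        ring
      rw [integral_congr_ae h0]
      simp
    have Minner1 : ∀ᵐ x ∂μx,
        (∫ t, (∑ a, π0 x t a * (∫ r, est (x, t, a, r) ∂(κ x t a))) ∂μt)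
          = ∑ a, πe x t' a * q x t' a := by
      filter_upwards [AEfact, hSzero] with x hx hSx
      have h1 : (fun t => ∑ a, π0 x t a * (∫ r, est (x, t, a, r) ∂(κ x t a)))
          =ᵐ[μt] (fun _ => ∑ a', πe x t' a' * fhat x t' a') := by
        filter_upwards [hx] with t ht
        have := (eval_inner T π0 πe q fhat hπ0nonneg hπ0sum hπenonneg κ hκ hq σ2 hσ2
          φ t' pφ hpφpos hcommon hCPC est hest x t ht.1
          (fun a ha => ⟨(ht.2 a ha).1, (ht.2 a ha).2.1⟩)).1
        rw [this, hSx]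
        ring
      rw [integral_congr_ae h1, integral_const]
      simp only [measure_univ, probReal_univ, ENNReal.toReal_one, one_smul]
      rw [← hSF x, hSx]
      ring
    have HM1 : ∫ z, est z ∂P = ∫ x, (∑ a, πe x t' a * q x t' a) ∂μx := by
      rw [hM1']
      exact integral_congr_ae Minner1
    have Minner2 : ∀ᵐ x ∂μx,
        (∫ t, (∑ a, π0 x t a * (∫ r, est (x, t, a, r) ^ 2 ∂(κ x t a))) ∂μt)
          = (∫ t, (∑ a, π0 x t a * (((if φ t = φ t' then (1 : ℝ) else 0) / pφ
              * (πe x t' a / π0 x t a)) ^ 2 * σ2 x t a)) ∂μt)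
            + (∫ t, ((if φ t = φ t' then (1 : ℝ) else 0) / pφ) ^ 2 *
                ((∑ a, π0 x t a
                    * ((πe x t' a / π0 x t a) * (q x t' a - fhat x t' a)) ^ 2)
                  - (∑ a, π0 x t a
                      * ((πe x t' a / π0 x t a) * (q x t' a - fhat x t' a))) ^ 2) ∂μt)
            + (∑ a, πe x t' a * q x t' a) ^ 2 := by
      filter_upwards [AEfact, hAslice, hBslice, hSzero] with x hx ha1 hb1 hSx
      have hVF : (∑ a, πe x t' a * q x t' a) = ∑ a', πe x t' a' * fhat x t' a' := by
        rw [← hSF x, hSx]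
        ring
      have h1 : (fun t => ∑ a, π0 x t a * (∫ r, est (x, t, a, r) ^ 2 ∂(κ x t a)))
          =ᵐ[μt] (fun t =>
            (∑ a, π0 x t a * (((if φ t = φ t' then (1 : ℝ) else 0) / pφ
              * (πe x t' a / π0 x t a)) ^ 2 * σ2 x t a))
            + ((if φ t = φ t' then (1 : ℝ) else 0) / pφ) ^ 2 *
                ((∑ a, π0 x t a
                    * ((πe x t' a / π0 x t a) * (q x t' a - fhat x t' a)) ^ 2)
                  - (∑ a, π0 x t a
                      * ((πe x t' a / π0 x t a) * (q x t' a - fhat x t' a))) ^ 2)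
            + (∑ a', πe x t' a' * fhat x t' a') ^ 2) := by
        filter_upwards [hx] with t ht
        have heval := (eval_inner T π0 πe q fhat hπ0nonneg hπ0sum hπenonneg κ hκ hq σ2 hσ2
          φ t' pφ hpφpos hcommon hCPC est hest x t ht.1
          (fun a ha => ⟨(ht.2 a ha).1, (ht.2 a ha).2.1⟩)).2
        rw [heval, hSx]
        ring
      rw [integral_congr_ae h1]
      refine (integral_add3 _ _ _ ha1 hb1 (integrable_const _)).trans ?_
      rw [integral_const]
      simp only [measure_univ, probReal_univ, ENNReal.toReal_one, one_smul]
      rw [hVF]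
    have HM2 : ∫ z, est z ^ 2 ∂P
        = (∫ x, (∫ t, (∑ a, π0 x t a * (((if φ t = φ t' then (1 : ℝ) else 0) / pφ
            * (πe x t' a / π0 x t a)) ^ 2 * σ2 x t a)) ∂μt) ∂μx)
          + (∫ x, (∫ t, ((if φ t = φ t' then (1 : ℝ) else 0) / pφ) ^ 2 *
              ((∑ a, π0 x t a
                  * ((πe x t' a / π0 x t a) * (q x t' a - fhat x t' a)) ^ 2)
                - (∑ a, π0 x t a
                    * ((πe x t' a / π0 x t a) * (q x t' a - fhat x t' a))) ^ 2) ∂μt) ∂μx)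
          + (∫ x, (∑ a, πe x t' a * q x t' a) ^ 2 ∂μx) := by
      rw [hM2', integral_congr_ae Minner2]
      exact integral_add3 _ _ _ hαint hγint hVInt2
    rw [HM1, HM2, hS2zero]
    ring
end

section
/- Time-feature importance weighting identity (key lemma underlying the OPFV analysis): Assume Common Support, Common Time Feature Support, and the stationary-context assumption. Then for any bounded measurable function ψ : 𝒳 × 𝒜 → ℝ, E_{p(x) p(t) π₀(a|x,t)}[ (𝕀_φ(t,t')/p(φ(t'))) · (π_e(a|x,t')/π₀(a|x,t)) · ψ(x,a) ] = E_{p(x) π_e(a|x,t')}[ ψ(x,a) ]; i.e., the composite importance weight over the time feature and the action simultaneously corrects both the action distribution (from π₀ to π_e) and the time distribution (to mass 1 on the target time feature). -/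
open MeasureTheory

/-- **Time-feature importance weighting identity.**
Under Common Support, Common Time Feature Support and a stationary context distribution,
for any bounded measurable `ψ : 𝒳 × 𝒜 → ℝ`,
`E_{p(x) p(t) π₀(a|x,t)}[ (𝕀_φ(t,t')/p(φ(t'))) (π_e(a|x,t')/π₀(a|x,t)) ψ(x,a) ]
  = E_{p(x) π_e(a|x,t')}[ ψ(x,a) ]`. -/
theorem opfv_weighting_identity
    {𝒳 : Type*} [MeasurableSpace 𝒳] {𝒜 : Type*} [Fintype 𝒜]
    {C : Type*} [DecidableEq C]
    -- time horizon of the logged data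
    (T : ℝ) (hT : 0 < T)
    -- stationary context distribution p(x) and time distribution p(t), supported on [0,T]
    (μx : Measure 𝒳) [IsProbabilityMeasure μx]
    (μt : Measure ℝ) [IsProbabilityMeasure μt]
    (hμtsupp : μt (Set.Icc 0 T) = 1)
    -- logging policy and evaluation policy
    (π0 πe : 𝒳 → ℝ → 𝒜 → ℝ)
    (hπ0nonneg : ∀ x t a, 0 ≤ π0 x t a) (hπ0sum : ∀ x t, ∑ a, π0 x t a = 1)
    (hπenonneg : ∀ x t a, 0 ≤ πe x t a) (hπesum : ∀ x t, ∑ a, πe x t a = 1)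
    -- time feature function and target time
    (φ : ℝ → C) (t' : ℝ) (ht' : T < t')
    -- marginal probability of the target time feature, p(φ(t'))
    (pφ : ℝ) (hpφdef : pφ = (μt ({s | φ s = φ t'} ∩ Set.Icc 0 T)).toReal)
    -- Common Time Feature Support
    (hpφpos : 0 < pφ)
    -- Common Support
    (hcommon : ∀ x a, ∀ t ∈ Set.Icc 0 T, 0 < πe x t' a → 0 < π0 x t a)
    -- a bounded measurable test function ψ
    (ψ : 𝒳 → 𝒜 → ℝ)
    (hψmeas : ∀ a, Measurable fun x => ψ x a)
    (hψbdd : ∃ M : ℝ, ∀ x a, |ψ x a| ≤ M)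
    -- measurability of the policies (so that the integrals are well-defined)
    (hπ0meas : ∀ a, Measurable fun p : 𝒳 × ℝ => π0 p.1 p.2 a)
    (hπemeas : ∀ a, Measurable fun x => πe x t' a)
    -- integrability (all expectations are assumed well-defined)
    (hLInt : Integrable (fun p : 𝒳 × ℝ =>
      ∑ a, π0 p.1 p.2 a * ((if φ p.2 = φ t' then (1 : ℝ) else 0) / pφ
        * (πe p.1 t' a / π0 p.1 p.2 a) * ψ p.1 a)) (μx.prod μt)) :
    -- the composite weight corrects both the action and the time distributions
    ∫ x, (∫ t, (∑ a, π0 x t a * ((if φ t = φ t' then (1 : ℝ) else 0) / pφ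
        * (πe x t' a / π0 x t a) * ψ x a)) ∂μt) ∂μx
      = ∫ x, ∑ a, πe x t' a * ψ x a ∂μx := by

  classical
  set A : Set ℝ := {s : ℝ | φ s = φ t'} ∩ Set.Icc 0 T with hA
  set g : 𝒳 → ℝ := fun x => ∑ a, πe x t' a * ψ x a with hg
  set F : 𝒳 → ℝ → ℝ := fun x t => ∑ a, π0 x t a * ((if φ t = φ t' then (1 : ℝ) else 0) / pφ
        * (πe x t' a / π0 x t a) * ψ x a) with hF
  have hpφne : pφ ≠ 0 := ne_of_gt hpφpos
  -- a.e. t is in [0,T]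
  have hIccc : μt (Set.Icc (0:ℝ) T)ᶜ = 0 := by
    rw [measure_compl measurableSet_Icc (measure_ne_top _ _), hμtsupp, measure_univ, tsub_self]
  have hIcc : ∀ᵐ t ∂μt, t ∈ Set.Icc (0:ℝ) T := by
    refine ae_iff.2 ?_
    exact hIccc
  -- pointwise identity on [0,T]
  have hpt : ∀ x : 𝒳, ∀ t ∈ Set.Icc (0:ℝ) T,
      F x t = A.indicator (fun _ => g x / pφ) t := by
    intro x t ht
    by_cases hφt : φ t = φ t'
    · have htA : t ∈ A := ⟨hφt, ht⟩
      rw [Set.indicator_of_mem htA]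
      have : F x t = ∑ a, (πe x t' a * ψ x a) / pφ := by
        refine Finset.sum_congr rfl fun a _ => ?_
        rw [if_pos hφt]
        rcases (hπenonneg x t' a).lt_or_eq with hpos | hzero
        · have h0 : 0 < π0 x t a := hcommon x a t ht hpos
          field_simp
        · rw [← hzero]
          simp
      rw [this, ← Finset.sum_div]
    · have htA : t ∉ A := fun h => hφt h.1
      rw [Set.indicator_of_notMem htA]
      refine Finset.sum_eq_zero fun a _ => ?_
      rw [if_neg hφt]
      simp
  -- a.e. x, the inner integral equals g x
  have hslice : ∀ᵐ x ∂μx, Integrable (F x) μt := hLInt.prod_right_ae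
  have hinner : ∀ᵐ x ∂μx, (∫ t, F x t ∂μt) = g x := by
    filter_upwards [hslice] with x hx
    have hae : F x =ᵐ[μt] A.indicator (fun _ => g x / pφ) :=
      hIcc.mono fun t ht => hpt x t ht
    rw [integral_congr_ae hae]
    rcases eq_or_ne (g x) 0 with hgx | hgx
    · simp [hgx]
    · set c : ℝ := g x / pφ with hc
      have hcne : c ≠ 0 := div_ne_zero hgx hpφne
      have hint : Integrable (A.indicator (fun _ => c)) μt := hx.congr hae
      have haem : AEMeasurable (A.indicator (fun _ => c)) μt :=
        hint.aestronglyMeasurable.aemeasurable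
      have hpre : A = (A.indicator (fun _ => c)) ⁻¹' {c} := by
        ext t
        by_cases htA : t ∈ A
        · simp [Set.indicator_of_mem htA, htA]
        · simp [Set.indicator_of_notMem htA, htA, Ne.symm hcne]
      have hnull : NullMeasurableSet A μt := by
        rw [hpre]
        exact haem.nullMeasurableSet_preimage (measurableSet_singleton c)
      have hBA : MeasureTheory.toMeasurable μt A =ᵐ[μt] A :=
        NullMeasurableSet.toMeasurable_ae_eq hnull
      have hiind : A.indicator (fun _ => c) =ᵐ[μt]
          (MeasureTheory.toMeasurable μt A).indicator (fun _ => c) :=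
        indicator_ae_eq_of_ae_eq_set hBA.symm
      rw [integral_congr_ae hiind,
        integral_indicator (measurableSet_toMeasurable μt A), setIntegral_const,
        Measure.real, measure_toMeasurable]
      have : (μt A).toReal = pφ := hpφdef.symm
      rw [this, hc, smul_eq_mul]
      field_simp
  calc ∫ x, (∫ t, F x t ∂μt) ∂μx = ∫ x, g x ∂μx := integral_congr_ae hinner
    _ = ∫ x, ∑ a, πe x t' a * ψ x a ∂μx := rfl
end

section
/- Unbiasedness of the gradient of the OPFV estimator (Proposition D.2): Assume Full Support, Common Time Feature Support, Conditional Pairwise Correctness, and the stationary-context assumption. Then E_𝒟[∇_ζ V̂^{OPFV}_{t'}(π_ζ;𝒟)] = E_{p(x|t') π_ζ(a|x,t')}[ q(x,t',a) s_ζ(x,t',a) ] = ∇_ζ V_{t'}(π_ζ). -/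
open MeasureTheory

/-- **Unbiasedness of the gradient of the OPFV estimator (Proposition D.2).**
Under Full Support, Common Time Feature Support, Conditional Pairwise Correctness and a
stationary context distribution, for each coordinate `j` of the policy parameter `ζ`
(with `s` the `j`-th component of the policy score
`s_ζ(x,t',a) = ∇_ζ log π_ζ(a|x,t')`),
`E_𝒟[∇_ζ V̂^OPFV_{t'}(π_ζ;𝒟)] = E_{p(x|t') π_ζ(a|x,t')}[q(x,t',a) s_ζ(x,t',a)]
 = ∇_ζ V_{t'}(π_ζ)`. -/
theorem opfv_pg_unbiased
    {𝒳 : Type*} [MeasurableSpace 𝒳] {𝒜 : Type*} [Fintype 𝒜] [MeasurableSpace 𝒜]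
    {C : Type*} [DecidableEq C]
    -- time horizon of the logged data
    (T : ℝ) (hT : 0 < T)
    -- stationary context distribution p(x) and time distribution p(t), supported on [0,T]
    (μx : Measure 𝒳) [IsProbabilityMeasure μx]
    (μt : Measure ℝ) [IsProbabilityMeasure μt]
    (hμtsupp : μt (Set.Icc 0 T) = 1)
    -- logging policy, expected reward, regression model
    (π0 q fhat : 𝒳 → ℝ → 𝒜 → ℝ)
    (hπ0nonneg : ∀ x t a, 0 ≤ π0 x t a) (hπ0sum : ∀ x t, ∑ a, π0 x t a = 1)
    -- reward distributions with conditional mean q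
    (κ : 𝒳 → ℝ → 𝒜 → Measure ℝ) (hκ : ∀ x t a, IsProbabilityMeasure (κ x t a))
    (hq : ∀ x t a, ∫ r, r ∂(κ x t a) = q x t a)
    -- time feature function and target time
    (φ : ℝ → C) (t' : ℝ) (ht' : T < t')
    -- marginal probability of the target time feature, p(φ(t'))
    (pφ : ℝ) (hpφdef : pφ = (μt ({s | φ s = φ t'} ∩ Set.Icc 0 T)).toReal)
    -- Common Time Feature Support
    (hpφpos : 0 < pφ)
    -- Full Support of the logging policy
    (hfull : ∀ x a, ∀ t ∈ Set.Icc 0 T, 0 < π0 x t a)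
    -- Conditional Pairwise Correctness
    (hCPC : ∀ x a, ∀ t ∈ Set.Icc 0 T, φ t = φ t' →
      q x t a - q x t' a = fhat x t a - fhat x t' a)
    -- parameterized policy π_ζ(a|x,t') at the target time, parameter ζ ∈ ℝ^d, coordinate j
    (d : ℕ) (πz : (Fin d → ℝ) → 𝒳 → 𝒜 → ℝ) (ζ : Fin d → ℝ) (j : Fin d)
    (hπzpos : ∀ v x a, 0 < πz v x a) (hπzsum : ∀ v x, ∑ a, πz v x a = 1)
    (hπzdiff : ∀ x a,
      DifferentiableAt ℝ (fun u => πz (Function.update ζ j u) x a) (ζ j))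
    -- s is the j-th component of the policy score s_ζ(x,t',a) = ∇_ζ log π_ζ(a|x,t')
    (s : 𝒳 → 𝒜 → ℝ)
    (hs : ∀ x a,
      s x a = deriv (fun u => Real.log (πz (Function.update ζ j u) x a)) (ζ j))
    -- logged data: n i.i.d. draws from P, the joint law of (x, t, a, r)
    (n : ℕ) (hn : 0 < n)
    (P : Measure (𝒳 × ℝ × 𝒜 × ℝ)) [IsProbabilityMeasure P]
    (hP : ∀ g : 𝒳 × ℝ × 𝒜 × ℝ → ℝ, Integrable g P →
      ∫ z, g z ∂P
        = ∫ x, (∫ t, (∑ a, π0 x t a * (∫ r, g (x, t, a, r) ∂(κ x t a))) ∂μt) ∂μx)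
    -- per-sample term of the j-th coordinate of the OPFV policy-gradient estimator
    (est : 𝒳 × ℝ × 𝒜 × ℝ → ℝ)
    (hest : ∀ x t a r, est (x, t, a, r) =
      (if φ t = φ t' then (1 : ℝ) else 0) / pφ * (πz ζ x a / π0 x t a)
          * (r - fhat x t a) * s x a
        + ∑ a', πz ζ x a' * fhat x t' a' * s x a')
    -- integrability (all expectations are assumed well-defined)
    (hInt : Integrable est P)
    (hGInt : Integrable (fun x => ∑ a, πz ζ x a * (q x t' a * s x a)) μx) :
    -- E_𝒟[∇_ζ V̂^OPFV] = ∇_ζ V_{t'}(π_ζ) = E_{p(x|t') π_ζ(a|x,t')}[q(x,t',a) s_ζ(x,t',a)]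
    (∫ D : Fin n → 𝒳 × ℝ × 𝒜 × ℝ, (n : ℝ)⁻¹ * ∑ i, est (D i)
        ∂(Measure.pi fun _ => P))
      = ∫ x, ∑ a, πz ζ x a * (q x t' a * s x a) ∂μx := by
  classical
  -- Step 1: the empirical average integrates to ∫ est dP
  have hmap : ∀ i : Fin n,
      (Measure.pi fun _ : Fin n => P).map (Function.eval i) = P := by
    intro i
    ext A hA
    rw [Measure.map_apply (measurable_pi_apply i) hA, Set.eval_preimage, Measure.pi_pi]
    rw [Finset.prod_eq_single i]
    · simp
    · intro j _ hj; simp [Function.update, hj]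
    · simp
  have hInt_i : ∀ i : Fin n,
      Integrable (fun D : Fin n → 𝒳 × ℝ × 𝒜 × ℝ => est (D i))
        (Measure.pi fun _ => P) := by
    intro i
    have := (integrable_map_measure (by rw [hmap i]; exact hInt.aestronglyMeasurable)
      (measurable_pi_apply i).aemeasurable).mp (by rw [hmap i]; exact hInt)
    exact this
  have hint_i : ∀ i : Fin n,
      (∫ D : Fin n → 𝒳 × ℝ × 𝒜 × ℝ, est (D i) ∂(Measure.pi fun _ => P))
        = ∫ z, est z ∂P := by
    intro i
    have h2 := integral_map (μ := Measure.pi fun _ : Fin n => P)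
      (φ := Function.eval i) (f := est) (measurable_pi_apply i).aemeasurable
      (by rw [hmap i]; exact hInt.aestronglyMeasurable)
    rw [hmap i] at h2
    exact h2.symm
  have h1 : (∫ D : Fin n → 𝒳 × ℝ × 𝒜 × ℝ, (n : ℝ)⁻¹ * ∑ i, est (D i)
      ∂(Measure.pi fun _ => P)) = ∫ z, est z ∂P := by
    rw [show (fun D : Fin n → 𝒳 × ℝ × 𝒜 × ℝ => (n : ℝ)⁻¹ * ∑ i, est (D i))
        = fun D => (n : ℝ)⁻¹ • ∑ i, est (D i) from rfl, integral_smul,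
      integral_finset_sum _ (fun i _ => hInt_i i)]
    simp only [hint_i]
    rw [Finset.sum_const, Finset.card_univ, Fintype.card_fin, nsmul_eq_mul, smul_eq_mul]
    have : (n : ℝ) ≠ 0 := Nat.cast_ne_zero.mpr hn.ne'
    field_simp
  rw [h1, hP est hInt]
  -- notation
  set S : Set ℝ := {u : ℝ | φ u = φ t'} with hS
  have hcompl : μt (Set.Icc 0 T)ᶜ = 0 := by
    rw [measure_compl measurableSet_Icc (measure_ne_top _ _), hμtsupp]
    simp
  have haeIcc : ∀ᵐ t ∂μt, t ∈ Set.Icc 0 T := by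
    rw [MeasureTheory.ae_iff]
    exact hcompl
  have hμtS : μt S = ENNReal.ofReal pφ := by
    have h1 : μt (S ∩ Set.Icc 0 T) = ENNReal.ofReal pφ := by
      rw [hpφdef, ENNReal.ofReal_toReal (measure_ne_top _ _)]
    have h2 : μt S ≤ μt (S ∩ Set.Icc 0 T) + μt (S \ Set.Icc 0 T) :=
      measure_le_inter_add_diff _ _ _
    have h3 : μt (S \ Set.Icc 0 T) = 0 :=
      measure_mono_null (fun u hu => hu.2) hcompl
    have h4 : μt (S ∩ Set.Icc 0 T) ≤ μt S := measure_mono Set.inter_subset_left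
    rw [h3, add_zero] at h2
    rw [← h1]
    exact le_antisymm h2 h4
  -- abbreviations
  set G : 𝒳 → ℝ → ℝ := fun x t => ∑ a, π0 x t a * ∫ r, est (x, t, a, r) ∂κ x t a
    with hGdef
  set D : 𝒳 → ℝ → ℝ := fun x t => ∑ a, π0 x t a *
      (if Integrable (fun r => est (x, t, a, r)) (κ x t a) then (1 : ℝ) else 0)
    with hDdef
  set Bf : 𝒳 → ℝ := fun x => ∑ a', πz ζ x a' * fhat x t' a' * s x a' with hBdef
  set Wf : 𝒳 → ℝ := fun x => ∑ a, πz ζ x a * ((q x t' a - fhat x t' a) * s x a)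
    with hWdef
  set K : ℝ := ∫ z, est z ∂P with hKdef
  -- B + W = H pointwise
  have hBW : ∀ x, Bf x + Wf x = ∑ a, πz ζ x a * (q x t' a * s x a) := by
    intro x
    rw [hBdef, hWdef, ← Finset.sum_add_distrib]
    exact Finset.sum_congr rfl fun a _ => by ring
  -- F1 : constant shift of the reward integral
  have F1 : ∀ x t a (c : ℝ), (∫ r, (est (x, t, a, r) + c) ∂(κ x t a))
      = (∫ r, est (x, t, a, r) ∂(κ x t a))
        + c * (if Integrable (fun r => est (x, t, a, r)) (κ x t a) then (1 : ℝ) else 0) := by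
    intro x t a c
    haveI := hκ x t a
    by_cases h : Integrable (fun r => est (x, t, a, r)) (κ x t a)
    · rw [integral_add h (integrable_const c), integral_const]
      simp [h, measure_univ]
    · have h2 : ¬ Integrable (fun r => est (x, t, a, r) + c) (κ x t a) := by
        intro hc
        have h3 := hc.sub (integrable_const c)
        exact h (h3.congr (Filter.Eventually.of_forall fun r => by simp))
      rw [integral_undef h, integral_undef h2]
      simp [h]
  -- bounds on D
  have hD01 : ∀ x t, 0 ≤ D x t ∧ D x t ≤ 1 := by
    intro x t
    constructor
    · rw [hDdef]
      exact Finset.sum_nonneg fun a _ => mul_nonneg (hπ0nonneg x t a)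
        (by split <;> norm_num)
    · rw [hDdef]
      have hstep : (∑ a, π0 x t a *
          (if Integrable (fun r => est (x, t, a, r)) (κ x t a) then (1 : ℝ) else 0))
          ≤ ∑ a, π0 x t a := by
        refine Finset.sum_le_sum fun a _ => ?_
        have h1 : (if Integrable (fun r => est (x, t, a, r)) (κ x t a)
            then (1 : ℝ) else 0) ≤ 1 := by split <;> norm_num
        have h2 := hπ0nonneg x t a
        nlinarith
      calc (∑ a, π0 x t a *
          (if Integrable (fun r => est (x, t, a, r)) (κ x t a) then (1 : ℝ) else 0))
          ≤ ∑ a, π0 x t a := hstep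
        _ = 1 := hπ0sum x t

  -- the shift machinery
  have hSH : ∀ θ : 𝒳 → ℝ, Integrable (fun z : 𝒳 × ℝ × 𝒜 × ℝ => θ z.1) P →
      ∫ z, (est z + θ z.1) ∂P
        = ∫ x, (∫ t, (G x t + θ x * D x t) ∂μt) ∂μx := by
    intro θ hθ
    have hg : Integrable (fun z => est z + θ z.1) P := hInt.add hθ
    rw [hP _ hg]
    refine integral_congr_ae (Filter.Eventually.of_forall fun x => ?_)
    refine integral_congr_ae (Filter.Eventually.of_forall fun t => ?_)
    have : ∀ a, π0 x t a * ∫ r, (est (x, t, a, r) + θ x) ∂(κ x t a)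
        = π0 x t a * ∫ r, est (x, t, a, r) ∂(κ x t a)
          + θ x * (π0 x t a *
            (if Integrable (fun r => est (x, t, a, r)) (κ x t a) then (1 : ℝ) else 0)) := by
      intro a
      rw [F1 x t a (θ x)]
      ring
    calc (∑ a, π0 x t a * ∫ r, (est (x, t, a, r) + θ x) ∂(κ x t a))
        = ∑ a, (π0 x t a * ∫ r, est (x, t, a, r) ∂(κ x t a)
            + θ x * (π0 x t a *
              (if Integrable (fun r => est (x, t, a, r)) (κ x t a) then (1 : ℝ) else 0))) :=
          Finset.sum_congr rfl fun a _ => this a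
      _ = G x t + θ x * D x t := by
          rw [Finset.sum_add_distrib, ← Finset.mul_sum, hGdef, hDdef]
  -- constant instances
  have hVc : ∀ c : ℝ, K + c = ∫ x, (∫ t, (G x t + c * D x t) ∂μt) ∂μx := by
    intro c
    have h := hSH (fun _ => c) (integrable_const c)
    rw [integral_add hInt (integrable_const c), integral_const] at h
    simpa [measure_univ, hKdef] using h
  have hVcInt : ∀ c : ℝ, K + c ≠ 0 →
      Integrable (fun x => ∫ t, (G x t + c * D x t) ∂μt) μx := by
    intro c hc
    by_contra hni
    rw [hVc c, integral_undef hni] at hc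
    exact hc rfl
  -- pinning
  have hpin : ∀ c c' : ℝ, K + c ≠ 0 → K + c' ≠ 0 →
      (fun x => ∫ t, (G x t + c' * D x t) ∂μt) =ᵐ[μx]
      (fun x => (∫ t, (G x t + c * D x t) ∂μt) + (c' - c)) := by
    intro c c' hc hc'
    refine Integrable.ae_eq_of_forall_setIntegral_eq _ _ (hVcInt c' hc')
      ((hVcInt c hc).add (integrable_const _)) ?_
    intro A hA _
    -- indicator shift instance
    have hθeq : (fun z : 𝒳 × ℝ × 𝒜 × ℝ =>
          (fun x => c + A.indicator (fun _ => c' - c) x) z.1)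
        = fun z : 𝒳 × ℝ × 𝒜 × ℝ =>
            c + (Prod.fst ⁻¹' A).indicator (fun _ => c' - c) z := by
      funext z
      by_cases hz : z.1 ∈ A
      · simp [Set.indicator_of_mem, hz]
      · simp [Set.indicator_of_notMem, hz]
    have hθint : Integrable (fun z : 𝒳 × ℝ × 𝒜 × ℝ =>
        (fun x => c + A.indicator (fun _ => c' - c) x) z.1) P := by
      rw [hθeq]
      exact (integrable_const c).add
        ((integrable_const _).indicator (hA.preimage measurable_fst))
    have h := hSH (fun x => c + A.indicator (fun _ => c' - c) x) hθint
    -- evaluate the left side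
    have hL : ∫ z, (est z + (c + A.indicator (fun _ => c' - c) z.1)) ∂P
        = K + c + (c' - c) * (μx A).toReal := by
      have h2 : Integrable (fun z : 𝒳 × ℝ × 𝒜 × ℝ =>
          c + A.indicator (fun _ => c' - c) z.1) P := hθint
      rw [integral_add hInt h2]
      have h3 : ∫ z, (c + A.indicator (fun _ => c' - c) z.1) ∂P
          = c + (c' - c) * (μx A).toReal := by
        have h4 : Integrable (fun z : 𝒳 × ℝ × 𝒜 × ℝ =>
            (Prod.fst ⁻¹' A).indicator (fun _ => c' - c) z) P :=
          (integrable_const _).indicator (hA.preimage measurable_fst)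
        have h5 : (fun z : 𝒳 × ℝ × 𝒜 × ℝ => c + A.indicator (fun _ => c' - c) z.1)
            = fun z => c + (Prod.fst ⁻¹' A).indicator (fun _ => c' - c) z := hθeq
        rw [h5, integral_add (integrable_const c) h4, integral_const,
          integral_indicator_const _ (hA.preimage measurable_fst)]
        have hfst : P (Prod.fst ⁻¹' A) = μx A := by
          -- marginal of P in x is μx, via hP applied to an indicator
          have hind : Integrable (fun z : 𝒳 × ℝ × 𝒜 × ℝ =>
              (Prod.fst ⁻¹' A).indicator (fun _ => (1 : ℝ)) z) P :=
            (integrable_const _).indicator (hA.preimage measurable_fst)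
          have h6 := hP _ hind
          rw [integral_indicator_const _ (hA.preimage measurable_fst)] at h6
          have h7 : ∫ x, (∫ t, (∑ a, π0 x t a * ∫ r,
              (Prod.fst ⁻¹' A).indicator (fun _ => (1 : ℝ)) (x, t, a, r) ∂(κ x t a)) ∂μt) ∂μx
              = (μx A).toReal := by
            have h8 : ∀ x, (∫ t, (∑ a, π0 x t a * ∫ r,
                (Prod.fst ⁻¹' A).indicator (fun _ => (1 : ℝ)) (x, t, a, r) ∂(κ x t a)) ∂μt)
                = A.indicator (fun _ => (1 : ℝ)) x := by
              intro x
              have h9 : ∀ t, (∑ a, π0 x t a * ∫ r,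
                  (Prod.fst ⁻¹' A).indicator (fun _ => (1 : ℝ)) (x, t, a, r) ∂(κ x t a))
                  = A.indicator (fun _ => (1 : ℝ)) x := by
                intro t
                have h10 : ∀ a, (∫ r,
                    (Prod.fst ⁻¹' A).indicator (fun _ => (1 : ℝ)) (x, t, a, r) ∂(κ x t a))
                    = A.indicator (fun _ => (1 : ℝ)) x := by
                  intro a
                  haveI := hκ x t a
                  have h11 : (fun r : ℝ =>
                      (Prod.fst ⁻¹' A).indicator (fun _ => (1 : ℝ)) (x, t, a, r))
                      = fun _ : ℝ => A.indicator (fun _ => (1 : ℝ)) x := by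
                    funext r
                    by_cases hx : x ∈ A
                    · simp [Set.indicator_of_mem, hx]
                    · simp [Set.indicator_of_notMem, hx]
                  rw [h11, integral_const]
                  simp [measure_univ]
                rw [Finset.sum_congr rfl fun a _ => by rw [h10 a]]
                rw [← Finset.sum_mul, hπ0sum, one_mul]
              rw [integral_congr_ae (Filter.Eventually.of_forall h9), integral_const]
              simp [measure_univ]
            rw [integral_congr_ae (Filter.Eventually.of_forall h8),
              integral_indicator_const _ hA]
            simp
            rfl
          rw [h7] at h6
          have hPfin : P (Prod.fst ⁻¹' A) ≠ ⊤ := measure_ne_top _ _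
          have hμfin : μx A ≠ ⊤ := measure_ne_top _ _
          have := (ENNReal.toReal_eq_toReal_iff' hPfin hμfin).mp (by
            simpa [Measure.real] using h6)
          exact this
        simp only [Measure.real, hfst]
        simp [smul_eq_mul, mul_comm]
      rw [h3, hKdef]
      ring
    rw [hL] at h
    -- evaluate the right side pointwise
    have hR : (fun x => ∫ t, (G x t
          + (c + A.indicator (fun _ => c' - c) x) * D x t) ∂μt)
        = fun x => (∫ t, (G x t + c * D x t) ∂μt)
            + A.indicator (fun x => (∫ t, (G x t + c' * D x t) ∂μt)
              - (∫ t, (G x t + c * D x t) ∂μt)) x := by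
      funext x
      by_cases hx : x ∈ A
      · rw [Set.indicator_of_mem hx, Set.indicator_of_mem hx]
        rw [show c + (c' - c) = c' from by ring]
        ring
      · rw [Set.indicator_of_notMem hx, Set.indicator_of_notMem hx]
        rw [add_zero, add_zero]
    rw [hR] at h
    have hdint : Integrable (fun x => (∫ t, (G x t + c' * D x t) ∂μt)
        - (∫ t, (G x t + c * D x t) ∂μt)) μx := (hVcInt c' hc').sub (hVcInt c hc)
    rw [integral_add (hVcInt c hc) (hdint.indicator hA)] at h
    have hset : ∫ x, A.indicator (fun x => (∫ t, (G x t + c' * D x t) ∂μt)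
        - (∫ t, (G x t + c * D x t) ∂μt)) x ∂μx = (c' - c) * (μx A).toReal := by
      have := hVc c
      rw [← this] at h
      linarith
    -- conclude the set-integral identity
    rw [← integral_indicator hA, ← integral_indicator hA]
    have hfin : ∫ x, A.indicator (fun x => ∫ t, (G x t + c' * D x t) ∂μt) x ∂μx
        = ∫ x, A.indicator (fun x => (∫ t, (G x t + c * D x t) ∂μt) + (c' - c)) x ∂μx := by
      have e1 : (fun x => A.indicator (fun x => ∫ t, (G x t + c' * D x t) ∂μt) x)
          = fun x => A.indicator (fun x => ∫ t, (G x t + c * D x t) ∂μt) x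
            + A.indicator (fun x => (∫ t, (G x t + c' * D x t) ∂μt)
              - (∫ t, (G x t + c * D x t) ∂μt)) x := by
        funext x
        by_cases hx : x ∈ A
        · simp only [Set.indicator_of_mem hx]; ring
        · simp only [Set.indicator_of_notMem hx]; ring
      have e2 : (fun x => A.indicator (fun x =>
            (∫ t, (G x t + c * D x t) ∂μt) + (c' - c)) x)
          = fun x => A.indicator (fun x => ∫ t, (G x t + c * D x t) ∂μt) x
            + A.indicator (fun _ => (c' - c)) x := by
        funext x
        by_cases hx : x ∈ A
        · simp only [Set.indicator_of_mem hx]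
        · simp only [Set.indicator_of_notMem hx]; ring
      rw [e1, e2, integral_add ((hVcInt c hc).indicator hA) (hdint.indicator hA),
        integral_add ((hVcInt c hc).indicator hA)
          ((integrable_const _).indicator hA),
        hset, integral_indicator_const _ hA]
      simp [smul_eq_mul, mul_comm, Measure.real]
    exact hfin
  -- choose three constants with K + c ≠ 0
  set c1 : ℝ := |K| + 1 with hc1
  set c2 : ℝ := |K| + 2 with hc2
  set c3 : ℝ := |K| + 3 with hc3
  have habs := neg_abs_le K
  have habs2 := abs_nonneg K
  have hne1 : K + c1 ≠ 0 := by rw [hc1]; intro h; linarith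
  have hne2 : K + c2 ≠ 0 := by rw [hc2]; intro h; linarith
  have hne3 : K + c3 ≠ 0 := by rw [hc3]; intro h; linarith
  -- a.e. slice integrability
  have hDae : ∀ᵐ x ∂μx, Integrable (fun t => G x t) μt ∧ (∀ᵐ t ∂μt, D x t = 1) := by
    have h12 := hpin c1 c2 hne1 hne2
    have h13 := hpin c1 c3 hne1 hne3
    have h23 := hpin c2 c3 hne2 hne3
    filter_upwards [h12, h13, h23] with x e12 e13 e23
    have key : ∀ ci cj : ℝ, ci ≠ cj →
        Integrable (fun t => G x t + ci * D x t) μt →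
        Integrable (fun t => G x t + cj * D x t) μt →
        (∫ t, (G x t + cj * D x t) ∂μt) = (∫ t, (G x t + ci * D x t) ∂μt) + (cj - ci) →
        Integrable (fun t => G x t) μt ∧ (∀ᵐ t ∂μt, D x t = 1) := by
      intro ci cj hnecc hIi hIj heq
      have hccne : cj - ci ≠ 0 := sub_ne_zero_of_ne (Ne.symm hnecc)
      have hDint : Integrable (fun t => D x t) μt := by
        have h := (hIj.sub hIi).const_mul (cj - ci)⁻¹
        refine h.congr (Filter.Eventually.of_forall fun t => ?_)
        field_simp
        simp only [Pi.sub_apply]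
        ring
      have hGint : Integrable (fun t => G x t) μt := by
        have h := hIi.sub (hDint.const_mul ci)
        refine h.congr (Filter.Eventually.of_forall fun t => ?_)
        simp only [Pi.sub_apply]
        ring
      have hVi : (∫ t, (G x t + ci * D x t) ∂μt)
          = (∫ t, G x t ∂μt) + ci * ∫ t, D x t ∂μt := by
        rw [integral_add hGint (hDint.const_mul ci), integral_const_mul]
      have hVj : (∫ t, (G x t + cj * D x t) ∂μt)
          = (∫ t, G x t ∂μt) + cj * ∫ t, D x t ∂μt := by
        rw [integral_add hGint (hDint.const_mul cj), integral_const_mul]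
      have hDone : (∫ t, D x t ∂μt) = 1 := by
        rw [hVi, hVj] at heq
        have h2 : (cj - ci) * (∫ t, D x t ∂μt) = (cj - ci) * 1 := by linarith
        exact mul_left_cancel₀ hccne h2
      refine ⟨hGint, ?_⟩
      have hint1 : Integrable (fun t => 1 - D x t) μt := (integrable_const 1).sub hDint
      have hz : (∫ t, (1 - D x t) ∂μt) = 0 := by
        rw [integral_sub (integrable_const 1) hDint, integral_const, hDone]
        simp [measure_univ]
      have h0 := (integral_eq_zero_iff_of_nonneg_ae
        (Filter.Eventually.of_forall fun t => by have := (hD01 x t).2; simp; linarith)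
        hint1).mp hz
      filter_upwards [h0] with t ht
      have h3 : 1 - D x t = 0 := ht
      linarith
    have hd12 : c1 ≠ c2 := by rw [hc1, hc2]; intro h; linarith
    have hd13 : c1 ≠ c3 := by rw [hc1, hc3]; intro h; linarith
    have hd23 : c2 ≠ c3 := by rw [hc2, hc3]; intro h; linarith
    by_cases hI1 : Integrable (fun t => G x t + c1 * D x t) μt
    · by_cases hI2 : Integrable (fun t => G x t + c2 * D x t) μt
      · exact key c1 c2 hd12 hI1 hI2 e12
      · by_cases hI3 : Integrable (fun t => G x t + c3 * D x t) μt
        · exact key c1 c3 hd13 hI1 hI3 e13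
        · exfalso
          rw [integral_undef hI2, integral_undef hI3] at e23
          rw [hc2, hc3] at e23
          linarith
    · by_cases hI2 : Integrable (fun t => G x t + c2 * D x t) μt
      · by_cases hI3 : Integrable (fun t => G x t + c3 * D x t) μt
        · exact key c2 c3 hd23 hI2 hI3 e23
        · exfalso
          rw [integral_undef hI1, integral_undef hI3] at e13
          rw [hc1, hc3] at e13
          linarith
      · exfalso
        rw [integral_undef hI1, integral_undef hI2] at e12
        rw [hc1, hc2] at e12
        linarith
  -- pointwise formula for G where D = 1 and t is in the support
  have hGform : ∀ x t, t ∈ Set.Icc 0 T → D x t = 1 →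
      G x t = Bf x + Set.indicator S (fun _ => Wf x / pφ) t := by
    intro x t ht hD1
    -- all slices are integrable
    have hallint : ∀ a, Integrable (fun r => est (x, t, a, r)) (κ x t a) := by
      intro a
      by_contra hna
      have hD1' : (∑ a', π0 x t a' *
          (if Integrable (fun r => est (x, t, a', r)) (κ x t a') then (1 : ℝ) else 0)) = 1 := by
        rw [hDdef] at hD1
        simpa using hD1
      have hsum0 : (∑ a', (π0 x t a' - π0 x t a' *
          (if Integrable (fun r => est (x, t, a', r)) (κ x t a') then (1 : ℝ) else 0))) = 0 := by
        rw [Finset.sum_sub_distrib, hπ0sum, hD1']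
        ring
      have hterm : π0 x t a - π0 x t a *
          (if Integrable (fun r => est (x, t, a, r)) (κ x t a) then (1 : ℝ) else 0)
          ≤ ∑ a', (π0 x t a' - π0 x t a' *
            (if Integrable (fun r => est (x, t, a', r)) (κ x t a') then (1 : ℝ) else 0)) := by
        refine Finset.single_le_sum (f := fun a' => π0 x t a' - π0 x t a' *
          (if Integrable (fun r => est (x, t, a', r)) (κ x t a') then (1 : ℝ) else 0))
          (fun a' _ => ?_) (Finset.mem_univ a)
        have h1 : (if Integrable (fun r => est (x, t, a', r)) (κ x t a')
            then (1 : ℝ) else 0) ≤ 1 := by split <;> norm_num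
        have h2 := hπ0nonneg x t a'
        show (0 : ℝ) ≤ π0 x t a' - π0 x t a' *
          (if Integrable (fun r => est (x, t, a', r)) (κ x t a') then (1 : ℝ) else 0)
        nlinarith
      rw [hsum0, if_neg hna, mul_zero, sub_zero] at hterm
      exact absurd hterm (not_le.mpr (hfull x a t ht))
    -- per-action reward integral
    have hJ : ∀ a, (∫ r, est (x, t, a, r) ∂(κ x t a))
        = (if φ t = φ t' then (1 : ℝ) else 0) / pφ * (πz ζ x a / π0 x t a)
            * (q x t a - fhat x t a) * s x a + Bf x := by
      intro a
      haveI := hκ x t a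
      set A0 : ℝ := (if φ t = φ t' then (1 : ℝ) else 0) / pφ
        * (πz ζ x a / π0 x t a) * s x a with hA0
      have hre : (fun r : ℝ => est (x, t, a, r)) = fun r => A0 * (r - fhat x t a) + Bf x := by
        funext r
        rw [hest, hA0, hBdef]
        ring
      have hcoef : (if φ t = φ t' then (1 : ℝ) else 0) / pφ * (πz ζ x a / π0 x t a)
          * (q x t a - fhat x t a) * s x a = A0 * (q x t a - fhat x t a) := by
        rw [hA0]; ring
      by_cases hA0z : A0 = 0
      · rw [hcoef, hA0z, zero_mul, zero_add, hre, hA0z]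
        have : (fun r : ℝ => (0 : ℝ) * (r - fhat x t a) + Bf x) = fun _ : ℝ => Bf x := by
          funext r; ring
        rw [this, integral_const]
        simp [measure_univ]
      · have hid : Integrable (fun r : ℝ => r) (κ x t a) := by
          have h2 := hallint a
          rw [hre] at h2
          have h3 := (h2.sub (integrable_const (Bf x))).const_mul A0⁻¹
          have h4 : Integrable (fun r : ℝ => r - fhat x t a) (κ x t a) := by
            refine h3.congr (Filter.Eventually.of_forall fun r => ?_)
            simp only [Pi.sub_apply]
            field_simp
            ring
          have h5 := h4.add (integrable_const (fhat x t a))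
          refine h5.congr (Filter.Eventually.of_forall fun r => by simp)
        have hsub : Integrable (fun r : ℝ => r - fhat x t a) (κ x t a) :=
          hid.sub (integrable_const _)
        have hint1 : Integrable (fun r : ℝ => A0 * (r - fhat x t a)) (κ x t a) :=
          hsub.const_mul A0
        rw [hcoef, hre, integral_add hint1 (integrable_const _), integral_const_mul,
          integral_sub hid (integrable_const _), hq, integral_const, integral_const]
        simp [measure_univ]
    -- sum over actions
    have hsum : G x t = ∑ a, π0 x t a * ((if φ t = φ t' then (1 : ℝ) else 0) / pφ
        * (πz ζ x a / π0 x t a) * (q x t a - fhat x t a) * s x a + Bf x) := by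
      rw [hGdef]
      exact Finset.sum_congr rfl (fun a _ => by rw [hJ a])
    rw [hsum]
    have hrw : ∀ a, π0 x t a * ((if φ t = φ t' then (1 : ℝ) else 0) / pφ
          * (πz ζ x a / π0 x t a) * (q x t a - fhat x t a) * s x a + Bf x)
        = (if φ t = φ t' then (1 : ℝ) else 0) / pφ
            * (πz ζ x a * ((q x t a - fhat x t a) * s x a))
          + π0 x t a * Bf x := by
      intro a
      have hπ0ne : π0 x t a ≠ 0 := (hfull x a t ht).ne'
      field_simp
    rw [Finset.sum_congr rfl (fun a _ => hrw a), Finset.sum_add_distrib,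
      ← Finset.mul_sum, ← Finset.sum_mul, hπ0sum, one_mul]
    by_cases hφt : φ t = φ t'
    · have hCPCt : ∀ a, q x t a - fhat x t a = q x t' a - fhat x t' a := by
        intro a
        have := hCPC x a t ht hφt
        linarith
      have hmem : t ∈ S := hφt
      rw [Set.indicator_of_mem hmem]
      simp only [hφt, if_true]
      rw [show (∑ a, πz ζ x a * ((q x t a - fhat x t a) * s x a))
          = ∑ a, πz ζ x a * ((q x t' a - fhat x t' a) * s x a) from
        Finset.sum_congr rfl (fun a _ => by rw [hCPCt a])]
      rw [add_comm, div_mul_eq_mul_div, one_mul, hWdef]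
    · have hmem : t ∉ S := hφt
      rw [Set.indicator_of_notMem hmem]
      simp [hφt]
  -- final assembly
  have main : (fun x => ∫ t, (∑ a, π0 x t a * ∫ r, est (x, t, a, r) ∂(κ x t a)) ∂μt)
      =ᵐ[μx] (fun x => ∑ a, πz ζ x a * (q x t' a * s x a)) := by
    by_cases hNM : NullMeasurableSet S μt
    · -- time-feature set is null measurable: direct evaluation
      filter_upwards [hDae] with x hx
      obtain ⟨hGint, hD1⟩ := hx
      have hcong : (fun t => G x t) =ᵐ[μt]
          fun t => Bf x + Set.indicator S (fun _ => Wf x / pφ) t := by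
        filter_upwards [haeIcc, hD1] with t ht hDt
        exact hGform x t ht hDt
      have hLHS : (∫ t, (∑ a, π0 x t a * ∫ r, est (x, t, a, r) ∂(κ x t a)) ∂μt)
          = ∫ t, (Bf x + Set.indicator S (fun _ => Wf x / pφ) t) ∂μt := by
        refine integral_congr_ae ?_
        have : (fun t => (∑ a, π0 x t a * ∫ r, est (x, t, a, r) ∂(κ x t a)))
            = fun t => G x t := by rw [hGdef]
        rw [this]
        exact hcong
      rw [hLHS]
      -- compute the integral of the indicator via a measurable version
      have hae := NullMeasurableSet.toMeasurable_ae_eq hNM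
      have hsets := Filter.eventuallyEq_set.mp hae
      have hcongr2 : (fun t => Bf x + Set.indicator S (fun _ => Wf x / pφ) t)
          =ᵐ[μt] (fun t => Bf x
            + Set.indicator (toMeasurable μt S) (fun _ => Wf x / pφ) t) := by
        filter_upwards [hsets] with u hu
        by_cases h1 : u ∈ S
        · rw [Set.indicator_of_mem (hu.mpr h1), Set.indicator_of_mem h1]
        · rw [Set.indicator_of_notMem (fun hc => h1 (hu.mp hc)),
            Set.indicator_of_notMem h1]
      rw [integral_congr_ae hcongr2,
        integral_add (integrable_const _)
          ((integrable_const _).indicator (measurableSet_toMeasurable _ _)),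
        integral_const, integral_indicator_const _ (measurableSet_toMeasurable _ _),
        Measure.real, Measure.real, measure_toMeasurable, hμtS, ENNReal.toReal_ofReal hpφpos.le]
      have hpφne : pφ ≠ 0 := hpφpos.ne'
      rw [← hBW x]
      simp [measure_univ, smul_eq_mul]
      field_simp
    · -- time-feature set is NOT null measurable: then W must vanish a.e.
      filter_upwards [hDae] with x hx
      obtain ⟨hGint, hD1⟩ := hx
      have hcong : (fun t => G x t) =ᵐ[μt]
          fun t => Bf x + Set.indicator S (fun _ => Wf x / pφ) t := by
        filter_upwards [haeIcc, hD1] with t ht hDt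
        exact hGform x t ht hDt
      have hWx : Wf x = 0 := by
        by_contra hWne
        apply hNM
        have hfint : Integrable
            (fun t => Bf x + Set.indicator S (fun _ => Wf x / pφ) t) μt :=
          hGint.congr hcong
        have haesm := hfint.aestronglyMeasurable
        have h2 : AEStronglyMeasurable
            (fun t => Set.indicator S (fun _ => (1 : ℝ)) t) μt := by
          have heq : (fun t => Set.indicator S (fun _ => (1 : ℝ)) t)
              = fun t => ((Bf x + Set.indicator S (fun _ => Wf x / pφ) t) - Bf x)
                  * (pφ / Wf x) := by
            funext t
            by_cases htS : t ∈ S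
            · rw [Set.indicator_of_mem htS, Set.indicator_of_mem htS]
              field_simp
              ring
            · rw [Set.indicator_of_notMem htS, Set.indicator_of_notMem htS]
              ring
          rw [heq]
          exact (haesm.sub aestronglyMeasurable_const).mul_const _
        obtain ⟨g', hg'meas, hg'ae⟩ := h2
        have hSae : S =ᵐ[μt] g' ⁻¹' {1} := by
          rw [Filter.eventuallyEq_set]
          filter_upwards [hg'ae] with t htg
          constructor
          · intro htS
            have : Set.indicator S (fun _ => (1 : ℝ)) t = 1 :=
              Set.indicator_of_mem htS _
            simp only [Set.mem_preimage, Set.mem_singleton_iff]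
            rw [← htg, this]
          · intro hg1
            simp only [Set.mem_preimage, Set.mem_singleton_iff] at hg1
            by_contra htS
            have : Set.indicator S (fun _ => (1 : ℝ)) t = 0 :=
              Set.indicator_of_notMem htS _
            rw [htg] at this
            rw [hg1] at this
            norm_num at this
        exact ((hg'meas.measurable (measurableSet_singleton (1 : ℝ))).nullMeasurableSet).congr
          hSae.symm
      have hLHS : (∫ t, (∑ a, π0 x t a * ∫ r, est (x, t, a, r) ∂(κ x t a)) ∂μt)
          = ∫ t, (Bf x : ℝ) ∂μt := by
        refine integral_congr_ae ?_
        have h3 : (fun t => (∑ a, π0 x t a * ∫ r, est (x, t, a, r) ∂(κ x t a)))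
            = fun t => G x t := by rw [hGdef]
        rw [h3]
        refine hcong.trans (Filter.Eventually.of_forall fun t => ?_)
        rw [hWx]
        simp
      rw [hLHS, integral_const]
      rw [← hBW x, hWx, add_zero]
      simp [measure_univ]
  exact integral_congr_ae main
end
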